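/- arXiv:0905.0135 — 8 statements merged into one kernel-verified Lean document; each statement's English description precedes it below -/
import Mathlib

section
/- Let G = (V, E) be a finite graph with maximal degree Δ ≥ 1, and suppose the edges of G are properly coloured with at most k colours (i.e., edges sharing an endpoint receive different colours). Then G contains a matching M with at least |E|/(4Δ) edges whose edges use at most ⌈k/(2Δ)⌉ distinct colours. -/
open Finset

lemma incident_card_le {V : Type*} [Fintype V] [DecidableEq V]
    (G : SimpleGraph V) [DecidableRel G.Adj] (f : Sym2 V) :
    (G.edgeFinset.filter (fun e => ∃ v, v ∈ e ∧ v ∈ f)).card ≤ 2 * G.maxDegree := by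
  induction f using Sym2.inductionOn with
  | hf u v =>
    have hsub : (G.edgeFinset.filter (fun e => ∃ w, w ∈ e ∧ w ∈ s(u,v)))
        ⊆ G.incidenceFinset u ∪ G.incidenceFinset v := by
      intro e he
      simp only [mem_filter, SimpleGraph.mem_edgeFinset] at he
      obtain ⟨heE, w, hwe, hwf⟩ := he
      rw [Sym2.mem_iff] at hwf
      rcases hwf with rfl | rfl
      · exact mem_union_left _ (by rw [SimpleGraph.mem_incidenceFinset]; exact ⟨heE, hwe⟩)
      · exact mem_union_right _ (by rw [SimpleGraph.mem_incidenceFinset]; exact ⟨heE, hwe⟩)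
    calc (G.edgeFinset.filter (fun e => ∃ w, w ∈ e ∧ w ∈ s(u,v))).card
        ≤ (G.incidenceFinset u ∪ G.incidenceFinset v).card := card_le_card hsub
      _ ≤ (G.incidenceFinset u).card + (G.incidenceFinset v).card := card_union_le _ _
      _ ≤ G.maxDegree + G.maxDegree := by
          rw [SimpleGraph.card_incidenceFinset_eq_degree, SimpleGraph.card_incidenceFinset_eq_degree]
          exact Nat.add_le_add (G.degree_le_maxDegree u) (G.degree_le_maxDegree v)
      _ = 2 * G.maxDegree := by ring

lemma aux_greedy {V : Type*} [Fintype V] [DecidableEq V]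
    (G : SimpleGraph V) [DecidableRel G.Adj] {k : ℕ} (hk : 0 < k) (c : Sym2 V → Fin k)
    (hproper : ∀ e₁ ∈ G.edgeFinset, ∀ e₂ ∈ G.edgeFinset, e₁ ≠ e₂ →
      (∃ v, v ∈ e₁ ∧ v ∈ e₂) → c e₁ ≠ c e₂) (j : ℕ) :
    ∃ M R : Finset (Sym2 V), M ⊆ G.edgeFinset ∧ R ⊆ G.edgeFinset ∧
      (∀ e₁ ∈ M, ∀ e₂ ∈ M, e₁ ≠ e₂ → ∀ v, v ∈ e₁ → v ∉ e₂) ∧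
      (∀ e ∈ R, ∀ f ∈ M, ∀ v, v ∈ e → v ∉ f) ∧
      (M.image c).card ≤ j ∧
      G.edgeFinset.card ≤ 2 * G.maxDegree * M.card + R.card ∧
      j * R.card ≤ k * M.card := by
  classical
  induction j with
  | zero =>
      refine ⟨∅, G.edgeFinset, empty_subset _, le_refl _, ?_, ?_, ?_, ?_, ?_⟩ <;> simp
  | succ j ih =>
      obtain ⟨M, R, hME, hRE, hmatch, hdisj, hcol, hcount, hratio⟩ := ih
      -- pick largest colour class in R
      obtain ⟨c₀, -, hc₀⟩ := Finset.exists_max_image (univ : Finset (Fin k))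
        (fun i => (R.filter (fun e => c e = i)).card) ⟨⟨0, hk⟩, mem_univ _⟩
      set C := R.filter (fun e => c e = c₀) with hCdef
      have hCR : C ⊆ R := filter_subset _ _
      have hCE : C ⊆ G.edgeFinset := hCR.trans hRE
      set R' := R.filter (fun e => ∀ f ∈ C, ∀ v, v ∈ e → v ∉ f) with hR'def
      have hR'R : R' ⊆ R := filter_subset _ _
      -- R.card ≤ k * C.card
      have hRsum : R.card = ∑ i : Fin k, (R.filter (fun e => c e = i)).card :=
        card_eq_sum_card_fiberwise (fun e _ => mem_univ (c e))
      have hRk : R.card ≤ k * C.card := by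
        rw [hRsum]
        calc ∑ i : Fin k, (R.filter (fun e => c e = i)).card
            ≤ (univ : Finset (Fin k)).card • C.card :=
              Finset.sum_le_card_nsmul _ _ _ (fun i _ => hc₀ i (mem_univ i))
          _ = k * C.card := by simp [mul_comm]
      -- C is a matching
      have hCmatch : ∀ e₁ ∈ C, ∀ e₂ ∈ C, e₁ ≠ e₂ → ∀ v, v ∈ e₁ → v ∉ e₂ := by
        intro e₁ he₁ e₂ he₂ hne v hv₁ hv₂
        have h₁ := (mem_filter.mp he₁)
        have h₂ := (mem_filter.mp he₂)
        exact hproper e₁ (hRE h₁.1) e₂ (hRE h₂.1) hne ⟨v, hv₁, hv₂⟩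
          (h₁.2.trans h₂.2.symm)
      -- disjointness of M and C
      have hMC : Disjoint M C := by
        rw [Finset.disjoint_left]
        intro e heM heC
        exact hdisj e (hCR heC) e heM e.out.1 (Sym2.out_fst_mem e) (Sym2.out_fst_mem e)
      -- removed edges bound
      have hD : (R.filter (fun e => ¬ ∀ f ∈ C, ∀ v, v ∈ e → v ∉ f)).card
          ≤ 2 * G.maxDegree * C.card := by
        have hsub : (R.filter (fun e => ¬ ∀ f ∈ C, ∀ v, v ∈ e → v ∉ f))
            ⊆ C.biUnion (fun f => G.edgeFinset.filter (fun e => ∃ v, v ∈ e ∧ v ∈ f)) := by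
          intro e he
          obtain ⟨heR, hne⟩ := mem_filter.mp he
          push_neg at hne
          obtain ⟨f, hfC, v, hve, hvf⟩ := hne
          exact mem_biUnion.mpr ⟨f, hfC, mem_filter.mpr ⟨hRE heR, v, hve, hvf⟩⟩
        calc (R.filter (fun e => ¬ ∀ f ∈ C, ∀ v, v ∈ e → v ∉ f)).card
            ≤ (C.biUnion (fun f => G.edgeFinset.filter (fun e => ∃ v, v ∈ e ∧ v ∈ f))).card :=
              card_le_card hsub
          _ ≤ ∑ f ∈ C, (G.edgeFinset.filter (fun e => ∃ v, v ∈ e ∧ v ∈ f)).card :=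
              card_biUnion_le
          _ ≤ C.card • (2 * G.maxDegree) :=
              Finset.sum_le_card_nsmul _ _ _ (fun f _ => incident_card_le G f)
          _ = 2 * G.maxDegree * C.card := by rw [smul_eq_mul, mul_comm]
      have hRsplit : R'.card + (R.filter (fun e => ¬ ∀ f ∈ C, ∀ v, v ∈ e → v ∉ f)).card
          = R.card := card_filter_add_card_filter_not _
      refine ⟨M ∪ C, R', union_subset hME hCE, hR'R.trans hRE, ?_, ?_, ?_, ?_, ?_⟩
      · -- matching
        intro e₁ he₁ e₂ he₂ hne v hv₁ hv₂
        rcases mem_union.mp he₁ with h₁ | h₁ <;> rcases mem_union.mp he₂ with h₂ | h₂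
        · exact hmatch e₁ h₁ e₂ h₂ hne v hv₁ hv₂
        · exact hdisj e₂ (hCR h₂) e₁ h₁ v hv₂ hv₁
        · exact hdisj e₁ (hCR h₁) e₂ h₂ v hv₁ hv₂
        · exact hCmatch e₁ h₁ e₂ h₂ hne v hv₁ hv₂
      · -- R' avoids M ∪ C
        intro e heR' f hf v hve hvf
        obtain ⟨heR, hcond⟩ := mem_filter.mp heR'
        rcases mem_union.mp hf with hfM | hfC
        · exact hdisj e heR f hfM v hve hvf
        · exact hcond f hfC v hve hvf
      · -- colours
        have himg : (M ∪ C).image c ⊆ insert c₀ (M.image c) := by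
          intro i hi
          obtain ⟨e, he, rfl⟩ := mem_image.mp hi
          rcases mem_union.mp he with h | h
          · exact mem_insert_of_mem (mem_image_of_mem c h)
          · exact (mem_filter.mp h).2 ▸ mem_insert_self _ _
        calc ((M ∪ C).image c).card ≤ (insert c₀ (M.image c)).card := card_le_card himg
          _ ≤ (M.image c).card + 1 := card_insert_le _ _
          _ ≤ j + 1 := Nat.add_le_add_right hcol 1
      · -- edge count
        have hcard : (M ∪ C).card = M.card + C.card := card_union_of_disjoint hMC
        have : R.card ≤ 2 * G.maxDegree * C.card + R'.card := by omega
        calc G.edgeFinset.card ≤ 2 * G.maxDegree * M.card + R.card := hcount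
          _ ≤ 2 * G.maxDegree * M.card + (2 * G.maxDegree * C.card + R'.card) := by omega
          _ = 2 * G.maxDegree * (M ∪ C).card + R'.card := by rw [hcard]; ring
      · -- ratio
        have hcard : (M ∪ C).card = M.card + C.card := card_union_of_disjoint hMC
        have hR'le : R'.card ≤ R.card := card_le_card hR'R
        calc (j + 1) * R'.card = j * R'.card + R'.card := by ring
          _ ≤ j * R.card + R.card := by
              exact Nat.add_le_add (Nat.mul_le_mul_left j hR'le) hR'le
          _ ≤ k * M.card + k * C.card := Nat.add_le_add hratio hRk
          _ = k * (M ∪ C).card := by rw [hcard]; ring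

/-- Let `G = (V,E)` be a finite graph with maximal degree `Δ ≥ 1`, and
suppose the edges of `G` are properly coloured with at most `k` colours.  Then `G`
contains a matching `M` with at least `|E|/(4Δ)` edges whose edges use at most
`⌈k/(2Δ)⌉` distinct colours. -/
theorem matching_few_colours {V : Type*} [Fintype V] [DecidableEq V]
    (G : SimpleGraph V) [DecidableRel G.Adj]
    (hΔ : 1 ≤ G.maxDegree) {k : ℕ} (c : Sym2 V → Fin k)
    (hproper : ∀ e₁ ∈ G.edgeFinset, ∀ e₂ ∈ G.edgeFinset, e₁ ≠ e₂ →
      (∃ v, v ∈ e₁ ∧ v ∈ e₂) → c e₁ ≠ c e₂) :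
    ∃ M ⊆ G.edgeFinset,
      (∀ e₁ ∈ M, ∀ e₂ ∈ M, e₁ ≠ e₂ → ∀ v, v ∈ e₁ → v ∉ e₂) ∧
      (G.edgeFinset.card : ℝ) / (4 * G.maxDegree) ≤ M.card ∧
      (M.image c).card ≤ ⌈(k : ℝ) / (2 * G.maxDegree)⌉₊ := by
  classical
  rcases Finset.eq_empty_or_nonempty G.edgeFinset with hE | hE
  · refine ⟨∅, empty_subset _, by simp, ?_, by simp⟩
    rw [hE]; simp
  · obtain ⟨e₀, -⟩ := hE
    have hk : 0 < k := Fin.pos (c e₀)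
    have hΔR : (1 : ℝ) ≤ (G.maxDegree : ℝ) := by exact_mod_cast hΔ
    set t := ⌈(k : ℝ) / (2 * G.maxDegree)⌉₊ with htdef
    have h2Δ : (0 : ℝ) < 2 * G.maxDegree := by linarith
    have ht1 : 0 < t := Nat.ceil_pos.mpr (by positivity)
    have hkt : k ≤ 2 * G.maxDegree * t := by
      have h := Nat.le_ceil ((k : ℝ) / (2 * G.maxDegree))
      rw [div_le_iff₀ h2Δ] at h
      have : (k : ℝ) ≤ (2 * G.maxDegree * t : ℕ) := by push_cast; linarith
      exact_mod_cast this
    obtain ⟨M, R, hME, hRE, hmatch, -, hcol, hcount, hratio⟩ :=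
      aux_greedy G hk c hproper t
    refine ⟨M, hME, hmatch, ?_, hcol⟩
    have hR : R.card ≤ 2 * G.maxDegree * M.card := by
      have h1 : t * R.card ≤ t * (2 * G.maxDegree * M.card) := by
        calc t * R.card ≤ k * M.card := hratio
          _ ≤ 2 * G.maxDegree * t * M.card := Nat.mul_le_mul_right _ hkt
          _ = t * (2 * G.maxDegree * M.card) := by ring
      exact Nat.le_of_mul_le_mul_left h1 ht1
    have hfinal : G.edgeFinset.card ≤ 4 * G.maxDegree * M.card := by
      calc G.edgeFinset.card ≤ 2 * G.maxDegree * M.card + R.card := hcount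
        _ ≤ 2 * G.maxDegree * M.card + 2 * G.maxDegree * M.card := Nat.add_le_add_left hR _
        _ = 4 * G.maxDegree * M.card := by ring
    rw [div_le_iff₀ (by linarith : (0:ℝ) < 4 * G.maxDegree)]
    have : (G.edgeFinset.card : ℝ) ≤ (4 * G.maxDegree * M.card : ℕ) := by
      exact_mod_cast hfinal
    push_cast at this ⊢
    linarith
end

section
/- There exist a constant C > 0 and N₀ such that for all N ≥ N₀ the following holds. If A ⊂ ℤ is a set of N distinct integers with |A + A| ≤ S and |A × A| ≤ S, then there exist n ≥ N/32 pairwise disjoint pairs {u_i, v_i} (i = 1,…,n) of distinct elements of A such that |{u_i + v_i : 1 ≤ i ≤ n}| ≤ C·S/√N and |{u_i · v_i : 1 ≤ i ≤ n}| ≤ C·S/√N. -/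
open Finset Pointwise

abbrev shareP (e f : ℤ × ℤ) : Prop :=
  e.1 = f.1 ∨ e.1 = f.2 ∨ e.2 = f.1 ∨ e.2 = f.2


lemma count_mem_powersetCard (T : Finset ℤ) (x : ℤ) (hx : x ∈ T) (k : ℕ) :
    ((T.powersetCard (k+1)).filter (fun U => x ∈ U)).card
      = (T.card - 1).choose k := by
  have h : ((T.powersetCard (k+1)).filter (fun U => x ∈ U)).card
      = ((T.erase x).powersetCard k).card := by
    apply Finset.card_nbij' (fun U => U.erase x) (fun V => insert x V)
    · intro U hU
      simp only [Finset.mem_coe, mem_filter, mem_powersetCard] at hU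
      obtain ⟨⟨hsub, hcard⟩, hxU⟩ := hU
      simp only [Finset.mem_coe, mem_powersetCard]
      constructor
      · exact Finset.erase_subset_erase x hsub
      · rw [Finset.card_erase_of_mem hxU, hcard]
        omega
    · intro V hV
      rw [Finset.mem_coe, mem_powersetCard] at hV
      obtain ⟨hsub, hcard⟩ := hV
      have hxV : x ∉ V := fun h => (Finset.mem_erase.1 (hsub h)).1 rfl
      simp only [Finset.mem_coe, mem_filter, mem_powersetCard]
      refine ⟨⟨?_, ?_⟩, Finset.mem_insert_self x V⟩
      · intro y hy
        rcases Finset.mem_insert.1 hy with rfl | hy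
        · exact hx
        · exact Finset.mem_of_mem_erase (hsub hy)
      · rw [Finset.card_insert_of_notMem hxV, hcard]
    · intro U hU
      simp only [Finset.mem_coe, mem_filter] at hU
      exact Finset.insert_erase hU.2
    · intro V hV
      rw [Finset.mem_coe, mem_powersetCard] at hV
      have hxV : x ∉ V := fun h => (Finset.mem_erase.1 (hV.1 h)).1 rfl
      exact Finset.erase_insert hxV
  rw [h, Finset.card_powersetCard, Finset.card_erase_of_mem hx]

lemma count_mem2_powersetCard (T : Finset ℤ) (x y : ℤ) (hx : x ∈ T) (hy : y ∈ T)
    (hxy : x ≠ y) (k : ℕ) :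
    ((T.powersetCard (k+2)).filter (fun U => x ∈ U ∧ y ∈ U)).card
      = (T.card - 2).choose k := by
  have h : ((T.powersetCard (k+2)).filter (fun U => x ∈ U ∧ y ∈ U)).card
      = (((T.erase x).erase y).powersetCard k).card := by
    apply Finset.card_nbij' (fun U => (U.erase x).erase y) (fun V => insert x (insert y V))
    · intro U hU
      simp only [Finset.mem_coe, mem_filter, mem_powersetCard] at hU
      obtain ⟨⟨hsub, hcard⟩, hxU, hyU⟩ := hU
      simp only [Finset.mem_coe, mem_powersetCard]
      refine ⟨Finset.erase_subset_erase y (Finset.erase_subset_erase x hsub), ?_⟩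
      rw [Finset.card_erase_of_mem (Finset.mem_erase.2 ⟨hxy.symm, hyU⟩),
        Finset.card_erase_of_mem hxU, hcard]
      omega
    · intro V hV
      rw [Finset.mem_coe, mem_powersetCard] at hV
      obtain ⟨hsub, hcard⟩ := hV
      have hyV : y ∉ V := fun h => (Finset.mem_erase.1 (hsub h)).1 rfl
      have hxV : x ∉ V := fun h => (Finset.mem_erase.1 (Finset.mem_of_mem_erase (hsub h))).1 rfl
      have hxyV : x ∉ insert y V := by
        simp only [Finset.mem_insert]
        rintro (rfl | h) <;> [exact hxy rfl; exact hxV h]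
      simp only [Finset.mem_coe, mem_filter, mem_powersetCard]
      refine ⟨⟨?_, ?_⟩, Finset.mem_insert_self x _,
        Finset.mem_insert_of_mem (Finset.mem_insert_self y V)⟩
      · intro z hz
        rcases Finset.mem_insert.1 hz with rfl | hz
        · exact hx
        rcases Finset.mem_insert.1 hz with rfl | hz
        · exact hy
        · exact Finset.mem_of_mem_erase (Finset.mem_of_mem_erase (hsub hz))
      · rw [Finset.card_insert_of_notMem hxyV, Finset.card_insert_of_notMem hyV, hcard]
    · intro U hU
      simp only [Finset.mem_coe, mem_filter] at hU
      obtain ⟨_, hxU, hyU⟩ := hU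
      dsimp only
      rw [Finset.insert_erase (Finset.mem_erase.2 ⟨hxy.symm, hyU⟩), Finset.insert_erase hxU]
    · intro V hV
      rw [Finset.mem_coe, mem_powersetCard] at hV
      have hyV : y ∉ V := fun h => (Finset.mem_erase.1 (hV.1 h)).1 rfl
      have hxV : x ∉ V := fun h => (Finset.mem_erase.1 (Finset.mem_of_mem_erase (hV.1 h))).1 rfl
      have hxyV : x ∉ insert y V := by
        simp only [Finset.mem_insert]
        rintro (rfl | h) <;> [exact hxy rfl; exact hxV h]
      dsimp only
      rw [Finset.erase_insert hxyV, Finset.erase_insert hyV]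
  rw [h, Finset.card_powersetCard, Finset.card_erase_of_mem
    (Finset.mem_erase.2 ⟨hxy.symm, hy⟩), Finset.card_erase_of_mem hx]
  congr 1



lemma matching_extraction : ∀ (n : ℕ) (F : Finset (ℤ × ℤ)), F.card ≤ n →
    ∃ F' ⊆ F, (∀ e ∈ F', ∀ f ∈ F', e ≠ f → ¬ shareP e f) ∧
      (F.card : ℤ) -
        (((F ×ˢ F).filter (fun q => q.1 ≠ q.2 ∧ shareP q.1 q.2)).card : ℤ) ≤ F'.card := by
  intro n
  induction n with
  | zero =>
    intro F hF
    refine ⟨F, Finset.Subset.refl F, ?_, ?_⟩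
    · intro e he
      exact absurd (Finset.card_eq_zero.1 (Nat.le_zero.1 hF) ▸ he) (Finset.notMem_empty e)
    · have : F.card = 0 := Nat.le_zero.1 hF
      simp [this]
  | succ n ih =>
    intro F hF
    by_cases hc : ((F ×ˢ F).filter (fun q => q.1 ≠ q.2 ∧ shareP q.1 q.2)).Nonempty
    · obtain ⟨q, hq⟩ := hc
      simp only [mem_filter, mem_product] at hq
      obtain ⟨⟨hq1, hq2⟩, hne, hsh⟩ := hq
      set e := q.1 with he
      set f := q.2 with hf
      -- erase e
      have hcard1 : (F.erase e).card = F.card - 1 := Finset.card_erase_of_mem hq1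
      have hle : (F.erase e).card ≤ n := by
        have := Finset.card_pos.2 ⟨e, hq1⟩
        omega
      obtain ⟨F', hsub, hmatch, hbound⟩ := ih (F.erase e) hle
      refine ⟨F', hsub.trans (Finset.erase_subset e F), hmatch, ?_⟩
      -- conflicts of F.erase e ≤ conflicts F - 2
      set B := (F ×ˢ F).filter (fun q => q.1 ≠ q.2 ∧ shareP q.1 q.2) with hB
      set B1 := ((F.erase e) ×ˢ (F.erase e)).filter
        (fun q => q.1 ≠ q.2 ∧ shareP q.1 q.2) with hB1
      have hqefB : (e, f) ∈ B := by
        simp only [hB, mem_filter, mem_product]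
        exact ⟨⟨hq1, hq2⟩, hne, hsh⟩
      have hqfeB : (f, e) ∈ B := by
        simp only [hB, mem_filter, mem_product]
        refine ⟨⟨hq2, hq1⟩, Ne.symm hne, ?_⟩
        unfold shareP at hsh ⊢
        tauto
      have hsubB : B1 ⊆ (B.erase (e, f)).erase (f, e) := by
        intro r hr
        simp only [hB1, mem_filter, mem_product, Finset.mem_erase] at hr
        obtain ⟨⟨⟨hr1e, hr1⟩, hr2e, hr2⟩, hrne, hrsh⟩ := hr
        refine Finset.mem_erase.2 ⟨?_, Finset.mem_erase.2 ⟨?_, ?_⟩⟩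
        · intro h
          exact hr2e (by rw [h])
        · intro h
          exact hr1e (by rw [h])
        · simp only [hB, mem_filter, mem_product]
          exact ⟨⟨hr1, hr2⟩, hrne, hrsh⟩
      have hcardB1 : B1.card ≤ B.card - 2 := by
        have h1 : (f, e) ∈ B.erase (e, f) := by
          refine Finset.mem_erase.2 ⟨?_, hqfeB⟩
          intro h
          exact hne ((congrArg Prod.fst h).symm)
        have h2 : ((B.erase (e, f)).erase (f, e)).card = B.card - 2 := by
          rw [Finset.card_erase_of_mem h1, Finset.card_erase_of_mem hqefB]
          omega
        calc B1.card ≤ ((B.erase (e, f)).erase (f, e)).card := Finset.card_le_card hsubB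
          _ = B.card - 2 := h2
      have hBpos : 2 ≤ B.card := by
        have := Finset.card_le_card (Finset.insert_subset hqfeB
          (Finset.singleton_subset_iff.2 hqefB) : ({(f, e), (e, f)} : Finset _) ⊆ B)
        have hne' : ((f, e) : (ℤ×ℤ)×(ℤ×ℤ)) ≠ (e, f) := by
          intro h
          exact hne ((congrArg Prod.fst h).symm)
        rwa [Finset.card_insert_of_notMem (by simp [hne']), Finset.card_singleton] at this
      have hFpos : 1 ≤ F.card := Finset.card_pos.2 ⟨e, hq1⟩
      have : ((F.erase e).card : ℤ) - (B1.card : ℤ) ≤ F'.card := hbound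
      have hc1 : ((F.erase e).card : ℤ) = (F.card : ℤ) - 1 := by
        rw [hcard1]; push_cast [hFpos]; omega
      have hc2 : (B1.card : ℤ) ≤ (B.card : ℤ) - 2 := by
        have := hcardB1
        omega
      omega
    · rw [Finset.not_nonempty_iff_eq_empty] at hc
      refine ⟨F, Finset.Subset.refl F, ?_, ?_⟩
      · intro e he f hf hef hsh
        have : (e, f) ∈ (F ×ˢ F).filter (fun q => q.1 ≠ q.2 ∧ shareP q.1 q.2) := by
          simp only [mem_filter, mem_product]
          exact ⟨⟨he, hf⟩, hef, hsh⟩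
        rw [hc] at this
        exact Finset.notMem_empty _ this
      · rw [hc]
        simp



lemma edges_card (s : Finset ℤ) :
    2 * ((s ×ˢ s).filter (fun p => p.1 < p.2)).card = s.card * s.card - s.card := by
  have hswap : ((s ×ˢ s).filter (fun p => p.1 < p.2)).card
      = ((s ×ˢ s).filter (fun p => p.2 < p.1)).card := by
    apply Finset.card_nbij' (fun p => (p.2, p.1)) (fun p => (p.2, p.1)) <;>
      simp +contextual [Finset.mem_filter, Finset.mem_product, Set.MapsTo] <;> tauto
  have hunion : (s ×ˢ s).filter (fun p => p.1 < p.2) ∪ (s ×ˢ s).filter (fun p => p.2 < p.1)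
      = s.offDiag := by
    ext p
    simp only [Finset.mem_union, Finset.mem_filter, Finset.mem_product, Finset.mem_offDiag]
    constructor
    · rintro (⟨⟨h1, h2⟩, h⟩ | ⟨⟨h1, h2⟩, h⟩) <;> exact ⟨h1, h2, by omega⟩
    · rintro ⟨h1, h2, h⟩
      rcases lt_or_gt_of_ne h with h' | h'
      · exact Or.inl ⟨⟨h1, h2⟩, h'⟩
      · exact Or.inr ⟨⟨h1, h2⟩, h'⟩
  have hdisj : Disjoint ((s ×ˢ s).filter (fun p => p.1 < p.2))
      ((s ×ˢ s).filter (fun p => p.2 < p.1)) := by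
    rw [Finset.disjoint_left]
    intro p h1 h2
    simp only [Finset.mem_filter] at h1 h2
    omega
  have := Finset.card_union_of_disjoint hdisj
  rw [hunion, Finset.offDiag_card] at this
  omega

lemma conflict_card_le (s : Finset ℤ) (E : Finset (ℤ × ℤ))
    (hE : E ⊆ (s ×ˢ s).filter (fun p => p.1 < p.2)) :
    ((E ×ˢ E).filter (fun q => q.1 ≠ q.2 ∧ shareP q.1 q.2)).card
      ≤ s.card * (s.card * s.card) := by
  classical
  have hmem : ∀ e ∈ E, e.1 ∈ s ∧ e.2 ∈ s ∧ e.1 < e.2 := by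
    intro e he
    have := hE he
    simp only [Finset.mem_filter, Finset.mem_product] at this
    tauto
  set Conf := (E ×ˢ E).filter (fun q => q.1 ≠ q.2 ∧ shareP q.1 q.2) with hConf
  set sh : (ℤ × ℤ) × (ℤ × ℤ) → ℤ :=
    fun q => if q.1.1 = q.2.1 ∨ q.1.1 = q.2.2 then q.1.1 else q.1.2 with hsh
  set f : (ℤ × ℤ) × (ℤ × ℤ) → ℤ × (ℤ × ℤ) :=
    fun q => (sh q, (q.1.1 + q.1.2 - sh q, q.2.1 + q.2.2 - sh q)) with hf
  have key : ∀ q ∈ Conf,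
      ((min (sh q) (q.1.1 + q.1.2 - sh q), max (sh q) (q.1.1 + q.1.2 - sh q)),
       (min (sh q) (q.2.1 + q.2.2 - sh q), max (sh q) (q.2.1 + q.2.2 - sh q))) = q
      ∧ sh q ∈ s ∧ q.1.1 + q.1.2 - sh q ∈ s ∧ q.2.1 + q.2.2 - sh q ∈ s := by
    intro q hq
    simp only [hConf, Finset.mem_filter, Finset.mem_product] at hq
    obtain ⟨⟨hq1, hq2⟩, hne, hshare⟩ := hq
    obtain ⟨h11, h12, hlt1⟩ := hmem _ hq1
    obtain ⟨h21, h22, hlt2⟩ := hmem _ hq2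
    by_cases hcase : q.1.1 = q.2.1 ∨ q.1.1 = q.2.2
    · have hsq : sh q = q.1.1 := by simp [hsh, hcase]
      have ho1 : q.1.1 + q.1.2 - sh q = q.1.2 := by rw [hsq]; ring
      have hsf : sh q = q.2.1 ∨ sh q = q.2.2 := by rw [hsq]; exact hcase
      have ho2 : q.2.1 + q.2.2 - sh q ∈ s ∧
          (min (sh q) (q.2.1 + q.2.2 - sh q), max (sh q) (q.2.1 + q.2.2 - sh q)) = q.2 := by
        rcases hsf with h | h
        · have hx : q.2.1 + q.2.2 - sh q = q.2.2 := by rw [h]; ring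
          rw [hx]
          refine ⟨h22, ?_⟩
          rw [h, min_eq_left hlt2.le, max_eq_right hlt2.le]
        · have hx : q.2.1 + q.2.2 - sh q = q.2.1 := by rw [h]; ring
          rw [hx]
          refine ⟨h21, ?_⟩
          rw [h, min_comm, max_comm, min_eq_left hlt2.le, max_eq_right hlt2.le]
      refine ⟨?_, by rw [hsq]; exact h11, by rw [ho1]; exact h12, ho2.1⟩
      rw [Prod.ext_iff]
      refine ⟨?_, ho2.2⟩
      rw [ho1, hsq, min_eq_left hlt1.le, max_eq_right hlt1.le]
    · have hsq : sh q = q.1.2 := by simp [hsh, hcase]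
      have ho1 : q.1.1 + q.1.2 - sh q = q.1.1 := by rw [hsq]; ring
      have hsf : sh q = q.2.1 ∨ sh q = q.2.2 := by
        rw [hsq]
        unfold shareP at hshare
        rcases hshare with h | h | h | h
        · exact absurd (Or.inl h) hcase
        · exact absurd (Or.inr h) hcase
        · exact Or.inl h
        · exact Or.inr h
      have ho2 : q.2.1 + q.2.2 - sh q ∈ s ∧
          (min (sh q) (q.2.1 + q.2.2 - sh q), max (sh q) (q.2.1 + q.2.2 - sh q)) = q.2 := by
        rcases hsf with h | h
        · have hx : q.2.1 + q.2.2 - sh q = q.2.2 := by rw [h]; ring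
          rw [hx]
          refine ⟨h22, ?_⟩
          rw [h, min_eq_left hlt2.le, max_eq_right hlt2.le]
        · have hx : q.2.1 + q.2.2 - sh q = q.2.1 := by rw [h]; ring
          rw [hx]
          refine ⟨h21, ?_⟩
          rw [h, min_comm, max_comm, min_eq_left hlt2.le, max_eq_right hlt2.le]
      refine ⟨?_, by rw [hsq]; exact h12, by rw [ho1]; exact h11, ho2.1⟩
      rw [Prod.ext_iff]
      refine ⟨?_, ho2.2⟩
      rw [ho1, hsq, min_comm, max_comm, min_eq_left hlt1.le, max_eq_right hlt1.le]
  calc Conf.card ≤ (s ×ˢ (s ×ˢ s)).card := by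
        apply Finset.card_le_card_of_injOn f
        · intro q hq
          obtain ⟨_, h1, h2, h3⟩ := key q hq
          simp only [hf, Finset.mem_coe, Finset.mem_product]
          exact ⟨h1, h2, h3⟩
        · intro a ha b hb hab
          have ha' := (key a ha).1
          have hb' := (key b hb).1
          simp only [hf, Prod.ext_iff] at hab
          obtain ⟨h1, h2, h3⟩ := hab
          rw [h1] at h2 h3
          rw [← ha', ← hb', h1, h2, h3]
    _ = s.card * (s.card * s.card) := by rw [Finset.card_product, Finset.card_product]

lemma card_le_card_addset (s : Finset ℤ) (a₀ : ℤ) (ha₀ : a₀ ∈ s) :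
    s.card ≤ (s + s).card := by
  apply Finset.card_le_card_of_injOn (fun a => a₀ + a)
  · intro a ha
    exact Finset.add_mem_add ha₀ ha
  · intro a _ b _ h
    exact add_left_cancel h

lemma card_le_card_mulset (s : Finset ℤ) (a₀ : ℤ) (ha₀ : a₀ ∈ s) (h0 : a₀ ≠ 0) :
    s.card ≤ (s * s).card := by
  apply Finset.card_le_card_of_injOn (fun a => a₀ * a)
  · intro a ha
    exact Finset.mul_mem_mul ha₀ ha
  · intro a _ b _ h
    exact mul_left_cancel₀ h0 h

lemma sum_prod_ind (P Q : Finset (Finset ℤ)) (p q : Finset ℤ → Prop)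
    [DecidablePred p] [DecidablePred q] :
    (∑ ω ∈ P ×ˢ Q, if p ω.1 ∧ q ω.2 then (1:ℕ) else 0)
      = (P.filter p).card * (Q.filter q).card := by
  rw [Finset.sum_product]
  have h : ∀ U, (∑ V ∈ Q, if p U ∧ q V then (1:ℕ) else 0)
      = (if p U then (1:ℕ) else 0) * (Q.filter q).card := by
    intro U
    by_cases hU : p U
    · rw [Finset.card_filter]; simp [hU]
    · simp [hU]
  rw [Finset.sum_congr rfl (fun U _ => h U), ← Finset.sum_mul, ← Finset.card_filter]

set_option maxHeartbeats 1000000 in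
/-- numeric core -/
lemma core_ineq (M e K t r d a a' b b' : ℝ)
    (hM : 999999 ≤ M) (he : 2*e = M*M - M) (hK : 0 ≤ K) (hK3 : K ≤ M*(M*M))
    (ht0 : 0 ≤ t) (ht : 20*t ≤ M)
    (hrM : r*r ≤ M) (hrM2 : M ≤ (r+1)*(r+1)) (hr0 : 0 ≤ r)
    (hd : d = 2*r+2)
    (haM : M ≤ a) (haM' : M ≤ a')
    (hb1 : a ≤ d*b) (hb2 : d*(b-1) ≤ a) (hbb : 2 ≤ b)
    (hb1' : a' ≤ d*b') (hb2' : d*(b'-1) ≤ a') (hbb' : 2 ≤ b') :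
    t*((a/b)*(a'/b')) + K*(((b-1)/(a-1))*((b'-1)/(a'-1))) ≤ e := by
  have hd0 : (0:ℝ) < d := by rw [hd]; linarith
  have ha1 : (1:ℝ) < a := by linarith
  have ha1' : (1:ℝ) < a' := by linarith
  have ha0 : (0:ℝ) < a := by linarith
  have ha0' : (0:ℝ) < a' := by linarith
  have hb0 : (0:ℝ) < b := by linarith
  have hb0' : (0:ℝ) < b' := by linarith
  have hM0 : (0:ℝ) < M := by linarith
  have h800 : 800*r ≤ M := by nlinarith [sq_nonneg (r - 800)]
  have hdM : d ≤ M/400 + 2 := by rw [hd]; linarith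
  have hdd : d*d = 4*(r*r) + 8*r + 4 := by rw [hd]; ring
  have hdd' : d*d = 4*((r+1)*(r+1)) := by rw [hd]; ring
  have hdsq_up : d*d ≤ 4.02*M := by
    rw [hdd]
    linarith [h800, hrM]
  have hdsq_lo : 4*M ≤ d*d := by
    rw [hdd']
    nlinarith [hrM2]
  have hMM2 : 999999*M ≤ M*M := by
    nlinarith [mul_nonneg (by linarith : (0:ℝ) ≤ M - 999999) (le_of_lt hM0)]
  have hr1 : a/b ≤ d := by
    rw [div_le_iff₀ hb0]
    linarith [hb1]
  have hr1' : a'/b' ≤ d := by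
    rw [div_le_iff₀ hb0']
    linarith [hb1']
  have hr2 : (b-1)/(a-1) ≤ 1.01/d := by
    rw [div_le_div_iff₀ (by linarith) hd0]
    linarith [hb2, hdM, hM0, haM]
  have hr2' : (b'-1)/(a'-1) ≤ 1.01/d := by
    rw [div_le_div_iff₀ (by linarith) hd0]
    linarith [hb2', hdM, hM0, haM']
  have hterm1 : t*((a/b)*(a'/b')) ≤ t*(d*d) := by
    apply mul_le_mul_of_nonneg_left _ ht0
    exact mul_le_mul hr1 hr1' (by positivity) (le_of_lt hd0)
  have hterm2 : K*(((b-1)/(a-1))*((b'-1)/(a'-1))) ≤ K*((1.01/d)*(1.01/d)) := by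
    apply mul_le_mul_of_nonneg_left _ hK
    apply mul_le_mul hr2 hr2'
    · apply div_nonneg <;> linarith
    · positivity
  have hT1 : t*(d*d) ≤ (M/20)*(4.02*M) := by
    apply mul_le_mul (by linarith) hdsq_up (by positivity) (by linarith)
  have hT2 : K*((1.01/d)*(1.01/d)) ≤ (M*(M*M))*(1.0201/(4*M)) := by
    have h1 : (1.01/d)*(1.01/d) = 1.0201/(d*d) := by
      field_simp
      ring
    rw [h1]
    apply mul_le_mul hK3
    · apply div_le_div_of_nonneg_left (by norm_num) (by linarith) hdsq_lo
    · positivity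
    · positivity
  have hfin : (M/20)*(4.02*M) + (M*(M*M))*(1.0201/(4*M)) ≤ e := by
    have h3 : (M*(M*M))*(1.0201/(4*M)) = 0.255025*(M*M) := by
      field_simp
      ring
    rw [h3]
    linarith [he, hMM2]
  linarith [hterm1, hterm2, hT1, hT2, hfin]

set_option maxHeartbeats 3000000 in
/-- There exist `C > 0` and `N₀` such that for all `N ≥ N₀`:
if `A ⊂ ℤ` has `N` elements with `|A + A| ≤ S` and `|A × A| ≤ S`, then there are
`n ≥ N/32` pairwise disjoint pairs `{uᵢ, vᵢ}` of distinct elements of `A` with at most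
`C·S/√N` distinct sums `uᵢ + vᵢ` and at most `C·S/√N` distinct products `uᵢ · vᵢ`. -/
theorem matching_in_integer_set :
    ∃ (C : ℝ) (N₀ : ℕ), 0 < C ∧ ∀ (A : Finset ℤ) (S : ℕ),
      N₀ ≤ A.card → (A + A).card ≤ S → (A * A).card ≤ S →
      ∃ (n : ℕ) (u v : Fin n → ℤ),
        (A.card : ℝ) / 32 ≤ n ∧
        (∀ i, u i ∈ A) ∧ (∀ i, v i ∈ A) ∧
        Function.Injective u ∧ Function.Injective v ∧ (∀ i j, u i ≠ v j) ∧
        ((Finset.image (fun i => u i + v i) Finset.univ).card : ℝ)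
          ≤ C * S / Real.sqrt A.card ∧
        ((Finset.image (fun i => u i * v i) Finset.univ).card : ℝ)
          ≤ C * S / Real.sqrt A.card := by
  refine ⟨100, 1000000, by norm_num, ?_⟩
  intro A S hN hSadd hSmul
  set N := A.card with hNdef
  set A' := A.erase 0 with hA'def
  set M := A'.card with hMdef
  have hA'sub : A' ⊆ A := Finset.erase_subset 0 A
  have hMN : N - 1 ≤ M := Finset.pred_card_le_card_erase
  have hMN' : M ≤ N := Finset.card_le_card hA'sub
  have hM6 : 999999 ≤ M := by omega
  have hA'ne : A'.Nonempty := Finset.card_pos.1 (by omega)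
  obtain ⟨a₀, ha₀⟩ := hA'ne
  have ha₀0 : a₀ ≠ 0 := (Finset.mem_erase.1 ha₀).1
  have hnz : ∀ x ∈ A', x ≠ 0 := fun x hx => (Finset.mem_erase.1 hx).1
  set Ts := A' + A' with hTsdef
  set Tp := A' * A' with hTpdef
  set Ss := Ts.card with hSsdef
  set Sp := Tp.card with hSpdef
  have hSsM : M ≤ Ss := card_le_card_addset A' a₀ ha₀
  have hSpM : M ≤ Sp := card_le_card_mulset A' a₀ ha₀ ha₀0
  have hSsS : Ss ≤ S := le_trans (Finset.card_le_card (Finset.add_subset_add hA'sub hA'sub)) hSadd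
  have hSpS : Sp ≤ S := le_trans (Finset.card_le_card (Finset.mul_subset_mul hA'sub hA'sub)) hSmul
  -- parameters
  set r := Nat.sqrt M with hrdef
  set d := 2*(r+1) with hddef
  have hrM : r*r ≤ M := by simpa [pow_two] using Nat.sqrt_le' M
  have hrM2 : M < (r+1)*(r+1) := by
    simpa [pow_two] using Nat.lt_succ_sqrt' M
  have hr10 : 10 ≤ r := by
    rw [hrdef]
    rw [Nat.le_sqrt']
    omega
  have h10r : 10*r ≤ r*r := Nat.mul_le_mul_right r hr10
  have hdM : d ≤ M := by
    have h1 : 10*r ≤ M := le_trans h10r hrM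
    omega
  set js := Ss / d with hjsdef
  set jp := Sp / d with hjpdef
  set ks := js + 1 with hksdef
  set kp := jp + 1 with hkpdef
  have hd0 : 0 < d := by omega
  have hjs1 : 1 ≤ js := by
    rw [hjsdef]
    rw [Nat.le_div_iff_mul_le hd0]
    omega
  have hjp1 : 1 ≤ jp := by
    rw [hjpdef]
    rw [Nat.le_div_iff_mul_le hd0]
    omega
  have hdjs : d * js ≤ Ss := by
    rw [hjsdef, mul_comm]
    exact Nat.div_mul_le_self Ss d
  have hdjp : d * jp ≤ Sp := by
    rw [hjpdef, mul_comm]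
    exact Nat.div_mul_le_self Sp d
  have hdks : Ss < d * ks := by
    have h1 := Nat.div_add_mod Ss d
    have h2 : Ss % d < d := Nat.mod_lt _ hd0
    rw [← hjsdef] at h1
    have h3 : d * ks = d * js + d := by rw [hksdef]; ring
    linarith
  have hdkp : Sp < d * kp := by
    have h1 := Nat.div_add_mod Sp d
    have h2 : Sp % d < d := Nat.mod_lt _ hd0
    rw [← hjpdef] at h1
    have h3 : d * kp = d * jp + d := by rw [hkpdef]; ring
    linarith
  have h2js : 2*js ≤ d*js := Nat.mul_le_mul_right _ (by omega)
  have h2jp : 2*jp ≤ d*jp := Nat.mul_le_mul_right _ (by omega)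
  have hksSs : ks ≤ Ss := le_trans (le_trans (by omega : ks ≤ 2*js) h2js) hdjs
  have hkpSp : kp ≤ Sp := le_trans (le_trans (by omega : kp ≤ 2*jp) h2jp) hdjp
  -- edges and conflicts
  set Edges := (A' ×ˢ A').filter (fun p => p.1 < p.2) with hEdgesdef
  set Conf := (Edges ×ˢ Edges).filter (fun q => q.1 ≠ q.2 ∧ shareP q.1 q.2) with hConfdef
  have hedges : 2 * Edges.card = M*M - M := edges_card A'
  have hK3 : Conf.card ≤ M*(M*M) := conflict_card_le A' Edges (by rw [hEdgesdef])
  have hedge_mem : ∀ e ∈ Edges, e.1 ∈ A' ∧ e.2 ∈ A' ∧ e.1 < e.2 := by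
    intro e he
    rw [hEdgesdef, Finset.mem_filter, Finset.mem_product] at he
    tauto
  have hedge_sum : ∀ e ∈ Edges, e.1 + e.2 ∈ Ts := by
    intro e he
    obtain ⟨h1, h2, _⟩ := hedge_mem e he
    exact Finset.add_mem_add h1 h2
  have hedge_mul : ∀ e ∈ Edges, e.1 * e.2 ∈ Tp := by
    intro e he
    obtain ⟨h1, h2, _⟩ := hedge_mem e he
    exact Finset.mul_mem_mul h1 h2
  have hconf : ∀ q ∈ Conf, q.1.1 + q.1.2 ≠ q.2.1 + q.2.2 ∧ q.1.1 * q.1.2 ≠ q.2.1 * q.2.2 := by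
    intro q hq
    rw [hConfdef, Finset.mem_filter, Finset.mem_product] at hq
    obtain ⟨⟨hq1, hq2⟩, hne, hsh⟩ := hq
    obtain ⟨h11, h12, hlt1⟩ := hedge_mem _ hq1
    obtain ⟨h21, h22, hlt2⟩ := hedge_mem _ hq2
    have hne' : ¬ (q.1.1 = q.2.1 ∧ q.1.2 = q.2.2) := by
      intro h
      exact hne (Prod.ext_iff.2 h)
    rcases hsh with h | h | h | h
    · constructor
      · intro hs; exact hne' ⟨h, by omega⟩
      · intro hp
        rw [h] at hp
        exact hne' ⟨h, mul_left_cancel₀ (hnz _ h21) hp⟩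
    · constructor
      · intro hs; omega
      · intro hp
        have h2 : q.1.1 * q.1.2 = q.1.1 * q.2.1 := by rw [hp, ← h]; ring
        have := mul_left_cancel₀ (hnz _ h11) h2
        omega
    · constructor
      · intro hs; omega
      · intro hp
        have h2 : q.1.2 * q.1.1 = q.1.2 * q.2.2 := by
          rw [mul_comm q.1.2 q.1.1, hp, ← h]
        have := mul_left_cancel₀ (hnz _ h12) h2
        omega
    · constructor
      · intro hs; exact hne' ⟨by omega, h⟩
      · intro hp
        rw [h] at hp
        exact hne' ⟨mul_right_cancel₀ (hnz _ h22) hp, h⟩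
  -- sample space
  set P := Ts.powersetCard ks with hPdef
  set Q := Tp.powersetCard kp with hQdef
  set Ω := P ×ˢ Q with hΩdef
  have hΩne : Ω.Nonempty := by
    rw [hΩdef]
    apply Finset.Nonempty.product
    · exact (Finset.powersetCard_nonempty).2 hksSs
    · exact (Finset.powersetCard_nonempty).2 hkpSp
  set X₁ := (Ss - 1).choose js with hX₁def
  set Y₁ := (Sp - 1).choose jp with hY₁def
  set X₂ := (Ss - 2).choose (js - 1) with hX₂def
  set Y₂ := (Sp - 2).choose (jp - 1) with hY₂def
  set P₀ := Ss.choose ks with hP₀def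
  set Q₀ := Sp.choose kp with hQ₀def
  set mf : Finset ℤ × Finset ℤ → ℕ :=
    fun ω => (Edges.filter (fun e => e.1 + e.2 ∈ ω.1 ∧ e.1 * e.2 ∈ ω.2)).card with hmfdef
  set cf : Finset ℤ × Finset ℤ → ℕ :=
    fun ω => (Conf.filter (fun q => (q.1.1 + q.1.2 ∈ ω.1 ∧ q.2.1 + q.2.2 ∈ ω.1) ∧
      (q.1.1 * q.1.2 ∈ ω.2 ∧ q.2.1 * q.2.2 ∈ ω.2))).card with hcfdef
  -- expectation of m
  have hEm : ∑ ω ∈ Ω, mf ω = Edges.card * (X₁ * Y₁) := by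
    have h1 : ∀ ω ∈ Ω, mf ω = ∑ e ∈ Edges,
        (if e.1 + e.2 ∈ ω.1 ∧ e.1 * e.2 ∈ ω.2 then (1:ℕ) else 0) := by
      intro ω _
      rw [hmfdef]
      exact Finset.card_filter _ _
    rw [Finset.sum_congr rfl h1, Finset.sum_comm]
    have h2 : ∀ e ∈ Edges, (∑ ω ∈ Ω, if e.1 + e.2 ∈ ω.1 ∧ e.1 * e.2 ∈ ω.2 then (1:ℕ) else 0)
        = X₁ * Y₁ := by
      intro e he
      rw [hΩdef, sum_prod_ind P Q (fun U => e.1 + e.2 ∈ U) (fun V => e.1 * e.2 ∈ V)]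
      rw [hPdef, hQdef, hksdef, hkpdef]
      rw [count_mem_powersetCard Ts _ (hedge_sum e he) js,
        count_mem_powersetCard Tp _ (hedge_mul e he) jp]
    rw [Finset.sum_congr rfl h2, Finset.sum_const, smul_eq_mul]
  -- expectation of c
  have hEc : ∑ ω ∈ Ω, cf ω = Conf.card * (X₂ * Y₂) := by
    have h1 : ∀ ω ∈ Ω, cf ω = ∑ q ∈ Conf,
        (if (q.1.1 + q.1.2 ∈ ω.1 ∧ q.2.1 + q.2.2 ∈ ω.1) ∧
          (q.1.1 * q.1.2 ∈ ω.2 ∧ q.2.1 * q.2.2 ∈ ω.2) then (1:ℕ) else 0) := by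
      intro ω _
      rw [hcfdef]
      exact Finset.card_filter _ _
    rw [Finset.sum_congr rfl h1, Finset.sum_comm]
    have h2 : ∀ q ∈ Conf, (∑ ω ∈ Ω, if (q.1.1 + q.1.2 ∈ ω.1 ∧ q.2.1 + q.2.2 ∈ ω.1) ∧
          (q.1.1 * q.1.2 ∈ ω.2 ∧ q.2.1 * q.2.2 ∈ ω.2) then (1:ℕ) else 0)
        = X₂ * Y₂ := by
      intro q hq
      have hq' := hq
      rw [hConfdef, Finset.mem_filter, Finset.mem_product] at hq'
      obtain ⟨⟨hq1, hq2⟩, _, _⟩ := hq'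
      obtain ⟨hsne, hpne⟩ := hconf q hq
      rw [hΩdef, sum_prod_ind P Q (fun U => q.1.1 + q.1.2 ∈ U ∧ q.2.1 + q.2.2 ∈ U)
        (fun V => q.1.1 * q.1.2 ∈ V ∧ q.2.1 * q.2.2 ∈ V)]
      have es : ks = (js - 1) + 2 := by omega
      have ep : kp = (jp - 1) + 2 := by omega
      rw [hPdef, hQdef, es, ep]
      rw [count_mem2_powersetCard Ts _ _ (hedge_sum _ hq1) (hedge_sum _ hq2) hsne (js - 1),
        count_mem2_powersetCard Tp _ _ (hedge_mul _ hq1) (hedge_mul _ hq2) hpne (jp - 1)]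
    rw [Finset.sum_congr rfl h2, Finset.sum_const, smul_eq_mul]
  -- binomial identities
  have hSs1 : 1 ≤ Ss := by omega
  have hSp1 : 1 ≤ Sp := by omega
  have hSs2 : 2 ≤ Ss := by omega
  have hSp2 : 2 ≤ Sp := by omega
  have idAs : Ss * X₁ = P₀ * ks := by
    have := Nat.add_one_mul_choose_eq (Ss - 1) js
    rw [hX₁def, hP₀def, hksdef]
    have e1 : Ss - 1 + 1 = Ss := by omega
    rw [e1] at this
    rw [this]
  have idAp : Sp * Y₁ = Q₀ * kp := by
    have := Nat.add_one_mul_choose_eq (Sp - 1) jp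
    rw [hY₁def, hQ₀def, hkpdef]
    have e1 : Sp - 1 + 1 = Sp := by omega
    rw [e1] at this
    rw [this]
  have idBs : (Ss - 1) * X₂ = X₁ * js := by
    have := Nat.add_one_mul_choose_eq (Ss - 2) (js - 1)
    rw [hX₂def, hX₁def]
    have e1 : Ss - 2 + 1 = Ss - 1 := by omega
    have e2 : js - 1 + 1 = js := by omega
    rw [e1, e2] at this
    rw [this]
  have idBp : (Sp - 1) * Y₂ = Y₁ * jp := by
    have := Nat.add_one_mul_choose_eq (Sp - 2) (jp - 1)
    rw [hY₂def, hY₁def]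
    have e1 : Sp - 2 + 1 = Sp - 1 := by omega
    have e2 : jp - 1 + 1 = jp := by omega
    rw [e1, e2] at this
    rw [this]
  have hX₁0 : 0 < X₁ := Nat.choose_pos (by omega)
  have hY₁0 : 0 < Y₁ := Nat.choose_pos (by omega)
  have hΩcard : Ω.card = P₀ * Q₀ := by
    rw [hΩdef, Finset.card_product, hPdef, hQdef, Finset.card_powersetCard,
      Finset.card_powersetCard, hP₀def, hQ₀def]
  set t₀ := M / 20 with ht₀def
  -- the key expectation bound, in ℝ then ℤ
  have hcore : (t₀:ℝ) * (P₀ * Q₀) + (Conf.card:ℝ) * (X₂ * Y₂)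
      ≤ (Edges.card:ℝ) * (X₁ * Y₁) := by
    have hks2 : 2 ≤ ks := by omega
    have hkp2 : 2 ≤ kp := by omega
    have hksR : (2:ℝ) ≤ (ks:ℝ) := by exact_mod_cast hks2
    have hkpR : (2:ℝ) ≤ (kp:ℝ) := by exact_mod_cast hkp2
    have hSsR : (2:ℝ) ≤ (Ss:ℝ) := by exact_mod_cast hSs2
    have hSpR : (2:ℝ) ≤ (Sp:ℝ) := by exact_mod_cast hSp2
    have hMR : (999999:ℝ) ≤ (M:ℝ) := by exact_mod_cast hM6
    have hSsMR : (M:ℝ) ≤ (Ss:ℝ) := by exact_mod_cast hSsM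
    have hSpMR : (M:ℝ) ≤ (Sp:ℝ) := by exact_mod_cast hSpM
    have hA1 : (Ss:ℝ) * (X₁:ℝ) = (P₀:ℝ) * (ks:ℝ) := by exact_mod_cast idAs
    have hA2 : (Sp:ℝ) * (Y₁:ℝ) = (Q₀:ℝ) * (kp:ℝ) := by exact_mod_cast idAp
    have eSs : ((Ss - 1 : ℕ):ℝ) = (Ss:ℝ) - 1 := by
      have h1 : 1 ≤ Ss := by omega
      push_cast [h1]
      ring
    have eSp : ((Sp - 1 : ℕ):ℝ) = (Sp:ℝ) - 1 := by
      have h1 : 1 ≤ Sp := by omega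
      push_cast [h1]
      ring
    have eks : ((js:ℕ):ℝ) = (ks:ℝ) - 1 := by
      push_cast [hksdef]
      ring
    have ekp : ((jp:ℕ):ℝ) = (kp:ℝ) - 1 := by
      push_cast [hkpdef]
      ring
    have hB1 : ((Ss:ℝ) - 1) * (X₂:ℝ) = (X₁:ℝ) * ((ks:ℝ) - 1) := by
      have h' : ((Ss - 1 : ℕ):ℝ) * (X₂:ℝ) = (X₁:ℝ) * ((js:ℕ):ℝ) := by exact_mod_cast idBs
      rw [eSs, eks] at h'
      exact h'
    have hB2 : ((Sp:ℝ) - 1) * (Y₂:ℝ) = (Y₁:ℝ) * ((kp:ℝ) - 1) := by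
      have h' : ((Sp - 1 : ℕ):ℝ) * (Y₂:ℝ) = (Y₁:ℝ) * ((jp:ℕ):ℝ) := by exact_mod_cast idBp
      rw [eSp, ekp] at h'
      exact h'
    have hks0 : (ks:ℝ) ≠ 0 := by linarith
    have hkp0 : (kp:ℝ) ≠ 0 := by linarith
    have hSs1ne : (Ss:ℝ) - 1 ≠ 0 := by linarith
    have hSp1ne : (Sp:ℝ) - 1 ≠ 0 := by linarith
    have hP₀eq : (P₀:ℝ) = (Ss:ℝ)*(X₁:ℝ)/(ks:ℝ) := by
      field_simp
      linarith [hA1]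
    have hQ₀eq : (Q₀:ℝ) = (Sp:ℝ)*(Y₁:ℝ)/(kp:ℝ) := by
      field_simp
      linarith [hA2]
    have hX₂eq : (X₂:ℝ) = (X₁:ℝ)*((ks:ℝ)-1)/((Ss:ℝ)-1) := by
      field_simp
      linarith [hB1]
    have hY₂eq : (Y₂:ℝ) = (Y₁:ℝ)*((kp:ℝ)-1)/((Sp:ℝ)-1) := by
      field_simp
      linarith [hB2]
    have hMM : M ≤ M*M := Nat.le_mul_of_pos_left M (by omega)
    have heR : 2*(Edges.card:ℝ) = (M:ℝ)*(M:ℝ) - (M:ℝ) := by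
      have h' : ((2*Edges.card : ℕ):ℝ) = ((M*M - M : ℕ):ℝ) := by
        rw [hedges]
      rw [Nat.cast_sub hMM] at h'
      push_cast at h'
      linarith
    have hKR : (Conf.card:ℝ) ≤ (M:ℝ)*((M:ℝ)*(M:ℝ)) := by exact_mod_cast hK3
    have ht20 : 20*t₀ ≤ M := by omega
    have ht20R : 20*(t₀:ℝ) ≤ (M:ℝ) := by exact_mod_cast ht20
    have hrMR : (r:ℝ)*(r:ℝ) ≤ (M:ℝ) := by exact_mod_cast hrM
    have hrM2R : (M:ℝ) ≤ ((r:ℝ)+1)*((r:ℝ)+1) := by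
      have h1 : M ≤ (r+1)*(r+1) := le_of_lt hrM2
      exact_mod_cast h1
    have hdRR : (d:ℝ) = 2*(r:ℝ)+2 := by
      rw [hddef]
      push_cast
      ring
    have hb1R : (Ss:ℝ) ≤ (d:ℝ)*(ks:ℝ) := by exact_mod_cast le_of_lt hdks
    have hb1R' : (Sp:ℝ) ≤ (d:ℝ)*(kp:ℝ) := by exact_mod_cast le_of_lt hdkp
    have hb2R : (d:ℝ)*((ks:ℝ)-1) ≤ (Ss:ℝ) := by
      rw [← eks]
      exact_mod_cast hdjs
    have hb2R' : (d:ℝ)*((kp:ℝ)-1) ≤ (Sp:ℝ) := by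
      rw [← ekp]
      exact_mod_cast hdjp
    have hcoreineq := core_ineq (M:ℝ) (Edges.card:ℝ) (Conf.card:ℝ) (t₀:ℝ) (r:ℝ) (d:ℝ)
      (Ss:ℝ) (Sp:ℝ) (ks:ℝ) (kp:ℝ) hMR heR (Nat.cast_nonneg _) hKR (by positivity) ht20R
      hrMR hrM2R (Nat.cast_nonneg _) hdRR hSsMR hSpMR hb1R hb2R hksR hb1R' hb2R' hkpR
    calc (t₀:ℝ) * ((P₀:ℝ) * (Q₀:ℝ)) + (Conf.card:ℝ) * ((X₂:ℝ) * (Y₂:ℝ))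
        = ((t₀:ℝ)*(((Ss:ℝ)/(ks:ℝ))*((Sp:ℝ)/(kp:ℝ))) +
            (Conf.card:ℝ)*((((ks:ℝ)-1)/((Ss:ℝ)-1))*(((kp:ℝ)-1)/((Sp:ℝ)-1))))
            * ((X₁:ℝ)*(Y₁:ℝ)) := by
          rw [hP₀eq, hQ₀eq, hX₂eq, hY₂eq]
          field_simp
      _ ≤ (Edges.card:ℝ) * ((X₁:ℝ)*(Y₁:ℝ)) :=
          mul_le_mul_of_nonneg_right hcoreineq (by positivity)
      _ = (Edges.card:ℝ) * ((X₁:ℝ) * (Y₁:ℝ)) := by ring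
  have hmaster : (Ω.card:ℤ) * t₀ ≤ ∑ ω ∈ Ω, ((mf ω : ℤ) - (cf ω : ℤ)) := by
    rw [Finset.sum_sub_distrib]
    have e1 : ∑ ω ∈ Ω, (mf ω : ℤ) = (Edges.card : ℤ) * (X₁ * Y₁) := by
      rw [← Nat.cast_sum]
      rw [hEm]
      push_cast
      ring
    have e2 : ∑ ω ∈ Ω, (cf ω : ℤ) = (Conf.card : ℤ) * (X₂ * Y₂) := by
      rw [← Nat.cast_sum]
      rw [hEc]
      push_cast
      ring
    rw [e1, e2, hΩcard]
    have := hcore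
    have h' : ((P₀ * Q₀ : ℕ) : ℝ) * (t₀:ℝ)
        ≤ (Edges.card:ℝ) * (X₁ * Y₁) - (Conf.card:ℝ) * (X₂ * Y₂) := by
      push_cast
      push_cast at this
      linarith
    exact_mod_cast h'
  -- pick a good ω
  have hpig : ∃ ω ∈ Ω, (t₀:ℤ) ≤ (mf ω : ℤ) - (cf ω : ℤ) := by
    apply Finset.exists_le_of_sum_le hΩne
    rw [Finset.sum_const, nsmul_eq_mul]
    exact hmaster
  obtain ⟨ω, hωΩ, hωgood⟩ := hpig
  have hωP : ω.1 ∈ P ∧ ω.2 ∈ Q := by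
    rw [hΩdef, Finset.mem_product] at hωΩ
    exact hωΩ
  have hωcards : ω.1.card = ks := (Finset.mem_powersetCard.1 hωP.1).2
  have hωcardp : ω.2.card = kp := (Finset.mem_powersetCard.1 hωP.2).2
  -- kept edges
  set E₁ := Edges.filter (fun e => e.1 + e.2 ∈ ω.1 ∧ e.1 * e.2 ∈ ω.2) with hE₁def
  have hE₁card : E₁.card = mf ω := rfl
  set B₁ := (E₁ ×ˢ E₁).filter (fun q => q.1 ≠ q.2 ∧ shareP q.1 q.2) with hB₁def
  have hB₁le : B₁.card ≤ cf ω := by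
    apply Finset.card_le_card
    intro q hq
    rw [hB₁def, Finset.mem_filter, Finset.mem_product] at hq
    obtain ⟨⟨hq1, hq2⟩, hne, hsh⟩ := hq
    rw [hE₁def, Finset.mem_filter] at hq1 hq2
    rw [Finset.mem_filter]
    refine ⟨?_, ⟨hq1.2.1, hq2.2.1⟩, hq1.2.2, hq2.2.2⟩
    rw [hConfdef, Finset.mem_filter, Finset.mem_product]
    exact ⟨⟨hq1.1, hq2.1⟩, hne, hsh⟩
  obtain ⟨F', hF'sub, hF'match, hF'card⟩ := matching_extraction E₁.card E₁ le_rfl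
  rw [← hB₁def] at hF'card
  have hF'size : (t₀ : ℤ) ≤ F'.card := by
    have h1 : ((E₁.card : ℤ) - (B₁.card : ℤ)) ≥ (mf ω : ℤ) - (cf ω : ℤ) := by
      rw [hE₁card]
      have := hB₁le
      omega
    omega
  -- build u, v
  have hF'edge : ∀ e ∈ F', e.1 ∈ A' ∧ e.2 ∈ A' ∧ e.1 < e.2 ∧ e.1 + e.2 ∈ ω.1 ∧
      e.1 * e.2 ∈ ω.2 := by
    intro e he
    have h1 := hF'sub he
    rw [hE₁def, Finset.mem_filter] at h1
    obtain ⟨hEd, hs, hp⟩ := h1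
    obtain ⟨h1', h2', h3'⟩ := hedge_mem e hEd
    exact ⟨h1', h2', h3', hs, hp⟩
  -- real facts for the sum/product count bounds
  have hr1M : r + 1 ≤ M := by linarith [h10r, hrM, hr10]
  have hsqrtN : Real.sqrt N ≤ (r:ℝ) + 1 := by
    have hNle : (N:ℝ) ≤ ((r:ℝ)+1)^2 := by
      have h0 : N ≤ (r+1)*(r+1) := by
        have := hrM2
        omega
      have h' : (N:ℝ) ≤ ((r:ℝ)+1)*((r:ℝ)+1) := by exact_mod_cast h0
      nlinarith [h']
    calc Real.sqrt N ≤ Real.sqrt (((r:ℝ)+1)^2) := Real.sqrt_le_sqrt hNle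
      _ = (r:ℝ)+1 := Real.sqrt_sq (by positivity)
  have hsqrtN0 : 0 < Real.sqrt N := Real.sqrt_pos.2 (by exact_mod_cast Nat.pos_of_ne_zero (by omega))
  have hsqrtS : Real.sqrt N ≤ (S:ℝ) := by
    have h1 : ((r:ℝ)+1) ≤ (S:ℝ) := by
      have : r + 1 ≤ S := by omega
      exact_mod_cast this
    linarith
  have hdR : ((d:ℝ)) = 2*((r:ℝ)+1) := by push_cast [hddef]; ring
  have hkey : ∀ (kk jj SS : ℕ), jj = SS / d → kk = jj + 1 → SS ≤ S →
      (kk:ℝ) ≤ 100 * S / Real.sqrt N := by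
    intro kk jj SS hjj hkk hSS
    have h1 : (jj:ℝ) ≤ (SS:ℝ)/(d:ℝ) := by
      rw [hjj]
      exact Nat.cast_div_le
    have hdRpos : (0:ℝ) < (d:ℝ) := by rw [hdR]; positivity
    have hd2 : 2*Real.sqrt N ≤ (d:ℝ) := by rw [hdR]; linarith [hsqrtN]
    have hS0 : (0:ℝ) < (S:ℝ) := by
      have : 0 < S := by omega
      exact_mod_cast this
    have hSSle : (SS:ℝ) ≤ (S:ℝ) := by exact_mod_cast hSS
    have h2 : (SS:ℝ)/(d:ℝ) ≤ (S:ℝ)/(d:ℝ) := by gcongr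
    have h3 : (S:ℝ)/(d:ℝ) ≤ (S:ℝ)/(2*Real.sqrt N) := by gcongr
    have h4 : (S:ℝ)/(2*Real.sqrt N) = (S:ℝ)/Real.sqrt N/2 := by
      ring
    have h5 : 1 ≤ (S:ℝ)/Real.sqrt N := by
      rw [le_div_iff₀ hsqrtN0]
      linarith
    have h6 : (kk:ℝ) = (jj:ℝ) + 1 := by exact_mod_cast hkk
    have h7 : 100 * (S:ℝ) / Real.sqrt N = 100 * ((S:ℝ)/Real.sqrt N) := by ring
    rw [h7]
    rw [h4] at h3
    linarith
  set n := F'.card with hndef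
  set φ := F'.equivFin.symm with hφdef
  refine ⟨n, fun i => ((φ i : ℤ × ℤ)).1, fun i => ((φ i : ℤ × ℤ)).2, ?_, ?_, ?_, ?_, ?_, ?_, ?_, ?_⟩
  · -- size
    have h2 : t₀ ≤ n := by exact_mod_cast hF'size
    have h3 : N ≤ 32 * n := by omega
    rw [div_le_iff₀ (by norm_num : (0:ℝ) < 32)]
    have h4 : (N:ℝ) ≤ 32 * n := by exact_mod_cast h3
    linarith
  · intro i
    exact hA'sub (hF'edge _ (φ i).2).1
  · intro i
    exact hA'sub (hF'edge _ (φ i).2).2.1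
  · intro i j h
    rcases eq_or_ne ((φ i : ℤ × ℤ)) ((φ j : ℤ × ℤ)) with he | hne'
    · exact φ.injective (Subtype.ext he)
    · exact absurd (Or.inl h) (hF'match _ (φ i).2 _ (φ j).2 hne')
  · intro i j h
    rcases eq_or_ne ((φ i : ℤ × ℤ)) ((φ j : ℤ × ℤ)) with he | hne'
    · exact φ.injective (Subtype.ext he)
    · exact absurd (Or.inr (Or.inr (Or.inr h))) (hF'match _ (φ i).2 _ (φ j).2 hne')
  · intro i j h
    rcases eq_or_ne ((φ i : ℤ × ℤ)) ((φ j : ℤ × ℤ)) with he | hne'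
    · have hlt := (hF'edge _ (φ i).2).2.2.1
      have h2 : ((φ i : ℤ × ℤ)).1 = ((φ j : ℤ × ℤ)).2 := h
      rw [he] at h2 hlt
      omega
    · exact (hF'match _ (φ i).2 _ (φ j).2 hne') (Or.inr (Or.inl h))
  · -- sums
    have himg : (Finset.image (fun i => ((φ i : ℤ × ℤ)).1 + ((φ i : ℤ × ℤ)).2) Finset.univ)
        ⊆ ω.1 := by
      intro x hx
      rw [Finset.mem_image] at hx
      obtain ⟨i, _, rfl⟩ := hx
      exact (hF'edge _ (φ i).2).2.2.2.1
    have hcard : (Finset.image (fun i => ((φ i : ℤ × ℤ)).1 + ((φ i : ℤ × ℤ)).2)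
        Finset.univ).card ≤ ks := by
      rw [← hωcards]
      exact Finset.card_le_card himg
    calc ((Finset.image (fun i => ((φ i : ℤ × ℤ)).1 + ((φ i : ℤ × ℤ)).2)
        Finset.univ).card : ℝ) ≤ (ks:ℝ) := by exact_mod_cast hcard
      _ ≤ 100 * S / Real.sqrt N := hkey ks js Ss hjsdef hksdef hSsS
  · -- products
    have himg : (Finset.image (fun i => ((φ i : ℤ × ℤ)).1 * ((φ i : ℤ × ℤ)).2) Finset.univ)
        ⊆ ω.2 := by
      intro x hx
      rw [Finset.mem_image] at hx
      obtain ⟨i, _, rfl⟩ := hx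
      exact (hF'edge _ (φ i).2).2.2.2.2
    have hcard : (Finset.image (fun i => ((φ i : ℤ × ℤ)).1 * ((φ i : ℤ × ℤ)).2)
        Finset.univ).card ≤ kp := by
      rw [← hωcardp]
      exact Finset.card_le_card himg
    calc ((Finset.image (fun i => ((φ i : ℤ × ℤ)).1 * ((φ i : ℤ × ℤ)).2)
        Finset.univ).card : ℝ) ≤ (kp:ℝ) := by exact_mod_cast hcard
      _ ≤ 100 * S / Real.sqrt N := hkey kp jp Sp hjpdef hkpdef hSpS
end

section
/- There exist ε > 0 and n₀ such that for every n ≥ n₀ there exist n pairs of integers (a_i, b_i), i = 1,…,n, whose 2n entries are pairwise distinct, such that |{a_i + b_i : 1 ≤ i ≤ n}| ≤ n/(log n)^ε and |{a_i·b_i : 1 ≤ i ≤ n}| ≤ n/(log n)^ε, where log denotes the natural logarithm. -/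
/-- Uniqueness of the 2-adic decomposition with odd part, in ℕ. -/
lemma nat_pow_odd_inj : ∀ (α : ℕ) {β s t : ℕ}, s % 2 = 1 → t % 2 = 1 →
    2 ^ α * s = 2 ^ β * t → α = β ∧ s = t := by
  intro α
  induction α with
  | zero =>
    intro β s t hs ht h
    cases β with
    | zero => simpa using h
    | succ β =>
      exfalso
      simp only [pow_zero, one_mul] at h
      have : s % 2 = 0 := by
        subst h
        have : 2 ^ (β+1) * t = 2 * (2 ^ β * t) := by ring
        omega
      omega
  | succ α ih =>
    intro β s t hs ht h
    cases β with
    | zero =>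
      exfalso
      simp only [pow_zero, one_mul] at h
      have : t % 2 = 0 := by
        have : 2 ^ (α+1) * s = 2 * (2 ^ α * s) := by ring
        omega
      omega
    | succ β =>
      have h2 : 2 ^ α * s = 2 ^ β * t := by
        have : 2 * (2 ^ α * s) = 2 * (2 ^ β * t) := by
          calc 2 * (2 ^ α * s) = 2 ^ (α+1) * s := by ring
          _ = 2 ^ (β+1) * t := h
          _ = 2 * (2 ^ β * t) := by ring
        omega
      obtain ⟨h3, h4⟩ := ih hs ht h2
      exact ⟨by omega, h4⟩

/-- Int version via `natAbs`. -/
lemma int_pow_odd_inj {α β : ℕ} {s t : ℤ} (hs : s.natAbs % 2 = 1) (ht : t.natAbs % 2 = 1)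
    (h : 2 ^ α * s = 2 ^ β * t) : α = β ∧ s = t := by
  have habs : 2 ^ α * s.natAbs = 2 ^ β * t.natAbs := by
    have := congrArg Int.natAbs h
    simpa [Int.natAbs_mul, Int.natAbs_pow] using this
  obtain ⟨h1, _⟩ := nat_pow_odd_inj α hs ht habs
  subst h1
  refine ⟨rfl, ?_⟩
  have h2 : (2:ℤ) ^ α ≠ 0 := by positivity
  exact mul_left_cancel₀ h2 h

/-- `(a+b)/c ≤ a/c + b/c + 1` in ℕ. -/
lemma nat_add_div_le (a b c : ℕ) (hc : 0 < c) : (a + b) / c ≤ a / c + b / c + 1 := by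
  have h1 := Nat.div_add_mod a c
  have h2 := Nat.div_add_mod b c
  have h3 : a % c < c := Nat.mod_lt _ hc
  have h4 : b % c < c := Nat.mod_lt _ hc
  have : (a + b) / c < a / c + b / c + 2 := by
    rw [Nat.div_lt_iff_lt_mul hc]
    nlinarith
  omega

/-- Finite-family CRT. -/
lemma crt_family : ∀ (R : ℕ) (h t : ℕ → ℕ),
    (∀ i j, i < R → j < R → i ≠ j → Nat.Coprime (h i) (h j)) →
    ∃ A, ∀ r, r < R → A ≡ t r [MOD h r] := by
  intro R
  induction R with
  | zero => exact fun h t _ => ⟨0, fun r hr => absurd hr (Nat.not_lt_zero r)⟩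
  | succ R ih =>
    intro h t hco
    obtain ⟨A₀, hA₀⟩ := ih h t (fun i j hi hj hij => hco i j (by omega) (by omega) hij)
    have hcop : Nat.Coprime (h R) (∏ r ∈ Finset.range R, h r) := by
      apply Nat.Coprime.prod_right
      intro i hi
      have hi' : i < R := Finset.mem_range.mp hi
      exact hco R i (by omega) (by omega) (by omega)
    obtain ⟨A, hA1, hA2⟩ := Nat.chineseRemainder hcop (t R) A₀
    refine ⟨A, fun r hr => ?_⟩
    rcases Nat.lt_succ_iff_lt_or_eq.mp hr with hr' | hr'
    · have hdvd : h r ∣ ∏ r ∈ Finset.range R, h r :=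
        Finset.dvd_prod_of_mem _ (Finset.mem_range.mpr hr')
      exact (hA2.of_dvd hdvd).trans (hA₀ r hr')
    · subst hr'; exact hA1

lemma prod_dvd_of_pairwise_coprime (s : Finset ℕ) (f : ℕ → ℕ) (m : ℕ)
    (hco : ∀ i ∈ s, ∀ j ∈ s, i ≠ j → Nat.Coprime (f i) (f j))
    (hdvd : ∀ i ∈ s, f i ∣ m) : (∏ i ∈ s, f i) ∣ m := by
  induction s using Finset.induction with
  | empty => simp
  | @insert a s ha ih =>
    rw [Finset.prod_insert ha]
    have hco' : Nat.Coprime (f a) (∏ i ∈ s, f i) := by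
      apply Nat.Coprime.prod_right
      intro i hi
      exact hco a (Finset.mem_insert_self a s) i (Finset.mem_insert_of_mem hi)
        (fun h => ha (h ▸ hi))
    exact hco'.mul_dvd_of_dvd_of_dvd (hdvd a (Finset.mem_insert_self a s))
      (ih (fun i hi j hj hij => hco i (Finset.mem_insert_of_mem hi) j
          (Finset.mem_insert_of_mem hj) hij)
        (fun i hi => hdvd i (Finset.mem_insert_of_mem hi)))

set_option maxHeartbeats 2000000 in
/-- The main construction. -/
lemma key_construction (n : ℕ) (hn : 2 ^ 20000 ≤ n) :
    ∃ a b : Fin n → ℤ,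
      Function.Injective a ∧ Function.Injective b ∧ (∀ i j, a i ≠ b j) ∧
      ((Finset.image (fun i => a i + b i) Finset.univ).card : ℝ)
        ≤ (n : ℝ) / Real.log n ^ (1/8 : ℝ) ∧
      ((Finset.image (fun i => a i * b i) Finset.univ).card : ℝ)
        ≤ (n : ℝ) / Real.log n ^ (1/8 : ℝ) := by
  ----------------------------------------------------------------
  -- ℕ parameters
  ----------------------------------------------------------------
  have hn0 : n ≠ 0 := by
    have : 0 < 2 ^ 20000 := by positivity
    omega
  set L := Nat.log 2 n with hLdef
  have hL : 20000 ≤ L := (Nat.le_log_iff_pow_le (by norm_num) hn0).mpr hn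
  have hLn : 2 ^ L ≤ n := Nat.pow_log_le_self 2 hn0
  clear hn
  have hnL : n < 2 ^ (L + 1) := Nat.lt_pow_succ_log_self (by norm_num) n
  set lam := Nat.log 2 L with hlamdef
  have hlam : 14 ≤ lam := by
    have : (2:ℕ) ^ 14 ≤ L := by omega
    exact (Nat.le_log_iff_pow_le (by norm_num) (by omega)).mpr this
  have hlamL : 2 ^ lam ≤ L := Nat.pow_log_le_self 2 (by omega)
  have hLlam : L < 2 ^ (lam + 1) := Nat.lt_pow_succ_log_self (by norm_num) L
  set J := 2 ^ (lam / 4 + 1) with hJdef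
  have hJ16 : 16 ≤ J := by
    calc (16:ℕ) = 2 ^ 4 := by norm_num
    _ ≤ 2 ^ (lam / 4 + 1) := Nat.pow_le_pow_right (by norm_num) (by omega)
  have hJ0 : 0 < J := by omega
  have hJ4 : L + 1 ≤ J ^ 4 := by
    have h1 : J ^ 4 = 2 ^ ((lam / 4 + 1) * 4) := by rw [hJdef, ← pow_mul]
    have h2 : lam + 1 ≤ (lam / 4 + 1) * 4 := by omega
    calc L + 1 ≤ 2 ^ (lam + 1) := hLlam
    _ ≤ 2 ^ ((lam / 4 + 1) * 4) := Nat.pow_le_pow_right (by norm_num) h2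
    _ = J ^ 4 := h1.symm
  have hJ2L : 8 * J ^ 2 ≤ L := by
    have h1 : 8 * J ^ 2 = 2 ^ (2 * (lam / 4) + 5) := by
      rw [hJdef, ← pow_mul, show (8:ℕ) = 2 ^ 3 by norm_num, ← pow_add]
      congr 1; omega
    have h2 : 2 * (lam / 4) + 5 ≤ lam := by omega
    calc 8 * J ^ 2 = 2 ^ (2 * (lam / 4) + 5) := h1
    _ ≤ 2 ^ lam := Nat.pow_le_pow_right (by norm_num) h2
    _ ≤ L := hlamL
  have h6J2 : 6 * J ^ 2 ≤ n := by
    have h24 : 24 * L ≤ 2 ^ L := by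
      have h1 : L - 8 < 2 ^ (L - 8) := Nat.lt_two_pow_self
      have h2 : (2:ℕ) ^ L = 256 * 2 ^ (L - 8) := by
        have : L = 8 + (L - 8) := by omega
        rw [this, pow_add]; norm_num
      omega
    calc 6 * J ^ 2 ≤ 24 * L := by omega
    _ ≤ 2 ^ L := h24
    _ ≤ n := hLn
  set N := n / J + 1 with hNdef
  have hN0 : 0 < N := hNdef ▸ Nat.succ_pos _
  have hnJN : n ≤ J * N := by
    have h1 := Nat.div_add_mod n J
    have h2 : n % J < J := Nat.mod_lt _ hJ0
    calc n = J * (n / J) + n % J := h1.symm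
    _ ≤ J * (n / J) + J := by omega
    _ = J * N := by rw [hNdef]; ring
  have hNJn : N * J ≤ n + J := by
    have h1 := Nat.div_add_mod n J
    calc N * J = J * (n / J) + J := by rw [hNdef]; ring
    _ ≤ n + J := by omega
  ----------------------------------------------------------------
  -- primes
  ----------------------------------------------------------------
  have hex : ∀ q : ℕ, ∃ p, Nat.Prime p ∧ 4 ^ (q + 4) * J < p ∧ p ≤ 2 * (4 ^ (q + 4) * J) :=
    fun q => Nat.exists_prime_lt_and_le_two_mul (4 ^ (q + 4) * J) (by positivity)
  choose p pprime plb pub using hex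
  have h256J : ∀ q, 256 * J ≤ 4 ^ (q + 4) * J := by
    intro q
    have : (256:ℕ) = 4 ^ 4 := by norm_num
    exact Nat.mul_le_mul_right J (this ▸ Nat.pow_le_pow_right (by norm_num) (by omega))
  have pgt2 : ∀ q, 2 < p q := by
    intro q
    have h1 := h256J q
    have := plb q; omega
  have pmono : ∀ q q', q < q' → p q < p q' := by
    intro q q' hqq
    calc p q ≤ 2 * (4 ^ (q + 4) * J) := pub q
    _ < 4 ^ (q' + 4) * J := by
      have h1 : 4 ^ (q + 5) ≤ 4 ^ (q' + 4) := Nat.pow_le_pow_right (by norm_num) (by omega)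
      have h2 : 2 * 4 ^ (q + 4) < 4 ^ (q + 5) := by
        have h4 : (4:ℕ) ^ (q + 5) = 4 * 4 ^ (q + 4) := by ring
        have : 0 < (4:ℕ) ^ (q + 4) := by positivity
        omega
      calc 2 * (4 ^ (q + 4) * J) = (2 * 4 ^ (q + 4)) * J := by ring
      _ < 4 ^ (q + 5) * J := Nat.mul_lt_mul_of_lt_of_le h2 (le_refl J) hJ0
      _ ≤ 4 ^ (q' + 4) * J := Nat.mul_le_mul_right J h1
    _ < p q' := plb q'
  ----------------------------------------------------------------
  -- CRT constant A
  ----------------------------------------------------------------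
  obtain ⟨A, hA⟩ := crt_family (J + 1)
    (fun i => if i = 0 then 2 else p (i - 1))
    (fun i => if i = 0 then 1 else (p (i-1) - (4 ^ ((i-1) + 2) - 4) % p (i-1)))
    (by
      intro i j hi hj hij
      rcases Nat.eq_zero_or_pos i with hi0 | hi0
      · subst hi0
        simp only [if_pos rfl, if_neg (by omega : j ≠ 0)]
        exact (Nat.coprime_primes Nat.prime_two (pprime (j-1))).mpr (by have := pgt2 (j-1); omega)
      · rcases Nat.eq_zero_or_pos j with hj0 | hj0
        · subst hj0
          simp only [if_pos rfl, if_neg (by omega : i ≠ 0)]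
          exact ((Nat.coprime_primes Nat.prime_two (pprime (i-1))).mpr
            (by have := pgt2 (i-1); omega)).symm
        · simp only [if_neg (by omega : i ≠ 0), if_neg (by omega : j ≠ 0)]
          refine (Nat.coprime_primes (pprime (i-1)) (pprime (j-1))).mpr ?_
          rcases Nat.lt_or_ge (i-1) (j-1) with h | h
          · exact Nat.ne_of_lt (pmono _ _ h)
          · have : j - 1 < i - 1 := by omega
            exact (Nat.ne_of_lt (pmono _ _ this)).symm)
  have hAodd : A % 2 = 1 := by
    have := hA 0 (by omega)
    simpa [Nat.ModEq] using this
  have hAp : ∀ q, q < J → p q ∣ A + (4 ^ (q + 2) - 4) := by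
    intro q hq
    have h1 := hA (q + 1) (by omega)
    simp only [if_neg (by omega : q + 1 ≠ 0), Nat.add_sub_cancel] at h1
    set e := 4 ^ (q + 2) - 4 with he
    have hppos : 0 < p q := (pprime q).pos
    have hmod : e % p q < p q := Nat.mod_lt _ hppos
    have h2 : A + e ≡ (p q - e % p q) + e [MOD p q] := h1.add_right e
    have h3 : (p q - e % p q) + e = p q * (1 + e / p q) := by
      have := Nat.div_add_mod e (p q)
      ring_nf
      omega
    rw [h3] at h2
    have h4 : p q * (1 + e / p q) ≡ 0 [MOD p q] :=
      (Nat.modEq_zero_iff_dvd).mpr ⟨1 + e / p q, rfl⟩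
    exact (Nat.modEq_zero_iff_dvd).mp (h2.trans h4)
  ----------------------------------------------------------------
  -- modulus Q, maps x and u
  ----------------------------------------------------------------
  set Q0 := ∏ q ∈ Finset.range J, p q with hQ0def
  set Q := 2 * Q0 with hQdef
  have hQ0pos : 0 < Q0 := Finset.prod_pos (fun q _ => (pprime q).pos)
  have hQpos : 0 < Q := by omega
  have hpQ : ∀ q, q < J → p q ∣ Q := fun q hq =>
    Dvd.dvd.mul_left (Finset.dvd_prod_of_mem _ (Finset.mem_range.mpr hq)) 2
  have h2Q : 2 ∣ Q := ⟨Q0, rfl⟩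
  -- size bound for Q : Q * J ≤ n, hence Q ≤ N
  have hQle : Q ≤ 2 ^ (3 * J ^ 2 + 7 * J + 1) := by
    have h1 : Q0 ≤ ∏ q ∈ Finset.range J, (2 * J) * 4 ^ (q + 4) := by
      apply Finset.prod_le_prod'
      intro q _
      calc p q ≤ 2 * (4 ^ (q + 4) * J) := pub q
      _ = (2 * J) * 4 ^ (q + 4) := by ring
    have h2 : ∏ q ∈ Finset.range J, ((2 * J) * 4 ^ (q + 4))
        = (2 * J) ^ J * 4 ^ (∑ q ∈ Finset.range J, (q + 4)) := by
      rw [Finset.prod_mul_distrib, Finset.prod_const, Finset.card_range,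
        Finset.prod_pow_eq_pow_sum]
    have h3 : ∑ q ∈ Finset.range J, (q + 4) ≤ J * (J + 3) := by
      calc ∑ q ∈ Finset.range J, (q + 4) ≤ ∑ _q ∈ Finset.range J, (J + 3) := by
            apply Finset.sum_le_sum
            intro q hq
            have := Finset.mem_range.mp hq
            omega
      _ = J * (J + 3) := by rw [Finset.sum_const, Finset.card_range, smul_eq_mul]
    have h4 : (2 * J) ^ J ≤ 2 ^ (J ^ 2 + J) := by
      have hJlt : J < 2 ^ J := (Nat.lt_two_pow_self (n := J))
      calc (2 * J) ^ J ≤ (2 ^ (J + 1)) ^ J := by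
            apply Nat.pow_le_pow_left
            rw [pow_succ]
            omega
      _ = 2 ^ ((J + 1) * J) := by rw [← pow_mul]
      _ ≤ 2 ^ (J ^ 2 + J) := Nat.pow_le_pow_right (by norm_num) (by ring_nf; omega)
    have h5 : (4:ℕ) ^ (∑ q ∈ Finset.range J, (q + 4)) ≤ 2 ^ (2 * (J * (J + 3))) := by
      calc (4:ℕ) ^ (∑ q ∈ Finset.range J, (q + 4)) ≤ 4 ^ (J * (J + 3)) :=
            Nat.pow_le_pow_right (by norm_num) h3
      _ = 2 ^ (2 * (J * (J + 3))) := by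
        rw [show (4:ℕ) = 2 ^ 2 by norm_num, ← pow_mul]
    calc Q = 2 * Q0 := hQdef
    _ ≤ 2 * ((2 * J) ^ J * 4 ^ (∑ q ∈ Finset.range J, (q + 4))) := by
        have := h1.trans (le_of_eq h2)
        omega
    _ ≤ 2 * (2 ^ (J ^ 2 + J) * 2 ^ (2 * (J * (J + 3)))) := by
        have := Nat.mul_le_mul h4 h5
        omega
    _ = 2 ^ (J ^ 2 + J + 2 * (J * (J + 3)) + 1) := by
        rw [← pow_add]; ring
    _ ≤ 2 ^ (3 * J ^ 2 + 7 * J + 1) := Nat.pow_le_pow_right (by norm_num) (by ring_nf; omega)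
  have hQJn : Q * J ≤ n := by
    have h1 : Q * J ≤ 2 ^ (3 * J ^ 2 + 7 * J + 1) * 2 ^ J :=
      Nat.mul_le_mul hQle (le_of_lt ((Nat.lt_two_pow_self (n := J))))
    have h2 : (2:ℕ) ^ (3 * J ^ 2 + 7 * J + 1) * 2 ^ J = 2 ^ (3 * J ^ 2 + 8 * J + 1) := by
      rw [← pow_add]; ring_nf
    have h3 : 3 * J ^ 2 + 8 * J + 1 ≤ 8 * J ^ 2 := by nlinarith
    calc Q * J ≤ 2 ^ (3 * J ^ 2 + 8 * J + 1) := by rw [← h2]; exact h1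
    _ ≤ 2 ^ (8 * J ^ 2) := Nat.pow_le_pow_right (by norm_num) h3
    _ ≤ 2 ^ L := Nat.pow_le_pow_right (by norm_num) hJ2L
    _ ≤ n := hLn
  have hQN : Q ≤ N := by
    have : Q ≤ n / J := (Nat.le_div_iff_mul_le hJ0).mpr hQJn
    omega
  set x : ℕ → ℕ := fun v => (A * v) % Q with hxdef
  set u : ℕ → ℤ := fun v => (x v : ℤ) - 4 * v with hudef
  have hxlt : ∀ v, x v < Q := fun v => Nat.mod_lt _ hQpos
  have hxodd : ∀ v, v % 2 = 1 → (x v) % 2 = 1 := by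
    intro v hv
    have h1 : (A * v) % Q % 2 = (A * v) % 2 := Nat.mod_mod_of_dvd _ h2Q
    have h2 : (A * v) % 2 = 1 := by rw [Nat.mul_mod, hAodd, hv]
    simpa [hxdef, h1] using h2
  have huodd : ∀ v, v % 2 = 1 → (u v).natAbs % 2 = 1 := by
    intro v hv
    have h1 : Odd ((x v : ℤ) - 4 * v) := by
      have hx1 : Odd (x v : ℤ) := by
        rw [Int.odd_iff]
        have := hxodd v hv
        omega
      have hx2 : Even ((4:ℤ) * v) := ⟨2 * v, by ring⟩
      exact hx1.sub_even hx2
    have h2 : Odd (u v) := by simpa [hudef] using h1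
    rw [← Nat.odd_iff]
    exact Int.natAbs_odd.mpr h2
  have hxA : ∀ v q, q < J → x v ≡ A * v [MOD p q] := by
    intro v q hq
    exact (Nat.mod_modEq (A * v) Q).of_dvd (hpQ q hq)
  -- injectivity of u on odd numbers
  have huInj : ∀ v v', v % 2 = 1 → v' % 2 = 1 → u v = u v' → v = v' := by
    intro v v' hv hv' huv
    have hx4 : (x v : ℤ) - (x v' : ℤ) = 4 * ((v : ℤ) - v') := by
      simp only [hudef] at huv
      linarith
    have hdvd : ∀ q, q < J → (p q : ℤ) ∣ ((v : ℤ) - v') := by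
      intro q hq
      have d1 : (p q : ℤ) ∣ (A * v : ℤ) - (x v : ℤ) := by
        have h := (Nat.modEq_iff_dvd).mp (hxA v q hq)
        push_cast at h ⊢
        convert h using 1
      have d2 : (p q : ℤ) ∣ (A * v' : ℤ) - (x v' : ℤ) := by
        have h := (Nat.modEq_iff_dvd).mp (hxA v' q hq)
        push_cast at h ⊢
        convert h using 1
      have d3 : (p q : ℤ) ∣ ((A : ℤ) - 4) * ((v : ℤ) - v') := by
        have heq : ((A : ℤ) - 4) * ((v : ℤ) - v')
            = ((A * v : ℤ) - (x v : ℤ)) - ((A * v' : ℤ) - (x v' : ℤ))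
              + (((x v : ℤ) - x v') - 4 * ((v:ℤ) - v')) := by push_cast; ring
        rw [heq, hx4]
        simpa using dvd_sub d1 d2
      have d4 : (p q : ℤ) ∣ ((A : ℤ) + (4 ^ (q + 2) - 4)) := by
        have hd := hAp q hq
        have h4 : (4:ℕ) ≤ 4 ^ (q + 2) := by
          calc (4:ℕ) = 4 ^ 1 := by norm_num
          _ ≤ 4 ^ (q + 2) := Nat.pow_le_pow_right (by norm_num) (by omega)
        have hcast : ((A + (4 ^ (q + 2) - 4) : ℕ) : ℤ) = (A : ℤ) + (4 ^ (q + 2) - 4) := by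
          push_cast [h4]
          ring
        rw [← hcast]
        exact_mod_cast Int.natCast_dvd_natCast.mpr hd
      have d5 : (p q : ℤ) ∣ (4 : ℤ) ^ (q + 2) * ((v : ℤ) - v') := by
        have heq : (4 : ℤ) ^ (q + 2) * ((v : ℤ) - v')
            = ((A : ℤ) + (4 ^ (q + 2) - 4)) * ((v : ℤ) - v')
              - ((A : ℤ) - 4) * ((v : ℤ) - v') := by ring
        rw [heq]
        exact dvd_sub (d4.mul_right _) d3
      have hpprime : Prime (p q : ℤ) := Nat.prime_iff_prime_int.mp (pprime q)
      rcases hpprime.dvd_mul.mp d5 with h | h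
      · exfalso
        have h4 : (p q : ℤ) ∣ (4 : ℤ) := hpprime.dvd_of_dvd_pow h
        have h5 : (p q : ℕ) ∣ 4 := by exact_mod_cast h4
        have h6 : (p q : ℕ) ∣ 2 ^ 2 := by norm_num at h5 ⊢; exact h5
        have h7 : p q ∣ 2 := (pprime q).dvd_of_dvd_pow h6
        have h8 : p q ≤ 2 := Nat.le_of_dvd (by norm_num) h7
        have := pgt2 q
        omega
      · exact h
    have h2dvd : (2 : ℤ) ∣ ((v : ℤ) - v') := by
      have h1 : (v:ℤ) % 2 = 1 := by omega
      have h2 : (v':ℤ) % 2 = 1 := by omega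
      omega
    have hQdvd : (Q : ℤ) ∣ ((v : ℤ) - v') := by
      set D := ((v : ℤ) - v').natAbs with hD
      have hDd : ∀ q, q < J → p q ∣ D := by
        intro q hq
        have := hdvd q hq
        rwa [Int.natCast_dvd] at this
      have h2D : 2 ∣ D := by
        rwa [show ((2:ℤ)) = ((2:ℕ):ℤ) by norm_num, Int.natCast_dvd] at h2dvd
      have hQ0D : Q0 ∣ D := by
        rw [hQ0def]
        apply prod_dvd_of_pairwise_coprime
        · intro i _ j _ hij
          refine (Nat.coprime_primes (pprime i) (pprime j)).mpr ?_
          rcases Nat.lt_or_ge i j with h | h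
          · exact Nat.ne_of_lt (pmono _ _ h)
          · have : j < i := by omega
            exact (Nat.ne_of_lt (pmono _ _ this)).symm
        · intro i hi
          exact hDd i (Finset.mem_range.mp hi)
      have hco2 : Nat.Coprime 2 Q0 := by
        apply Nat.Coprime.prod_right
        intro i _
        exact (Nat.coprime_primes Nat.prime_two (pprime i)).mpr (by have := pgt2 i; omega)
      have hQD : Q ∣ D := hQdef ▸ hco2.mul_dvd_of_dvd_of_dvd h2D hQ0D
      have := Int.natCast_dvd_natCast.mpr hQD
      exact this.trans (Int.natAbs_dvd.mpr dvd_rfl)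
    have hxeq : x v = x v' := by
      have hAd : (Q : ℤ) ∣ ((A * v : ℤ) - (A * v' : ℤ)) := by
        have heq : ((A * v : ℤ) - (A * v' : ℤ)) = (A : ℤ) * ((v:ℤ) - v') := by push_cast; ring
        rw [heq]
        exact hQdvd.mul_left _
      have hmodeq : A * v ≡ A * v' [MOD Q] := by
        rw [Nat.modEq_iff_dvd]
        have heq : ((A * v' : ℕ) : ℤ) - ((A * v : ℕ) : ℤ)
            = -(((A * v : ℤ)) - (A * v' : ℤ)) := by push_cast; ring
        rw [heq]
        exact hAd.neg_right
      simpa [hxdef, Nat.ModEq] using hmodeq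
    rw [hxeq] at hx4
    have : (v : ℤ) = v' := by omega
    exact_mod_cast this
  ----------------------------------------------------------------
  -- the pairs
  ----------------------------------------------------------------
  have hqlt : ∀ i : Fin n, (i : ℕ) / N < J := by
    intro i
    rw [Nat.div_lt_iff_lt_mul hN0]
    calc (i : ℕ) < n := i.isLt
    _ ≤ J * N := hnJN
    _ = J * N := by ring
  ----------------------------------------------------------------
  -- real-number facts
  ----------------------------------------------------------------
  have hnR : (0:ℝ) < n := by
    have : 0 < n := by omega
    exact_mod_cast this
  have hlog256 : (256:ℝ) ≤ Real.log n := by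
    have h2L : ((2:ℝ)) ^ L ≤ (n:ℝ) := by exact_mod_cast hLn
    have h1 : Real.log ((2:ℝ) ^ L) ≤ Real.log n :=
      Real.log_le_log (by positivity) h2L
    rw [Real.log_pow] at h1
    have hLR : (20000:ℝ) ≤ (L:ℝ) := by exact_mod_cast hL
    have hlt : (0:ℝ) ≤ Real.log 2 := Real.log_nonneg (by norm_num)
    have h3 : (20000:ℝ) * Real.log 2 ≤ (L:ℝ) * Real.log 2 :=
      mul_le_mul_of_nonneg_right hLR hlt
    have h4 := Real.log_two_gt_d9
    nlinarith
  have hlogpos : (0:ℝ) < Real.log n := by linarith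
  have hlogJ4 : Real.log n ≤ ((J:ℝ)) ^ (4:ℕ) := by
    have h1 : (n:ℝ) ≤ (2:ℝ) ^ (L+1) := by exact_mod_cast (le_of_lt hnL)
    have h2 : Real.log n ≤ Real.log ((2:ℝ) ^ (L+1)) := Real.log_le_log hnR h1
    rw [Real.log_pow] at h2
    have h3 : Real.log 2 ≤ 1 := by nlinarith [Real.log_two_lt_d9]
    have h4 : ((L:ℝ) + 1) ≤ ((J:ℝ)) ^ (4:ℕ) := by exact_mod_cast hJ4
    have h5 : (0:ℝ) ≤ Real.log 2 := Real.log_nonneg (by norm_num)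
    calc Real.log n ≤ ((L:ℝ)+1) * Real.log 2 := by push_cast at h2 ⊢; nlinarith
    _ ≤ ((L:ℝ)+1) * 1 := by nlinarith
    _ ≤ ((J:ℝ)) ^ (4:ℕ) := by nlinarith
  set G := Real.log (n:ℝ) ^ (1/8 : ℝ) with hGdef
  have hG0 : 0 < G := Real.rpow_pos_of_pos hlogpos _
  have hG8 : G ^ (8:ℕ) = Real.log n := by
    rw [hGdef, ← Real.rpow_natCast (Real.log (n:ℝ) ^ (1/8:ℝ)) 8,
      ← Real.rpow_mul (le_of_lt hlogpos)]
    norm_num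
  have hG2 : (2:ℝ) ≤ G := by
    apply le_of_pow_le_pow_left₀ (by norm_num : (8:ℕ) ≠ 0) (le_of_lt hG0)
    rw [hG8]
    norm_num
    linarith
  have hGG : G * G = Real.log (n:ℝ) ^ (1/4 : ℝ) := by
    rw [hGdef, ← Real.rpow_add hlogpos]
    norm_num
  have hGGJ : G * G ≤ (J:ℝ) := by
    have hJR0 : (0:ℝ) ≤ (J:ℝ) := Nat.cast_nonneg J
    apply le_of_pow_le_pow_left₀ (by norm_num : (4:ℕ) ≠ 0) hJR0
    have hpow : ((Real.log (n:ℝ)) ^ ((1:ℝ)/4)) ^ (4:ℕ) = Real.log (n:ℝ) := by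
      rw [← Real.rpow_natCast ((Real.log (n:ℝ)) ^ ((1:ℝ)/4)) 4,
        ← Real.rpow_mul (le_of_lt hlogpos)]
      norm_num
    rw [hGG]
    calc ((Real.log (n:ℝ)) ^ ((1:ℝ)/4)) ^ (4:ℕ) = Real.log (n:ℝ) := hpow
    _ ≤ ((J:ℝ)) ^ (4:ℕ) := hlogJ4
  have hGJ : G ≤ (J:ℝ) := by nlinarith [mul_le_mul_of_nonneg_left hG2 (le_of_lt hG0)]
  have hJnR : (J:ℝ) ≤ (n:ℝ) := by
    have h1 : (6:ℝ) * (J:ℝ)^2 ≤ n := by exact_mod_cast h6J2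
    have h2 : (16:ℝ) ≤ (J:ℝ) := by exact_mod_cast hJ16
    nlinarith
  have hNG : (N:ℝ) * G ≤ (n:ℝ) := by
    have hNJr : (N:ℝ) * J ≤ (n:ℝ) + J := by exact_mod_cast hNJn
    have hN0r : (0:ℝ) ≤ (N:ℝ) := Nat.cast_nonneg N
    have f1 : (N:ℝ) * (G*G) ≤ (N:ℝ) * J := mul_le_mul_of_nonneg_left hGGJ hN0r
    have f2 : (0:ℝ) ≤ (N:ℝ) * G := by positivity
    nlinarith [mul_le_mul_of_nonneg_left hG2 f2]
  have h6J2R : (6:ℝ) * (J:ℝ)^2 ≤ (n:ℝ) := by exact_mod_cast h6J2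
  have hQNR : (Q:ℝ) ≤ (N:ℝ) := by exact_mod_cast hQN
  have hJR : (0:ℝ) < (J:ℝ) := by exact_mod_cast hJ0
  refine ⟨fun i => 2 ^ (J - 1 - (i : ℕ) / N) * u (2 * ((i : ℕ) % N) + 1),
          fun i => 2 ^ (J + 3 + (i : ℕ) / N) * ((2 * ((i : ℕ) % N) + 1 : ℕ) : ℤ),
          ?_, ?_, ?_, ?_, ?_⟩
  ----------------------------------------------------------------
  -- injectivity of a
  ----------------------------------------------------------------
  · intro i j hij
    dsimp only at hij
    have hpar : ∀ s : ℕ, (2 * s + 1) % 2 = 1 := fun s => by omega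
    obtain ⟨hexp, hu⟩ := int_pow_odd_inj (huodd _ (hpar _)) (huodd _ (hpar _)) hij
    have hqi := hqlt i
    have hqj := hqlt j
    have hgen : ∀ s t : ℕ, s < J → t < J → J - 1 - s = J - 1 - t → s = t :=
      fun s t hs ht h => by omega
    have hq : (i:ℕ)/N = (j:ℕ)/N := hgen _ _ hqi hqj hexp
    have hv := huInj _ _ (hpar _) (hpar _) hu
    have hgen2 : ∀ s t : ℕ, 2 * s + 1 = 2 * t + 1 → s = t := fun s t h => by omega
    have hl : (i:ℕ) % N = (j:ℕ) % N := hgen2 _ _ hv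
    have h1 := Nat.div_add_mod (i:ℕ) N
    have h2 := Nat.div_add_mod (j:ℕ) N
    have : (i:ℕ) = (j:ℕ) := by
      rw [← h1, ← h2, hq, hl]
    exact Fin.ext this
  ----------------------------------------------------------------
  -- injectivity of b
  ----------------------------------------------------------------
  · intro i j hij
    dsimp only at hij
    have hpar : ∀ s : ℕ, (((2 * s + 1 : ℕ) : ℤ)).natAbs % 2 = 1 := fun s => by
      rw [Int.natAbs_natCast]; omega
    obtain ⟨hexp, hv⟩ := int_pow_odd_inj (hpar ((i:ℕ) % N)) (hpar ((j:ℕ) % N)) hij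
    have hqi := hqlt i
    have hqj := hqlt j
    have hgen : ∀ s t : ℕ, J + 3 + s = J + 3 + t → s = t := fun s t h => by omega
    have hq : (i:ℕ)/N = (j:ℕ)/N := hgen _ _ hexp
    have hv' : (2 * ((i:ℕ) % N) + 1 : ℕ) = (2 * ((j:ℕ) % N) + 1 : ℕ) := by exact_mod_cast hv
    have hgen2 : ∀ s t : ℕ, 2 * s + 1 = 2 * t + 1 → s = t := fun s t h => by omega
    have hl : (i:ℕ) % N = (j:ℕ) % N := hgen2 _ _ hv'
    have h1 := Nat.div_add_mod (i:ℕ) N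
    have h2 := Nat.div_add_mod (j:ℕ) N
    have : (i:ℕ) = (j:ℕ) := by rw [← h1, ← h2, hq, hl]
    exact Fin.ext this
  ----------------------------------------------------------------
  -- a and b entries are distinct
  ----------------------------------------------------------------
  · intro i j heq
    dsimp only at heq
    have hpar : ∀ s : ℕ, (2 * s + 1) % 2 = 1 := fun s => by omega
    have hpar2 : ∀ s : ℕ, (((2 * s + 1 : ℕ) : ℤ)).natAbs % 2 = 1 := fun s => by
      rw [Int.natAbs_natCast]; omega
    obtain ⟨hexp, _⟩ := int_pow_odd_inj (huodd _ (hpar _)) (hpar2 _) heq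
    have hgen : ∀ s t : ℕ, J - 1 - s = J + 3 + t → False := fun s t h => by omega
    exact hgen _ _ hexp
  ----------------------------------------------------------------
  -- few sums
  ----------------------------------------------------------------
  · set K := Q / (256 * J) + N / (8 * J) + 2 with hKdef
    set cover : Finset ℤ := (Finset.range J).biUnion
      (fun q => (Finset.range K).image
        (fun m => ((2 ^ (J - 1 - q) * (p q * m) : ℕ) : ℤ))) with hcoverdef
    have hsub : Finset.image
        (fun i : Fin n => (2 ^ (J - 1 - (i:ℕ)/N) * u (2*((i:ℕ)%N)+1))
          + (2 ^ (J + 3 + (i:ℕ)/N) * ((2*((i:ℕ)%N)+1 : ℕ) : ℤ))) Finset.univ ⊆ cover := by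
      intro y hy
      obtain ⟨i, _, rfl⟩ := Finset.mem_image.mp hy
      obtain ⟨q, hq, hiq⟩ : ∃ q, q < J ∧ (i:ℕ)/N = q := ⟨_, hqlt i, rfl⟩
      obtain ⟨l, hl, hil⟩ : ∃ l, l < N ∧ (i:ℕ)%N = l := ⟨_, Nat.mod_lt _ hN0, rfl⟩
      rw [hiq, hil]
      set v := 2*l+1 with hvdef
      set e := 4^(q+2) - 4 with hedef
      have h4le : (4:ℕ) ≤ 4^(q+2) := by
        calc (4:ℕ) = 4 ^ 1 := by norm_num
        _ ≤ 4 ^ (q + 2) := Nat.pow_le_pow_right (by norm_num) (by omega)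
      have h16le : (16:ℕ) ≤ 4^(q+2) := by
        calc (16:ℕ) = 4 ^ 2 := by norm_num
        _ ≤ 4 ^ (q + 2) := Nat.pow_le_pow_right (by norm_num) (by omega)
      have he12 : 12 ≤ e := by omega
      set φ := x v + e * v with hφdef
      have hpφ : p q ∣ φ := by
        have h1 : x v ≡ A * v [MOD p q] := hxA v q hq
        have h2 : φ ≡ A * v + e * v [MOD p q] := h1.add_right (e*v)
        have h3 : A * v + e * v = (A + e) * v := by ring
        have h4 : p q ∣ (A + e) * v := (hAp q hq).mul_right v
        have h5 : (A + e) * v ≡ 0 [MOD p q] := (Nat.modEq_zero_iff_dvd).mpr h4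
        rw [h3] at h2
        exact (Nat.modEq_zero_iff_dvd).mp (h2.trans h5)
      set m := φ / p q with hmdef
      have hφm : φ = p q * m := (Nat.mul_div_cancel' hpφ).symm
      have hppos : 0 < p q := (pprime q).pos
      -- m < K
      have hmK : m < K := by
        have hφle : φ ≤ Q + 2*e*N := by
          have hxv := hxlt v
          have hv2N : v ≤ 2*N := by omega
          have h1 : e * v ≤ e * (2*N) := Nat.mul_le_mul_left e hv2N
          have h2 : e * (2*N) = 2*e*N := by ring
          omega
        have hm1 : m ≤ (Q + 2*e*N) / p q := Nat.div_le_div_right hφle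
        have hm2 : (Q + 2*e*N)/(p q) ≤ Q/(p q) + (2*e*N)/(p q) + 1 :=
          nat_add_div_le _ _ _ hppos
        have hm3 : Q / p q ≤ Q / (256*J) := by
          apply Nat.div_le_div_left _ (by positivity)
          exact le_of_lt (lt_of_le_of_lt (h256J q) (plb q))
        have hm4 : (2*e*N)/(p q) ≤ N/(8*J) := by
          have hle : (2*e)*(8*J) ≤ p q := by
            have h1 : (2*e)*(8*J) = (16*e)*J := by ring
            have h2 : 16*e ≤ 4^(q+4) := by
              have he4 : e ≤ 4^(q+2) := by rw [hedef]; omega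
              have h164 : (16:ℕ)*4^(q+2) = 4^(q+4) := by ring
              calc 16*e ≤ 16*4^(q+2) := Nat.mul_le_mul_left 16 he4
              _ = 4^(q+4) := h164
            have h3 : (16*e)*J ≤ 4^(q+4)*J := Nat.mul_le_mul_right J h2
            have := plb q
            omega
          have hpos : 0 < (2*e)*(8*J) := by positivity
          have hs1 : (2*e*N)/(p q) ≤ (2*e*N)/((2*e)*(8*J)) :=
            Nat.div_le_div_left hle hpos
          have hs2 : (2*e*N) = (2*e)*N := by ring
          have hs3 : ((2*e)*N)/((2*e)*(8*J)) = N/(8*J) :=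
            Nat.mul_div_mul_left N (8*J) (by omega)
          calc (2*e*N)/(p q) ≤ (2*e*N)/((2*e)*(8*J)) := hs1
          _ = ((2*e)*N)/((2*e)*(8*J)) := by rw [hs2]
          _ = N/(8*J) := hs3
        have : m ≤ Q/(256*J) + N/(8*J) + 1 := by omega
        omega
      -- the sum equals the covered value
      have hexp : (2:ℤ) ^ (J + 3 + q) = 2 ^ (J - 1 - q) * 4 ^ (q + 2) := by
        have h1 : (4:ℤ) ^ (q+2) = 2 ^ (2*q+4) := by
          rw [show (4:ℤ) = 2^2 by norm_num, ← pow_mul]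
          ring_nf
        rw [h1, ← pow_add]
        congr 1
        omega
      have hsum_eq : (2 ^ (J - 1 - q) * u v) + (2 ^ (J + 3 + q) * ((v : ℕ) : ℤ))
          = ((2 ^ (J - 1 - q) * (p q * m) : ℕ) : ℤ) := by
        rw [← hφm, hφdef, hedef]
        simp only [hudef]
        push_cast [Nat.cast_sub h4le]
        rw [hexp]
        ring
      rw [hsum_eq]
      apply Finset.mem_biUnion.mpr
      exact ⟨q, Finset.mem_range.mpr hq,
        Finset.mem_image.mpr ⟨m, Finset.mem_range.mpr hmK, rfl⟩⟩
    have hcardS : (Finset.image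
        (fun i : Fin n => (2 ^ (J - 1 - (i:ℕ)/N) * u (2*((i:ℕ)%N)+1))
          + (2 ^ (J + 3 + (i:ℕ)/N) * ((2*((i:ℕ)%N)+1 : ℕ) : ℤ))) Finset.univ).card
        ≤ J * K := by
      calc (Finset.image _ Finset.univ).card ≤ cover.card := Finset.card_le_card hsub
      _ ≤ ∑ q ∈ Finset.range J, ((Finset.range K).image
            (fun m => ((2 ^ (J - 1 - q) * (p q * m) : ℕ) : ℤ))).card :=
          Finset.card_biUnion_le
      _ ≤ ∑ _q ∈ Finset.range J, K := by
          apply Finset.sum_le_sum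
          intro q _
          calc ((Finset.range K).image _).card ≤ (Finset.range K).card :=
              Finset.card_image_le
          _ = K := Finset.card_range K
      _ = J * K := by rw [Finset.sum_const, Finset.card_range, smul_eq_mul]
    -- real bound
    have hKr : (K:ℝ) ≤ (Q:ℝ)/(256*J) + (N:ℝ)/(8*J) + 2 := by
      rw [hKdef]
      push_cast
      have c1 : ((Q / (256 * J) : ℕ) : ℝ) ≤ (Q:ℝ)/((256*J : ℕ):ℝ) := Nat.cast_div_le
      have c2 : ((N / (8 * J) : ℕ) : ℝ) ≤ (N:ℝ)/((8*J : ℕ):ℝ) := Nat.cast_div_le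
      push_cast at c1 c2
      linarith
    have hcS : ((Finset.image
        (fun i : Fin n => (2 ^ (J - 1 - (i:ℕ)/N) * u (2*((i:ℕ)%N)+1))
          + (2 ^ (J + 3 + (i:ℕ)/N) * ((2*((i:ℕ)%N)+1 : ℕ) : ℤ))) Finset.univ).card : ℝ)
        ≤ (J:ℝ) * K := by
      have := hcardS
      exact_mod_cast Nat.cast_le.mpr this
    rw [le_div_iff₀ hG0]
    have hJK2 : (J:ℝ) * (K:ℝ) ≤ (Q:ℝ)/256 + (N:ℝ)/8 + 2*J := by
      have h1 : (J:ℝ) * (K:ℝ) ≤ (J:ℝ) * ((Q:ℝ)/(256*J) + (N:ℝ)/(8*J) + 2) :=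
        mul_le_mul_of_nonneg_left hKr (le_of_lt hJR)
      have h2 : (J:ℝ) * ((Q:ℝ)/(256*J) + (N:ℝ)/(8*J) + 2)
          = (Q:ℝ)/256 + (N:ℝ)/8 + 2*J := by
        field_simp
      linarith
    have tQ : (Q:ℝ)*G ≤ (N:ℝ)*G := mul_le_mul_of_nonneg_right hQNR (le_of_lt hG0)
    have tJ : (J:ℝ)*G ≤ (J:ℝ)*(J:ℝ) :=
      mul_le_mul_of_nonneg_left hGJ (Nat.cast_nonneg J)
    have hle1 : ((Finset.image
        (fun i : Fin n => (2 ^ (J - 1 - (i:ℕ)/N) * u (2*((i:ℕ)%N)+1))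
          + (2 ^ (J + 3 + (i:ℕ)/N) * ((2*((i:ℕ)%N)+1 : ℕ) : ℤ))) Finset.univ).card : ℝ) * G
        ≤ ((Q:ℝ)/256 + (N:ℝ)/8 + 2*J) * G :=
      mul_le_mul_of_nonneg_right (hcS.trans hJK2) (le_of_lt hG0)
    have hle2 : ((Q:ℝ)/256 + (N:ℝ)/8 + 2*J) * G ≤ (n:ℝ) := by
      have hexpand : ((Q:ℝ)/256 + (N:ℝ)/8 + 2*J) * G
          = (Q:ℝ)*G/256 + (N:ℝ)*G/8 + 2*((J:ℝ)*G) := by ring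
      rw [hexpand]
      nlinarith
    linarith
  ----------------------------------------------------------------
  -- few products
  ----------------------------------------------------------------
  · set cover : Finset ℤ := (Finset.range N).image
      (fun l => (2:ℤ) ^ (2*J+2) * (u (2*l+1) * ((2*l+1 : ℕ) : ℤ))) with hcoverdef
    have hsub : Finset.image
        (fun i : Fin n => (2 ^ (J - 1 - (i:ℕ)/N) * u (2*((i:ℕ)%N)+1))
          * (2 ^ (J + 3 + (i:ℕ)/N) * ((2*((i:ℕ)%N)+1 : ℕ) : ℤ))) Finset.univ ⊆ cover := by
      intro y hy
      obtain ⟨i, _, rfl⟩ := Finset.mem_image.mp hy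
      obtain ⟨q, hq, hiq⟩ : ∃ q, q < J ∧ (i:ℕ)/N = q := ⟨_, hqlt i, rfl⟩
      obtain ⟨l, hl, hil⟩ : ∃ l, l < N ∧ (i:ℕ)%N = l := ⟨_, Nat.mod_lt _ hN0, rfl⟩
      rw [hiq, hil]
      have hprod_eq : (2 ^ (J - 1 - q) * u (2*l+1))
          * (2 ^ (J + 3 + q) * ((2*l+1 : ℕ) : ℤ))
          = (2:ℤ) ^ (2*J+2) * (u (2*l+1) * ((2*l+1 : ℕ) : ℤ)) := by
        have hexp : (2:ℤ) ^ (J - 1 - q) * 2 ^ (J + 3 + q) = 2 ^ (2*J+2) := by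
          rw [← pow_add]
          congr 1
          omega
        calc (2 ^ (J - 1 - q) * u (2*l+1)) * (2 ^ (J + 3 + q) * ((2*l+1 : ℕ) : ℤ))
            = (2 ^ (J - 1 - q) * 2 ^ (J + 3 + q)) * (u (2*l+1) * ((2*l+1 : ℕ) : ℤ)) := by
              ring
        _ = (2:ℤ) ^ (2*J+2) * (u (2*l+1) * ((2*l+1 : ℕ) : ℤ)) := by rw [hexp]
      rw [hprod_eq]
      exact Finset.mem_image.mpr ⟨l, Finset.mem_range.mpr hl, rfl⟩
    have hcardP : (Finset.image
        (fun i : Fin n => (2 ^ (J - 1 - (i:ℕ)/N) * u (2*((i:ℕ)%N)+1))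
          * (2 ^ (J + 3 + (i:ℕ)/N) * ((2*((i:ℕ)%N)+1 : ℕ) : ℤ))) Finset.univ).card ≤ N := by
      calc (Finset.image _ Finset.univ).card ≤ cover.card := Finset.card_le_card hsub
      _ ≤ (Finset.range N).card := Finset.card_image_le
      _ = N := Finset.card_range N
    rw [le_div_iff₀ hG0]
    have hcP : ((Finset.image
        (fun i : Fin n => (2 ^ (J - 1 - (i:ℕ)/N) * u (2*((i:ℕ)%N)+1))
          * (2 ^ (J + 3 + (i:ℕ)/N) * ((2*((i:ℕ)%N)+1 : ℕ) : ℤ))) Finset.univ).card : ℝ)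
        ≤ (N:ℝ) := by exact_mod_cast hcardP
    calc ((Finset.image
        (fun i : Fin n => (2 ^ (J - 1 - (i:ℕ)/N) * u (2*((i:ℕ)%N)+1))
          * (2 ^ (J + 3 + (i:ℕ)/N) * ((2*((i:ℕ)%N)+1 : ℕ) : ℤ))) Finset.univ).card : ℝ) * G
        ≤ (N:ℝ) * G := mul_le_mul_of_nonneg_right hcP (le_of_lt hG0)
    _ ≤ (n:ℝ) := hNG

/-- There exist `ε > 0` and `n₀` such that for every `n ≥ n₀` there are
`n` pairs of integers, with pairwise distinct entries, having at most `n/(log n)^ε`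
distinct sums and at most `n/(log n)^ε` distinct products. -/
theorem matching_sublinear_upper_bound :
    ∃ (ε : ℝ) (n₀ : ℕ), 0 < ε ∧ ∀ n : ℕ, n₀ ≤ n →
      ∃ a b : Fin n → ℤ,
        Function.Injective a ∧ Function.Injective b ∧ (∀ i j, a i ≠ b j) ∧
        ((Finset.image (fun i => a i + b i) Finset.univ).card : ℝ)
          ≤ (n : ℝ) / Real.log n ^ ε ∧
        ((Finset.image (fun i => a i * b i) Finset.univ).card : ℝ)
          ≤ (n : ℝ) / Real.log n ^ ε := by
  exact ⟨1/8, 2 ^ 20000, by norm_num, fun n hn => key_construction n hn⟩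
end

section
/- For every n ≥ 1 there exist n pairs of real numbers (a_i, b_i), i = 1,…,n, whose 2n entries are pairwise distinct, such that |{a_i + b_i : 1 ≤ i ≤ n}| ≤ ⌈√n⌉ and |{a_i·b_i : 1 ≤ i ≤ n}| ≤ ⌈√n⌉. (Together with the lower bound |S|·|P| ≥ n for the sum-set S and product-set P of any such real labeling, this shows the minimal possible value of max{|S|, |P|} over the reals is exactly ⌈√n⌉.) -/
open Real Finset

/-- The larger root of `x^2 - B^(q+1) x - (r+1)`. -/
noncomputable def matchA (B : ℝ) (q r : ℕ) : ℝ :=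
  B ^ (q + 1) / 2 + Real.sqrt ((B ^ (q + 1)) ^ 2 / 4 + (r + 1))

/-- The smaller root of `x^2 - B^(q+1) x - (r+1)`. -/
noncomputable def matchB (B : ℝ) (q r : ℕ) : ℝ :=
  B ^ (q + 1) / 2 - Real.sqrt ((B ^ (q + 1)) ^ 2 / 4 + (r + 1))

lemma match_disc_nonneg (B : ℝ) (hB : 0 ≤ B) (q r : ℕ) :
    0 ≤ (B ^ (q + 1)) ^ 2 / 4 + ((r : ℝ) + 1) := by positivity

lemma match_sqrt_lb (B : ℝ) (hB : 0 ≤ B) (q r : ℕ) :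
    B ^ (q + 1) / 2 < Real.sqrt ((B ^ (q + 1)) ^ 2 / 4 + (r + 1)) := by
  rw [Real.lt_sqrt (by positivity)]
  nlinarith [Nat.cast_nonneg (α := ℝ) r]

lemma match_sqrt_ub (B : ℝ) (hB : 0 ≤ B) (q r : ℕ) :
    Real.sqrt ((B ^ (q + 1)) ^ 2 / 4 + (r + 1)) ≤ B ^ (q + 1) / 2 + ((r : ℝ) + 1) := by
  have h1 : ((B ^ (q + 1)) ^ 2 / 4 + ((r:ℝ) + 1)) ≤ (B ^ (q + 1) / 2 + ((r : ℝ) + 1)) ^ 2 := by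
    nlinarith [Nat.cast_nonneg (α := ℝ) r, pow_nonneg hB (q+1)]
  calc Real.sqrt ((B ^ (q + 1)) ^ 2 / 4 + (r + 1))
      ≤ Real.sqrt ((B ^ (q + 1) / 2 + ((r : ℝ) + 1)) ^ 2) := Real.sqrt_le_sqrt h1
    _ = B ^ (q + 1) / 2 + ((r : ℝ) + 1) := Real.sqrt_sq (by positivity)

lemma matchA_gt (B : ℝ) (hB : 0 ≤ B) (q r : ℕ) : B ^ (q + 1) < matchA B q r := by
  have := match_sqrt_lb B hB q r
  unfold matchA; linarith

lemma matchA_pos (B : ℝ) (hB : 1 ≤ B) (q r : ℕ) : 0 < matchA B q r := by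
  have h1 : (1:ℝ) ≤ B ^ (q+1) := one_le_pow₀ hB
  have := matchA_gt B (by linarith) q r
  linarith

lemma matchA_le (B : ℝ) (hB : 0 ≤ B) (q r : ℕ) :
    matchA B q r ≤ B ^ (q + 1) + ((r : ℝ) + 1) := by
  have := match_sqrt_ub B hB q r
  unfold matchA; linarith

lemma matchB_neg (B : ℝ) (hB : 0 ≤ B) (q r : ℕ) : matchB B q r < 0 := by
  have := match_sqrt_lb B hB q r
  unfold matchB; linarith

lemma match_sum (B : ℝ) (q r : ℕ) : matchA B q r + matchB B q r = B ^ (q + 1) := by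
  unfold matchA matchB; ring

lemma match_prod (B : ℝ) (hB : 0 ≤ B) (q r : ℕ) :
    matchA B q r * matchB B q r = -((r : ℝ) + 1) := by
  unfold matchA matchB
  have h := Real.sq_sqrt (match_disc_nonneg B hB q r)
  nlinarith [h]

lemma matchA_mono_r (B : ℝ) (hB : 0 ≤ B) (q : ℕ) {r r' : ℕ} (h : r < r') :
    matchA B q r < matchA B q r' := by
  unfold matchA
  have : ((r:ℝ) + 1) < ((r':ℝ) + 1) := by exact_mod_cast by omega
  have := Real.sqrt_lt_sqrt (match_disc_nonneg B hB q r) (by linarith :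
    (B ^ (q + 1)) ^ 2 / 4 + ((r:ℝ) + 1) < (B ^ (q + 1)) ^ 2 / 4 + ((r':ℝ) + 1))
  linarith

lemma matchB_anti_r (B : ℝ) (hB : 0 ≤ B) (q : ℕ) {r r' : ℕ} (h : r < r') :
    matchB B q r' < matchB B q r := by
  unfold matchB
  have : ((r:ℝ) + 1) < ((r':ℝ) + 1) := by exact_mod_cast by omega
  have := Real.sqrt_lt_sqrt (match_disc_nonneg B hB q r) (by linarith :
    (B ^ (q + 1)) ^ 2 / 4 + ((r:ℝ) + 1) < (B ^ (q + 1)) ^ 2 / 4 + ((r':ℝ) + 1))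
  linarith

/-- Cross-column monotonicity for `matchA`, with `B = K^2 + 2`. -/
lemma matchA_mono_q (K : ℕ) (hK : 1 ≤ K) {q q' r r' : ℕ} (hq : q < q')
    (hr : r < K) (hr' : r' < K) :
    matchA ((K:ℝ)^2 + 2) q r < matchA ((K:ℝ)^2 + 2) q' r' := by
  set B : ℝ := (K:ℝ)^2 + 2 with hBdef
  have hK1 : (1:ℝ) ≤ (K:ℝ) := by exact_mod_cast hK
  have hB0 : (0:ℝ) ≤ B := by positivity
  have hB1 : (1:ℝ) ≤ B := by nlinarith
  have hsq : B ^ (q+1) * B ≤ B ^ (q'+1) := by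
    calc B ^ (q+1) * B = B ^ (q+2) := by ring
      _ ≤ B ^ (q'+1) := pow_le_pow_right₀ hB1 (by omega)
  have h1 : matchA B q r ≤ B ^ (q+1) + ((r:ℝ) + 1) := matchA_le B hB0 q r
  have h2 : B ^ (q'+1) < matchA B q' r' := matchA_gt B hB0 q' r'
  have hrK : (r:ℝ) + 1 ≤ (K:ℝ) := by exact_mod_cast hr
  have hpow1 : (1:ℝ) ≤ B ^ (q+1) := one_le_pow₀ hB1
  -- B^(q+1) + K ≤ B^(q+1) * B
  nlinarith [hpow1, hsq]

/-- Cross-column monotonicity for `matchB`, with `B = K^2 + 2`. -/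
lemma matchB_anti_q (K : ℕ) (hK : 1 ≤ K) {q q' r r' : ℕ} (hq : q < q')
    (hr : r < K) (hr' : r' < K) :
    matchB ((K:ℝ)^2 + 2) q r < matchB ((K:ℝ)^2 + 2) q' r' := by
  set B : ℝ := (K:ℝ)^2 + 2 with hBdef
  have hK1 : (1:ℝ) ≤ (K:ℝ) := by exact_mod_cast hK
  have hB0 : (0:ℝ) ≤ B := by positivity
  have hB1 : (1:ℝ) ≤ B := by nlinarith
  have ha : 0 < matchA B q r := matchA_pos B hB1 q r
  have ha' : 0 < matchA B q' r' := matchA_pos B hB1 q' r'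
  have hp : matchA B q r * matchB B q r = -((r : ℝ) + 1) := match_prod B hB0 q r
  have hp' : matchA B q' r' * matchB B q' r' = -((r' : ℝ) + 1) := match_prod B hB0 q' r'
  have hb : matchB B q r = -((r:ℝ)+1) / matchA B q r := by
    field_simp at hp ⊢; linarith
  have hb' : matchB B q' r' = -((r':ℝ)+1) / matchA B q' r' := by
    field_simp at hp' ⊢; linarith
  rw [hb, hb', div_lt_div_iff₀ ha ha', neg_mul, neg_mul, neg_lt_neg_iff]
  -- goal : (r'+1) * matchA B q r < (r+1) * matchA B q' r'
  have hrK : (r':ℝ) + 1 ≤ (K:ℝ) := by exact_mod_cast hr'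
  have h1 : matchA B q r ≤ B ^ (q+1) + ((r:ℝ) + 1) := matchA_le B hB0 q r
  have hrK2 : (r:ℝ) + 1 ≤ (K:ℝ) := by exact_mod_cast hr
  have h2 : B ^ (q'+1) < matchA B q' r' := matchA_gt B hB0 q' r'
  have hsq : B ^ (q+1) * B ≤ B ^ (q'+1) := by
    calc B ^ (q+1) * B = B ^ (q+2) := by ring
      _ ≤ B ^ (q'+1) := pow_le_pow_right₀ hB1 (by omega)
  have hpow1 : (1:ℝ) ≤ B ^ (q+1) := one_le_pow₀ hB1
  have hr1 : (1:ℝ) ≤ (r:ℝ) + 1 := by have := Nat.cast_nonneg (α := ℝ) r; linarith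
  have hpowB : B ≤ B ^ (q+1) := le_self_pow₀ hB1 (by omega)
  have hQ : (0:ℝ) < (K:ℝ)^2 - K + 2 := by nlinarith [sq_nonneg ((K:ℝ) - 1)]
  have key : (K:ℝ) * (B ^ (q+1) + (K:ℝ)) < B ^ (q+1) * B := by
    nlinarith [mul_le_mul_of_nonneg_right hpowB hQ.le, hK1, sq_nonneg ((K:ℝ) - 1)]
  have l1 : ((r':ℝ)+1) * matchA B q r ≤ (K:ℝ) * (B ^ (q+1) + (K:ℝ)) := by
    nlinarith [ha.le]
  have l2 : B ^ (q'+1) ≤ ((r:ℝ)+1) * matchA B q' r' := by nlinarith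
  linarith

/-- For every `n ≥ 1` there exist `n` pairs of real numbers, with
pairwise distinct entries, having at most `⌈√n⌉` distinct sums and at most `⌈√n⌉`
distinct products. -/
theorem real_matching_sqrt_upper_bound (n : ℕ) (hn : 1 ≤ n) :
    ∃ a b : Fin n → ℝ,
      Function.Injective a ∧ Function.Injective b ∧ (∀ i j, a i ≠ b j) ∧
      (Finset.image (fun i => a i + b i) Finset.univ).card ≤ ⌈Real.sqrt n⌉₊ ∧
      (Finset.image (fun i => a i * b i) Finset.univ).card ≤ ⌈Real.sqrt n⌉₊ := by
  set K : ℕ := ⌈Real.sqrt n⌉₊ with hKdef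
  have hn0 : (0:ℝ) < Real.sqrt n := Real.sqrt_pos.mpr (by exact_mod_cast hn)
  have hK : 1 ≤ K := Nat.one_le_ceil_iff.mpr hn0
  have hnK : n ≤ K ^ 2 := by
    have h1 : Real.sqrt n ≤ (K : ℝ) := Nat.le_ceil _
    have h2 : (n:ℝ) ≤ (K:ℝ) ^ 2 := by
      have := Real.sq_sqrt (by positivity : (0:ℝ) ≤ (n:ℝ))
      nlinarith
    exact_mod_cast h2
  set B : ℝ := (K:ℝ)^2 + 2 with hBdef
  have hK1 : (1:ℝ) ≤ (K:ℝ) := by exact_mod_cast hK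
  have hB0 : (0:ℝ) ≤ B := by positivity
  have hB1 : (1:ℝ) ≤ B := by nlinarith
  have hdiv : ∀ i : Fin n, (i : ℕ) / K < K := by
    intro i
    have : (i : ℕ) < K * K := by have := i.2; nlinarith [i.2, hnK, sq K]
    exact Nat.div_lt_of_lt_mul (by omega)
  have hmod : ∀ i : Fin n, (i : ℕ) % K < K := fun i => Nat.mod_lt _ (by omega)
  refine ⟨fun i => matchA B ((i:ℕ)/K) ((i:ℕ)%K), fun i => matchB B ((i:ℕ)/K) ((i:ℕ)%K),
    ?_, ?_, ?_, ?_, ?_⟩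
  · -- injective a
    intro i j hij
    simp only at hij
    have hi := Nat.div_add_mod (i:ℕ) K
    have hj := Nat.div_add_mod (j:ℕ) K
    have hq : (i:ℕ)/K = (j:ℕ)/K := by
      rcases lt_trichotomy ((i:ℕ)/K) ((j:ℕ)/K) with h | h | h
      · exact absurd hij (ne_of_lt (matchA_mono_q K hK h (hmod i) (hmod j)))
      · exact h
      · exact absurd hij (ne_of_gt (matchA_mono_q K hK h (hmod j) (hmod i)))
    rw [hq] at hij hi
    have hr : (i:ℕ) % K = (j:ℕ) % K := by
      rcases lt_trichotomy ((i:ℕ) % K) ((j:ℕ) % K) with h | h | h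
      · exact absurd hij (ne_of_lt (matchA_mono_r B hB0 _ h))
      · exact h
      · exact absurd hij (ne_of_gt (matchA_mono_r B hB0 _ h))
    exact Fin.ext (by omega)
  · -- injective b
    intro i j hij
    simp only at hij
    have hi := Nat.div_add_mod (i:ℕ) K
    have hj := Nat.div_add_mod (j:ℕ) K
    have hq : (i:ℕ)/K = (j:ℕ)/K := by
      rcases lt_trichotomy ((i:ℕ)/K) ((j:ℕ)/K) with h | h | h
      · exact absurd hij (ne_of_lt (matchB_anti_q K hK h (hmod i) (hmod j)))
      · exact h
      · exact absurd hij (ne_of_gt (matchB_anti_q K hK h (hmod j) (hmod i)))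
    rw [hq] at hij hi
    have hr : (i:ℕ) % K = (j:ℕ) % K := by
      rcases lt_trichotomy ((i:ℕ) % K) ((j:ℕ) % K) with h | h | h
      · exact absurd hij (ne_of_gt (matchB_anti_r B hB0 _ h))
      · exact h
      · exact absurd hij (ne_of_lt (matchB_anti_r B hB0 _ h))
    exact Fin.ext (by omega)
  · -- a i ≠ b j
    intro i j
    have h1 : 0 < matchA B ((i:ℕ)/K) ((i:ℕ)%K) := matchA_pos B hB1 _ _
    have h2 : matchB B ((j:ℕ)/K) ((j:ℕ)%K) < 0 := matchB_neg B hB0 _ _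
    exact ne_of_gt (by linarith)
  · -- sums
    calc (Finset.image (fun i : Fin n => matchA B ((i:ℕ)/K) ((i:ℕ)%K)
          + matchB B ((i:ℕ)/K) ((i:ℕ)%K)) Finset.univ).card
        ≤ (Finset.image (fun q : ℕ => B ^ (q+1)) (Finset.range K)).card := by
          apply Finset.card_le_card
          intro x hx
          simp only [Finset.mem_image, Finset.mem_univ, true_and, Finset.mem_range] at hx ⊢
          obtain ⟨i, hi⟩ := hx
          exact ⟨(i:ℕ)/K, hdiv i, by rw [← hi, match_sum]⟩
      _ ≤ K := (Finset.card_image_le).trans (by simp)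
  · -- products
    calc (Finset.image (fun i : Fin n => matchA B ((i:ℕ)/K) ((i:ℕ)%K)
          * matchB B ((i:ℕ)/K) ((i:ℕ)%K)) Finset.univ).card
        ≤ (Finset.image (fun r : ℕ => -((r:ℝ)+1)) (Finset.range K)).card := by
          apply Finset.card_le_card
          intro x hx
          simp only [Finset.mem_image, Finset.mem_univ, true_and, Finset.mem_range] at hx ⊢
          obtain ⟨i, hi⟩ := hx
          exact ⟨(i:ℕ)%K, hmod i, by rw [← hi, match_prod B hB0]⟩
      _ ≤ K := (Finset.card_image_le).trans (by simp)
end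

section
/- Let k ≥ 2 and B ≥ 1 be integers such that for every set A ⊂ ℤ of k distinct integers, the set {x ∈ ℤ : A + x ⊆ Squares} has at most B elements. Then there exists c > 0 (depending only on k and B) such that for every n ≥ 1 and every n pairs of integers (a_i, b_i), i = 1,…,n, whose 2n entries are pairwise distinct, max{|{a_i + b_i : i ≤ n}|, |{a_i·b_i : i ≤ n}|} ≥ c·n^{k/(2k-1)}. -/
/-- `Squares` is the set of perfect squares in `ℤ`. -/
def Squares : Set ℤ := {m : ℤ | ∃ z : ℤ, m = z ^ 2}


private lemma aux_rpow_bound (k K n m : ℕ) (hk : 2 ≤ k) (hK1 : 1 ≤ K)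
    (hm : 1 ≤ m) (hmain : n ^ k ≤ K * m ^ (2 * k - 1)) :
    1 / (K : ℝ) * (n : ℝ) ^ ((k : ℝ) / (2 * (k : ℝ) - 1)) ≤ (m : ℝ) := by
  set e : ℕ := 2 * k - 1 with hedef
  have heR : ((e : ℕ) : ℝ) = 2 * (k : ℝ) - 1 := by
    rw [hedef]
    push_cast [Nat.cast_sub (by omega : 1 ≤ 2 * k)]
    ring
  have hkR : (2 : ℝ) ≤ (k : ℝ) := by exact_mod_cast hk
  have he0 : (0 : ℝ) < ((e : ℕ) : ℝ) := by rw [heR]; linarith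
  have hKR : (1 : ℝ) ≤ (K : ℝ) := by exact_mod_cast hK1
  have hKpos : (0 : ℝ) < (K : ℝ) := by linarith
  have hnR : (0 : ℝ) ≤ (n : ℝ) := by positivity
  have hmR : (0 : ℝ) ≤ (m : ℝ) := by positivity
  have hbase : ((n : ℝ)) ^ (k : ℕ) ≤ (K : ℝ) * (m : ℝ) ^ (e : ℕ) := by
    exact_mod_cast hmain
  rw [← heR]
  have h1 : (n : ℝ) ^ ((k : ℝ) / ((e : ℕ) : ℝ))
      = ((n : ℝ) ^ (k : ℕ)) ^ (((e : ℕ) : ℝ))⁻¹ := by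
    rw [← Real.rpow_natCast (n : ℝ) k, ← Real.rpow_mul hnR, div_eq_mul_inv]
  have h2 : ((n : ℝ) ^ (k : ℕ)) ^ (((e : ℕ) : ℝ))⁻¹
      ≤ ((K : ℝ) * (m : ℝ) ^ (e : ℕ)) ^ (((e : ℕ) : ℝ))⁻¹ :=
    Real.rpow_le_rpow (by positivity) hbase (by positivity)
  have h3 : ((K : ℝ) * (m : ℝ) ^ (e : ℕ)) ^ (((e : ℕ) : ℝ))⁻¹
      = (K : ℝ) ^ (((e : ℕ) : ℝ))⁻¹ * (((m : ℝ) ^ (e : ℕ)) ^ (((e : ℕ) : ℝ))⁻¹) :=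
    Real.mul_rpow (by positivity) (by positivity)
  have h4 : ((m : ℝ) ^ (e : ℕ)) ^ (((e : ℕ) : ℝ))⁻¹ = (m : ℝ) := by
    rw [← Real.rpow_natCast (m : ℝ) e, ← Real.rpow_mul hmR,
      mul_inv_cancel₀ (ne_of_gt he0), Real.rpow_one]
  have h5 : (K : ℝ) ^ (((e : ℕ) : ℝ))⁻¹ ≤ (K : ℝ) := by
    nth_rewrite 2 [← Real.rpow_one (K : ℝ)]
    apply Real.rpow_le_rpow_of_exponent_le hKR
    apply inv_le_one_of_one_le₀
    rw [heR]; linarith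
  have step : (n : ℝ) ^ ((k : ℝ) / ((e : ℕ) : ℝ)) ≤ (K : ℝ) * (m : ℝ) := by
    rw [h1]
    calc ((n : ℝ) ^ (k : ℕ)) ^ (((e : ℕ) : ℝ))⁻¹
        ≤ ((K : ℝ) * (m : ℝ) ^ (e : ℕ)) ^ (((e : ℕ) : ℝ))⁻¹ := h2
      _ = (K : ℝ) ^ (((e : ℕ) : ℝ))⁻¹ * (((m : ℝ) ^ (e : ℕ)) ^ (((e : ℕ) : ℝ))⁻¹) := h3
      _ = (K : ℝ) ^ (((e : ℕ) : ℝ))⁻¹ * (m : ℝ) := by rw [h4]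
      _ ≤ (K : ℝ) * (m : ℝ) := mul_le_mul_of_nonneg_right h5 hmR
  rw [div_mul_eq_mul_div, one_mul, div_le_iff₀ hKpos]
  calc (n : ℝ) ^ ((k : ℝ) / ((e : ℕ) : ℝ)) ≤ (K : ℝ) * (m : ℝ) := step
    _ = (m : ℝ) * (K : ℝ) := mul_comm _ _

/-- Let `k ≥ 2` and `B ≥ 1` be such that every set of `k` distinct
integers has at most `B` translates into the perfect squares.  Then there is `c > 0`
such that every `n` pairs of integers, with pairwise distinct entries, have at least
`c·n^(k/(2k-1))` distinct sums or that many distinct products. -/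
theorem finite_translates_implies_matching_lower_bound
    (k B : ℕ) (hk : 2 ≤ k) (hB : 1 ≤ B)
    (h : ∀ A : Finset ℤ, A.card = k →
      {x : ℤ | ∀ a ∈ A, a + x ∈ Squares}.Finite ∧
      {x : ℤ | ∀ a ∈ A, a + x ∈ Squares}.ncard ≤ B) :
    ∃ c : ℝ, 0 < c ∧ ∀ n : ℕ, 1 ≤ n → ∀ a b : Fin n → ℤ,
      Function.Injective a → Function.Injective b → (∀ i j, a i ≠ b j) →
      c * (n : ℝ) ^ ((k : ℝ) / (2 * k - 1)) ≤
        max ((Finset.image (fun i => a i + b i) Finset.univ).card : ℝ)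
          ((Finset.image (fun i => a i * b i) Finset.univ).card : ℝ) := by
  classical
  set K : ℕ := (2 * k) ^ k + 2 ^ (k + 1) * B with hKdef
  have hK1 : 1 ≤ K := by
    have : 0 < K := by positivity
    omega
  have hKR : (1 : ℝ) ≤ (K : ℝ) := by exact_mod_cast hK1
  refine ⟨1 / (K : ℝ), by positivity, ?_⟩
  intro n hn a b ha hb hab
  set S : Finset ℤ := Finset.image (fun i => a i + b i) Finset.univ with hSdef
  set P : Finset ℤ := Finset.image (fun i => a i * b i) Finset.univ with hPdef
  set N : ℤ → Finset ℤ :=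
    fun s => Finset.image (fun i => a i * b i)
      (Finset.univ.filter (fun i => a i + b i = s)) with hNdef
  -- key injectivity: sum and product determine the pair
  have key : ∀ i j : Fin n, a i + b i = a j + b j → a i * b i = a j * b j → i = j := by
    intro i j hs hp
    have hz : (a i - a j) * (a i - b j) = 0 := by linear_combination a i * hs - hp
    rcases mul_eq_zero.1 hz with h' | h'
    · exact ha (by linarith)
    · exact absurd (by linarith : a i = b j) (hab i j)
  have hNsub : ∀ s, N s ⊆ P := by
    intro s
    exact Finset.image_subset_image (Finset.filter_subset _ _)
  have hedge : ∀ s p, p ∈ N s → ∃ i, a i + b i = s ∧ a i * b i = p := by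
    intro s p hp
    obtain ⟨i, hi, hip⟩ := Finset.mem_image.1 hp
    exact ⟨i, (Finset.mem_filter.1 hi).2, hip⟩
  have hNcard : ∀ s, (N s).card
      = (Finset.univ.filter (fun i => a i + b i = s)).card := by
    intro s
    apply Finset.card_image_of_injOn
    intro i hi j hj hij
    have hi' := (Finset.mem_filter.1 hi).2
    have hj' := (Finset.mem_filter.1 hj).2
    exact key i j (hi'.trans hj'.symm) hij
  have hsum : ∑ s ∈ S, (N s).card = n := by
    have := Finset.card_eq_sum_card_fiberwise
      (f := fun i => a i + b i) (s := Finset.univ) (t := S)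
      (fun i _ => Finset.mem_image_of_mem _ (Finset.mem_univ i))
    simp only [Finset.card_univ, Fintype.card_fin] at this
    calc ∑ s ∈ S, (N s).card
        = ∑ s ∈ S, (Finset.univ.filter (fun i => a i + b i = s)).card :=
          Finset.sum_congr rfl fun s _ => hNcard s
      _ = n := this.symm
  -- any k distinct products have at most 2B common sums
  have hQbound : ∀ Q ∈ P.powersetCard k,
      (S.filter (fun s => Q ⊆ N s)).card ≤ 2 * B := by
    intro Q hQmem
    obtain ⟨hQP, hQcard⟩ := Finset.mem_powersetCard.1 hQmem
    set A : Finset ℤ := Q.image (fun p => -(4 * p)) with hAdef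
    have hAcard : A.card = k := by
      rw [Finset.card_image_of_injective _ (fun x y hxy => by omega)]
      exact hQcard
    obtain ⟨hfin, hle⟩ := h A hAcard
    set F := S.filter (fun s => Q ⊆ N s) with hFdef
    have hmaps : ∀ s ∈ F, s ^ 2 ∈ hfin.toFinset := by
      intro s hsF
      rw [Set.Finite.mem_toFinset]
      intro t htA
      obtain ⟨p, hpQ, rfl⟩ := Finset.mem_image.1 htA
      have hpN : p ∈ N s := (Finset.mem_filter.1 hsF).2 hpQ
      obtain ⟨i, hi1, hi2⟩ := hedge s p hpN
      exact ⟨a i - b i, by rw [← hi1, ← hi2]; ring⟩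
    have h2 : ∀ y ∈ F.image (fun s => s ^ 2),
        (F.filter (fun s => s ^ 2 = y)).card ≤ 2 := by
      intro y hy
      obtain ⟨r, hr, rfl⟩ := Finset.mem_image.1 hy
      refine le_trans (Finset.card_le_card
        (?_ : _ ⊆ ({r, -r} : Finset ℤ))) ?_
      · intro x hx
        have hx2 := (Finset.mem_filter.1 hx).2
        have hz : (x - r) * (x + r) = 0 := by linear_combination hx2
        rcases mul_eq_zero.1 hz with h' | h'
        · simp only [Finset.mem_insert, Finset.mem_singleton]
          left; linarith
        · simp only [Finset.mem_insert, Finset.mem_singleton]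
          right; linarith
      · exact (Finset.card_insert_le _ _).trans (by simp)
    have himg : (F.image (fun s => s ^ 2)).card ≤ B := by
      have hsub : F.image (fun s => s ^ 2) ⊆ hfin.toFinset := by
        intro y hy
        obtain ⟨r, hr, rfl⟩ := Finset.mem_image.1 hy
        exact hmaps r hr
      calc (F.image (fun s => s ^ 2)).card ≤ hfin.toFinset.card :=
            Finset.card_le_card hsub
        _ ≤ B := by rw [← Set.ncard_eq_toFinset_card _ hfin]; exact hle
    calc F.card ≤ 2 * (F.image (fun s => s ^ 2)).card :=
          Finset.card_le_mul_card_image F 2 h2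
      _ ≤ 2 * B := by omega
  -- double counting
  have hchoose : ∑ s ∈ S, ((N s).card.choose k) ≤ 2 * B * P.card.choose k := by
    have step1 : ∀ s, (N s).card.choose k
        = ((P.powersetCard k).filter (fun Q => Q ⊆ N s)).card := by
      intro s
      rw [← Finset.card_powersetCard]
      congr 1
      ext Q
      simp only [Finset.mem_powersetCard, Finset.mem_filter]
      constructor
      · rintro ⟨h1, h2⟩
        exact ⟨⟨h1.trans (hNsub s), h2⟩, h1⟩
      · rintro ⟨⟨_, h2⟩, h3⟩
        exact ⟨h3, h2⟩
    calc ∑ s ∈ S, ((N s).card.choose k)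
        = ∑ s ∈ S, ∑ Q ∈ P.powersetCard k, (if Q ⊆ N s then 1 else 0) := by
          refine Finset.sum_congr rfl fun s _ => ?_
          rw [step1 s, Finset.card_filter]
      _ = ∑ Q ∈ P.powersetCard k, ∑ s ∈ S, (if Q ⊆ N s then 1 else 0) :=
          Finset.sum_comm
      _ = ∑ Q ∈ P.powersetCard k, (S.filter (fun s => Q ⊆ N s)).card := by
          refine Finset.sum_congr rfl fun Q _ => ?_
          rw [Finset.card_filter]
      _ ≤ ∑ _Q ∈ P.powersetCard k, 2 * B :=
          Finset.sum_le_sum hQbound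
      _ = P.card.choose k * (2 * B) := by
          rw [Finset.sum_const, Finset.card_powersetCard, smul_eq_mul]
      _ = 2 * B * P.card.choose k := by ring
  -- notation
  set σ := S.card with hσdef
  set π := P.card with hπdef
  set m := max σ π with hmdef
  have hσ1 : 1 ≤ σ := by
    rw [hσdef]
    refine Finset.card_pos.2 ⟨a ⟨0, hn⟩ + b ⟨0, hn⟩, ?_⟩
    exact Finset.mem_image_of_mem _ (Finset.mem_univ _)
  have hm1 : 1 ≤ m := le_trans hσ1 (le_max_left _ _)
  have hσm : σ ≤ m := le_max_left _ _
  have hπm : π ≤ m := le_max_right _ _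
  -- the truncated degrees
  have hx : n ≤ (∑ s ∈ S, ((N s).card - k)) + k * σ := by
    calc n = ∑ s ∈ S, (N s).card := hsum.symm
      _ ≤ ∑ s ∈ S, (((N s).card - k) + k) :=
          Finset.sum_le_sum fun s _ => by omega
      _ = (∑ s ∈ S, ((N s).card - k)) + k * σ := by
          rw [Finset.sum_add_distrib, Finset.sum_const, smul_eq_mul, mul_comm]
  -- power mean inequality, via ℝ
  have hpow : (∑ s ∈ S, ((N s).card - k)) ^ k
      ≤ σ ^ (k - 1) * ∑ s ∈ S, ((N s).card - k) ^ k := by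
    have hk1 : k - 1 + 1 = k := by omega
    have hreal := pow_sum_div_card_le_sum_pow (s := S)
      (f := fun s => (((N s).card - k : ℕ) : ℝ)) (fun i _ => by positivity) (k - 1)
    rw [hk1] at hreal
    have hσpos : (0 : ℝ) < (σ : ℝ) ^ (k - 1) := by
      have : (0:ℝ) < (σ : ℝ) := by exact_mod_cast hσ1
      positivity
    rw [div_le_iff₀ hσpos] at hreal
    have : ((∑ s ∈ S, ((N s).card - k)) ^ k : ℝ)
        ≤ ((σ ^ (k - 1) * ∑ s ∈ S, ((N s).card - k) ^ k : ℕ) : ℝ) := by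
      push_cast
      calc ((∑ s ∈ S, (((N s).card - k : ℕ) : ℝ)) ^ k)
          ≤ (∑ s ∈ S, (((N s).card - k : ℕ) : ℝ) ^ k) * (σ : ℝ) ^ (k - 1) := hreal
        _ = (σ : ℝ) ^ (k - 1) * ∑ s ∈ S, (((N s).card - k : ℕ) : ℝ) ^ k := by ring
    exact_mod_cast this
  -- upper bound on sum of k-th powers
  have hup : ∑ s ∈ S, ((N s).card - k) ^ k ≤ 2 * B * π ^ k := by
    calc ∑ s ∈ S, ((N s).card - k) ^ k
        ≤ ∑ s ∈ S, (N s).card.descFactorial k :=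
          Finset.sum_le_sum fun s _ =>
            le_trans (Nat.pow_le_pow_left (by omega) k)
              (Nat.pow_sub_le_descFactorial _ k)
      _ = ∑ s ∈ S, Nat.factorial k * (N s).card.choose k := by
          refine Finset.sum_congr rfl fun s _ => ?_
          rw [Nat.descFactorial_eq_factorial_mul_choose]
      _ = Nat.factorial k * ∑ s ∈ S, (N s).card.choose k := (Finset.mul_sum _ _ _).symm
      _ ≤ Nat.factorial k * (2 * B * P.card.choose k) := Nat.mul_le_mul_left _ hchoose
      _ = 2 * B * (Nat.factorial k * P.card.choose k) := by ring
      _ = 2 * B * P.card.descFactorial k := by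
          rw [Nat.descFactorial_eq_factorial_mul_choose]
      _ ≤ 2 * B * π ^ k :=
          Nat.mul_le_mul_left _ (Nat.descFactorial_le_pow _ _)
  -- main counting inequality
  have hmain : n ^ k ≤ K * m ^ (2 * k - 1) := by
    rcases le_or_gt n (k * σ + k * σ) with hcase | hcase
    · have hcase' : n ≤ 2 * k * σ := by
        calc n ≤ k * σ + k * σ := hcase
          _ = 2 * k * σ := by ring
      calc n ^ k ≤ (2 * k * σ) ^ k := Nat.pow_le_pow_left hcase' k
        _ = (2 * k) ^ k * σ ^ k := mul_pow _ _ _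
        _ ≤ (2 * k) ^ k * m ^ k :=
            Nat.mul_le_mul_left _ (Nat.pow_le_pow_left hσm k)
        _ ≤ (2 * k) ^ k * m ^ (2 * k - 1) :=
            Nat.mul_le_mul_left _ (Nat.pow_le_pow_right hm1 (by omega))
        _ ≤ K * m ^ (2 * k - 1) :=
            Nat.mul_le_mul_right _ (Nat.le_add_right _ _)
    · have h1 : n ≤ 2 * (n - k * σ) := by omega
      have h2 : n - k * σ ≤ ∑ s ∈ S, ((N s).card - k) := by omega
      calc n ^ k ≤ (2 * (n - k * σ)) ^ k := Nat.pow_le_pow_left h1 k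
        _ = 2 ^ k * (n - k * σ) ^ k := mul_pow _ _ _
        _ ≤ 2 ^ k * (∑ s ∈ S, ((N s).card - k)) ^ k :=
            Nat.mul_le_mul_left _ (Nat.pow_le_pow_left h2 k)
        _ ≤ 2 ^ k * (σ ^ (k - 1) * ∑ s ∈ S, ((N s).card - k) ^ k) :=
            Nat.mul_le_mul_left _ hpow
        _ ≤ 2 ^ k * (σ ^ (k - 1) * (2 * B * π ^ k)) :=
            Nat.mul_le_mul_left _ (Nat.mul_le_mul_left _ hup)
        _ ≤ 2 ^ k * (m ^ (k - 1) * (2 * B * m ^ k)) := by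
            have := Nat.pow_le_pow_left hσm (k - 1)
            have := Nat.pow_le_pow_left hπm k
            exact Nat.mul_le_mul_left _
              (Nat.mul_le_mul (Nat.pow_le_pow_left hσm (k - 1))
                (Nat.mul_le_mul_left _ (Nat.pow_le_pow_left hπm k)))
        _ = 2 ^ (k + 1) * B * (m ^ (k - 1) * m ^ k) := by ring
        _ = 2 ^ (k + 1) * B * m ^ (2 * k - 1) := by
            have hexp : k - 1 + k = 2 * k - 1 := by omega
            rw [← pow_add, hexp]
        _ ≤ K * m ^ (2 * k - 1) :=
            Nat.mul_le_mul_right _ (Nat.le_add_left _ _)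
  -- pass to the reals
  have hconc := aux_rpow_bound k K n m hk hK1 hm1 hmain
  have hmaxcast : ((m : ℕ) : ℝ) = max ((σ : ℕ) : ℝ) ((π : ℕ) : ℝ) := by
    rw [hmdef]
    exact Nat.cast_max σ π
  rw [hmaxcast] at hconc
  exact hconc
end

section
/- For every integer k ≥ 2 there exists c > 0 such that the following holds for all integers n ≥ 1, t ≥ 1 and r ≥ 1. Suppose that for every set A of k distinct integers with A ⊆ {-4t²,…,4t²}, the set {x ∈ {-4t²,…,4t²} : A + x ⊆ Squares} has at most r elements. Then for every n pairs of integers (a_i, b_i), i = 1,…,n, whose 2n entries are pairwise distinct and satisfy |a_i| ≤ t and |b_i| ≤ t for all i, one has max{|{a_i + b_i : i ≤ n}|, |{a_i·b_i : i ≤ n}|} ≥ c·n^{k/(2k-1)}·r^{-1/(2k-1)}. -/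
open Finset

lemma roots_eq (x y u v : ℤ) (hs : x + y = u + v) (hp : x * y = u * v) : x = u ∨ x = v := by
  have h : (x - u) * (x - v) = 0 := by linear_combination x * hs - hp
  rcases mul_eq_zero.1 h with h | h
  · exact Or.inl (by linarith)
  · exact Or.inr (by linarith)

lemma pair_fiber_le_two {n : ℕ} (a b : Fin n → ℤ) (ha : Function.Injective a)
    (hab : ∀ i j, a i ≠ b j) (σ₀ p₀ : ℤ) :
    (Finset.univ.filter fun i => (a i + b i) ^ 2 = σ₀ ∧ a i * b i = p₀).card ≤ 2 := by
  have key : ∀ i j : Fin n, a i + b i = a j + b j → a i * b i = a j * b j → i = j := by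
    intro i j h1 h2
    rcases roots_eq (a i) (b i) (a j) (b j) h1 h2 with h | h
    · exact ha h
    · exact absurd h (hab i j)
  by_contra hlt
  push_neg at hlt
  rw [Finset.two_lt_card] at hlt
  obtain ⟨i, hi, j, hj, l, hl, hij, hil, hjl⟩ := hlt
  simp only [Finset.mem_filter, Finset.mem_univ, true_and] at hi hj hl
  have e12 : a i + b i = a j + b j ∨ a i + b i = -(a j + b j) := by
    have : ((a i + b i) - (a j + b j)) * ((a i + b i) + (a j + b j)) = 0 := by
      linear_combination hi.1 - hj.1
    rcases mul_eq_zero.1 this with h | h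
    · exact Or.inl (by linarith)
    · exact Or.inr (by linarith)
  have e13 : a i + b i = a l + b l ∨ a i + b i = -(a l + b l) := by
    have : ((a i + b i) - (a l + b l)) * ((a i + b i) + (a l + b l)) = 0 := by
      linear_combination hi.1 - hl.1
    rcases mul_eq_zero.1 this with h | h
    · exact Or.inl (by linarith)
    · exact Or.inr (by linarith)
  rcases e12 with h12 | h12
  · exact hij (key i j h12 (hi.2.trans hj.2.symm))
  rcases e13 with h13 | h13
  · exact hil (key i l h13 (hi.2.trans hl.2.symm))
  · have : a j + b j = a l + b l := by linarith
    exact hjl (key j l this (hj.2.trans hl.2.symm))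


lemma key_count {k n r : ℕ} (hk : 2 ≤ k) (hn : 1 ≤ n)
    (a b : Fin n → ℤ) (ha : Function.Injective a) (hab : ∀ i j, a i ≠ b j)
    (HR : ∀ v : Fin k → ℤ, Function.Injective v →
      ((Finset.image (fun i => a i * b i) Finset.univ).filter
        (fun p => ∀ j, ∃ i, (a i + b i) ^ 2 = v j ∧ a i * b i = p)).card ≤ r) :
    n ^ k ≤ (Finset.image (fun i => a i * b i) Finset.univ).card ^ (k - 1) *
      (2 ^ k * r * (Finset.image (fun i => (a i + b i) ^ 2) Finset.univ).card ^ k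
        + k ^ 2 * (2 * ((2 * (Finset.image (fun i => (a i + b i) ^ 2) Finset.univ).card) ^ (k - 2) * n))) := by
  classical
  set P : Finset ℤ := Finset.image (fun i => a i * b i) Finset.univ with hP
  set Sq : Finset ℤ := Finset.image (fun i => (a i + b i) ^ 2) Finset.univ with hSq
  have hk0 : 0 < k := by omega
  set j₀ : Fin k := ⟨0, hk0⟩ with hj₀
  set i₀ : Fin n := ⟨0, by omega⟩ with hi₀
  set fib : ℤ → Finset (Fin n) := fun p => Finset.univ.filter (fun i => a i * b i = p) with hfib
  set T : Finset (Fin k → Fin n) := P.biUnion (fun p => Fintype.piFinset (fun _ : Fin k => fib p)) with hT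
  have hsum_m : ∑ p ∈ P, (fib p).card = n := by
    have h := Finset.card_eq_sum_card_image (fun i => a i * b i) (Finset.univ : Finset (Fin n))
    simpa using h.symm
  have hPpos : 0 < P.card :=
    Finset.card_pos.2 ⟨a i₀ * b i₀, Finset.mem_image_of_mem _ (Finset.mem_univ i₀)⟩
  have hTcard : T.card = ∑ p ∈ P, (fib p).card ^ k := by
    rw [hT, Finset.card_biUnion]
    · exact Finset.sum_congr rfl fun p _ => by
        rw [Fintype.card_piFinset]; simp
    · intro p hp q hq hpq
      rw [Function.onFun, Finset.disjoint_left]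
      intro u hu1 hu2
      have h1 := Fintype.mem_piFinset.1 hu1 j₀
      have h2 := Fintype.mem_piFinset.1 hu2 j₀
      rw [hfib] at h1 h2
      simp only [Finset.mem_filter] at h1 h2
      exact hpq (h1.2.symm.trans h2.2)
  have hHolder : (n : ℝ) ^ k ≤ (P.card : ℝ) ^ (k - 1) * (T.card : ℝ) := by
    have h1 := pow_sum_le_card_mul_sum_pow (s := P)
      (f := fun p => ((fib p).card : ℝ)) (fun i _ => by positivity) (k - 1)
    rw [show k - 1 + 1 = k by omega] at h1
    have hsR : (∑ p ∈ P, ((fib p).card : ℝ)) = (n : ℝ) := by exact_mod_cast hsum_m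
    rw [hsR] at h1
    have hTR : (T.card : ℝ) = ∑ p ∈ P, ((fib p).card : ℝ) ^ k := by
      rw [hTcard]; push_cast; ring
    rw [hTR]
    linarith [h1]
  have hconst : ∀ u ∈ T, ∀ j, a (u j) * b (u j) = a (u j₀) * b (u j₀) := by
    intro u hu j
    rw [hT] at hu
    obtain ⟨p, hp, hup⟩ := Finset.mem_biUnion.1 hu
    have h1 := Fintype.mem_piFinset.1 hup j
    have h2 := Fintype.mem_piFinset.1 hup j₀
    rw [hfib] at h1 h2
    simp only [Finset.mem_filter] at h1 h2
    exact h1.2.trans h2.2.symm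
  have hpair2 : ∀ σ₀ p₀ : ℤ,
      ((Finset.univ : Finset (Fin n)).filter
        (fun i => (a i + b i) ^ 2 = σ₀ ∧ a i * b i = p₀)).card ≤ 2 :=
    pair_fiber_le_two a b ha hab
  set Tg : Finset (Fin k → Fin n) :=
    T.filter (fun u => Function.Injective (fun j : Fin k => (a (u j) + b (u j)) ^ 2)) with hTg
  set Tb : Finset (Fin k → Fin n) :=
    T.filter (fun u => ¬ Function.Injective (fun j : Fin k => (a (u j) + b (u j)) ^ 2)) with hTb
  have hsplit : T.card = Tg.card + Tb.card :=
    (Finset.card_filter_add_card_filter_not _).symm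
  have hgood : Tg.card ≤ 2 ^ k * r * Sq.card ^ k := by
    have step1 : Tg.card ≤ (2 ^ k * r) *
        ((Tg.image (fun u (j : Fin k) => (a (u j) + b (u j)) ^ 2)).card) := by
      apply Finset.card_le_mul_card_image
      intro v hv
      obtain ⟨u₀, hu₀, hu₀v⟩ := Finset.mem_image.1 hv
      have hvinj : Function.Injective v := by
        rw [← hu₀v]; exact (Finset.mem_filter.1 hu₀).2
      -- the set of u's mapping to v
      have step2 : (Tg.filter (fun u => (fun j : Fin k => (a (u j) + b (u j)) ^ 2) = v)).card
          ≤ 2 ^ k * ((Tg.filter (fun u => (fun j : Fin k => (a (u j) + b (u j)) ^ 2) = v)).image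
              (fun u => a (u j₀) * b (u j₀))).card := by
        apply Finset.card_le_mul_card_image
        intro q hq
        have hsub : ((Tg.filter (fun u => (fun j : Fin k => (a (u j) + b (u j)) ^ 2) = v)).filter
            (fun u => a (u j₀) * b (u j₀) = q)) ⊆
            Fintype.piFinset (fun j : Fin k =>
              (Finset.univ.filter (fun i => (a i + b i) ^ 2 = v j ∧ a i * b i = q))) := by
          intro u hu
          simp only [Finset.mem_filter] at hu
          obtain ⟨⟨hug, hΘ⟩, hfq⟩ := hu
          have huT : u ∈ T := (Finset.mem_filter.1 hug).1
          rw [Fintype.mem_piFinset]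
          intro j
          simp only [Finset.mem_filter, Finset.mem_univ, true_and]
          exact ⟨congrFun hΘ j, (hconst u huT j).trans hfq⟩
        calc ((Tg.filter _).filter _).card ≤ _ := Finset.card_le_card hsub
          _ = ∏ j : Fin k, (Finset.univ.filter
              (fun i => (a i + b i) ^ 2 = v j ∧ a i * b i = q)).card := Fintype.card_piFinset _
          _ ≤ ∏ _j : Fin k, 2 := Finset.prod_le_prod' (fun j _ => hpair2 (v j) q)
          _ = 2 ^ k := by simp
      have step3 : ((Tg.filter (fun u => (fun j : Fin k => (a (u j) + b (u j)) ^ 2) = v)).image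
          (fun u => a (u j₀) * b (u j₀))).card ≤ r := by
        refine le_trans (Finset.card_le_card ?_) (HR v hvinj)
        intro q hq
        obtain ⟨u, hu, hq⟩ := Finset.mem_image.1 hq
        simp only [Finset.mem_filter] at hu
        obtain ⟨hug, hΘ⟩ := hu
        have huT : u ∈ T := (Finset.mem_filter.1 hug).1
        rw [Finset.mem_filter]
        constructor
        · rw [hP, ← hq]
          exact Finset.mem_image_of_mem _ (Finset.mem_univ _)
        · intro j
          exact ⟨u j, congrFun hΘ j, (hconst u huT j).trans hq⟩
      calc (Tg.filter (fun u => (fun j : Fin k => (a (u j) + b (u j)) ^ 2) = v)).card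
          ≤ _ := step2
        _ ≤ 2 ^ k * r := Nat.mul_le_mul_left _ step3
    have himg : ((Tg.image (fun u (j : Fin k) => (a (u j) + b (u j)) ^ 2)).card) ≤ Sq.card ^ k := by
      have hsub : (Tg.image (fun u (j : Fin k) => (a (u j) + b (u j)) ^ 2)) ⊆
          Fintype.piFinset (fun _ : Fin k => Sq) := by
        intro v hv
        obtain ⟨u, hu, rfl⟩ := Finset.mem_image.1 hv
        rw [Fintype.mem_piFinset]
        intro j
        rw [hSq]
        exact Finset.mem_image_of_mem _ (Finset.mem_univ _)
      calc _ ≤ (Fintype.piFinset (fun _ : Fin k => Sq)).card := Finset.card_le_card hsub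
        _ = Sq.card ^ k := by rw [Fintype.card_piFinset]; simp
    exact step1.trans (Nat.mul_le_mul_left _ himg)
  -- bound on fiber cardinalities
  have hmfib : ∀ p : ℤ, (fib p).card ≤ 2 * Sq.card := by
    intro p
    have hfiber : ∀ σ₀ ∈ (fib p).image (fun i => (a i + b i) ^ 2),
        ((fib p).filter (fun i => (a i + b i) ^ 2 = σ₀)).card ≤ 2 := by
      intro σ₀ _
      refine le_trans (Finset.card_le_card ?_) (hpair2 σ₀ p)
      intro i hi
      simp only [hfib, Finset.mem_filter, Finset.mem_univ, true_and] at hi ⊢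
      exact ⟨hi.2, hi.1⟩
    have h := Finset.card_le_mul_card_image (s := fib p)
      (f := fun i => (a i + b i) ^ 2) 2 hfiber
    refine h.trans (Nat.mul_le_mul_left _ (Finset.card_le_card ?_))
    rw [hSq]
    exact Finset.image_subset_image (by rw [hfib]; exact Finset.filter_subset _ _)
  have hsum_pow : ∑ p ∈ P, (fib p).card ^ (k - 1) ≤ (2 * Sq.card) ^ (k - 2) * n := by
    calc ∑ p ∈ P, (fib p).card ^ (k - 1)
        ≤ ∑ p ∈ P, (2 * Sq.card) ^ (k - 2) * (fib p).card := by
          apply Finset.sum_le_sum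
          intro p _
          have hp1 : (fib p).card ^ (k - 1) = (fib p).card ^ (k - 2) * (fib p).card := by
            rw [← pow_succ]
            congr 1
            omega
          rw [hp1]
          exact Nat.mul_le_mul_right _ (Nat.pow_le_pow_left (hmfib p) _)
      _ = (2 * Sq.card) ^ (k - 2) * n := by rw [← Finset.mul_sum, hsum_m]
  have hQ : ∀ (p : ℤ) (j j' : Fin k), j ≠ j' →
      ((Fintype.piFinset (fun _ : Fin k => fib p)).filter
        (fun u => (a (u j) + b (u j)) ^ 2 = (a (u j') + b (u j')) ^ 2)).card
        ≤ 2 * (fib p).card ^ (k - 1) := by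
    intro p j j' hne
    have step1 := Finset.card_le_mul_card_image
      (s := (Fintype.piFinset (fun _ : Fin k => fib p)).filter
        (fun u => (a (u j) + b (u j)) ^ 2 = (a (u j') + b (u j')) ^ 2))
      (f := fun u => Function.update u j' i₀) 2 ?_
    · refine step1.trans (Nat.mul_le_mul_left _ ?_)
      -- image card ≤ (fib p).card ^ (k-1)
      have hsub : (((Fintype.piFinset (fun _ : Fin k => fib p)).filter
          (fun u => (a (u j) + b (u j)) ^ 2 = (a (u j') + b (u j')) ^ 2)).image
            (fun u => Function.update u j' i₀)) ⊆
          Fintype.piFinset (fun j'' : Fin k =>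
            if j'' = j' then ({i₀} : Finset (Fin n)) else fib p) := by
        intro w hw
        obtain ⟨u, hu, rfl⟩ := Finset.mem_image.1 hw
        have hupi := (Finset.mem_filter.1 hu).1
        rw [Fintype.mem_piFinset]
        intro j''
        by_cases h : j'' = j'
        · subst h
          simp [Function.update_self]
        · rw [Function.update_of_ne h]
          simp only [if_neg h]
          exact Fintype.mem_piFinset.1 hupi j''
      refine le_trans (Finset.card_le_card hsub) (le_of_eq ?_)
      rw [Fintype.card_piFinset]
      rw [← Finset.mul_prod_erase Finset.univ _ (Finset.mem_univ j')]
      rw [if_pos rfl, Finset.card_singleton, one_mul]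
      rw [Finset.prod_congr rfl (fun j'' hj'' => by
        rw [if_neg (Finset.ne_of_mem_erase hj'')])]
      rw [Finset.prod_const, Finset.card_erase_of_mem (Finset.mem_univ j')]
      simp
    · -- fibers of the update map have size ≤ 2
      intro w hw
      have hmap : ∀ u ∈ (((Fintype.piFinset (fun _ : Fin k => fib p)).filter
          (fun u => (a (u j) + b (u j)) ^ 2 = (a (u j') + b (u j')) ^ 2)).filter
            (fun u => Function.update u j' i₀ = w)),
          u j' ∈ Finset.univ.filter
            (fun i => (a i + b i) ^ 2 = (a (w j) + b (w j)) ^ 2 ∧ a i * b i = p) := by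
        intro u hu
        simp only [Finset.mem_filter] at hu
        obtain ⟨⟨hupi, heq⟩, hupd⟩ := hu
        have hwj : w j = u j := by rw [← hupd, Function.update_of_ne hne]
        simp only [Finset.mem_filter, Finset.mem_univ, true_and]
        constructor
        · rw [hwj]
          exact heq.symm
        · have := Fintype.mem_piFinset.1 hupi j'
          rw [hfib] at this
          simpa using this
      have hinj : Set.InjOn (fun u : Fin k → Fin n => u j')
          ((((Fintype.piFinset (fun _ : Fin k => fib p)).filter
          (fun u => (a (u j) + b (u j)) ^ 2 = (a (u j') + b (u j')) ^ 2)).filter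
            (fun u => Function.update u j' i₀ = w)) : Finset (Fin k → Fin n)) := by
        intro u1 hu1 u2 hu2 h
        simp only [Finset.coe_filter, Set.mem_setOf_eq] at hu1 hu2
        funext j''
        by_cases hj : j'' = j'
        · subst hj; exact h
        · have h12 : Function.update u1 j' i₀ = Function.update u2 j' i₀ :=
            hu1.2.trans hu2.2.symm
          have := congrFun h12 j''
          rwa [Function.update_of_ne hj, Function.update_of_ne hj] at this
      exact le_trans (Finset.card_le_card_of_injOn _ hmap hinj)
        (hpair2 ((a (w j) + b (w j)) ^ 2) p)
  have hpairset : ∀ jj : Fin k × Fin k, jj.1 ≠ jj.2 →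
      (T.filter (fun u => (a (u jj.1) + b (u jj.1)) ^ 2 = (a (u jj.2) + b (u jj.2)) ^ 2)).card
        ≤ 2 * ((2 * Sq.card) ^ (k - 2) * n) := by
    intro jj hne
    calc (T.filter (fun u => (a (u jj.1) + b (u jj.1)) ^ 2 = (a (u jj.2) + b (u jj.2)) ^ 2)).card
        = (P.biUnion (fun p => (Fintype.piFinset (fun _ : Fin k => fib p)).filter
            (fun u => (a (u jj.1) + b (u jj.1)) ^ 2 = (a (u jj.2) + b (u jj.2)) ^ 2))).card := by
          rw [hT, Finset.filter_biUnion]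
      _ ≤ ∑ p ∈ P, ((Fintype.piFinset (fun _ : Fin k => fib p)).filter
            (fun u => (a (u jj.1) + b (u jj.1)) ^ 2 = (a (u jj.2) + b (u jj.2)) ^ 2)).card :=
          Finset.card_biUnion_le
      _ ≤ ∑ p ∈ P, 2 * (fib p).card ^ (k - 1) :=
          Finset.sum_le_sum (fun p _ => hQ p jj.1 jj.2 hne)
      _ = 2 * ∑ p ∈ P, (fib p).card ^ (k - 1) := by rw [Finset.mul_sum]
      _ ≤ 2 * ((2 * Sq.card) ^ (k - 2) * n) := Nat.mul_le_mul_left _ hsum_pow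
  have hbad : Tb.card ≤ k ^ 2 * (2 * ((2 * Sq.card) ^ (k - 2) * n)) := by
    have hbadsub : Tb ⊆ ((Finset.univ : Finset (Fin k × Fin k)).filter
        (fun q => q.1 ≠ q.2)).biUnion
        (fun q => T.filter (fun u => (a (u q.1) + b (u q.1)) ^ 2 = (a (u q.2) + b (u q.2)) ^ 2)) := by
      intro u hu
      rw [hTb, Finset.mem_filter] at hu
      obtain ⟨huT, hni⟩ := hu
      rw [Function.not_injective_iff] at hni
      obtain ⟨j, j', heq, hne⟩ := hni
      exact Finset.mem_biUnion.2 ⟨(j, j'), Finset.mem_filter.2 ⟨Finset.mem_univ _, hne⟩,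
        Finset.mem_filter.2 ⟨huT, heq⟩⟩
    calc Tb.card ≤ _ := Finset.card_le_card hbadsub
      _ ≤ ∑ q ∈ (Finset.univ : Finset (Fin k × Fin k)).filter (fun q => q.1 ≠ q.2),
          (T.filter (fun u => (a (u q.1) + b (u q.1)) ^ 2 = (a (u q.2) + b (u q.2)) ^ 2)).card :=
          Finset.card_biUnion_le
      _ ≤ ∑ _q ∈ (Finset.univ : Finset (Fin k × Fin k)).filter (fun q => q.1 ≠ q.2),
          2 * ((2 * Sq.card) ^ (k - 2) * n) :=
          Finset.sum_le_sum (fun q hq => hpairset q (Finset.mem_filter.1 hq).2)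
      _ ≤ k ^ 2 * (2 * ((2 * Sq.card) ^ (k - 2) * n)) := by
          rw [Finset.sum_const, smul_eq_mul]
          apply Nat.mul_le_mul_right
          refine le_trans (Finset.card_filter_le _ _) ?_
          rw [Finset.card_univ]
          simp [pow_two]
  have hNat1 : n ^ k ≤ P.card ^ (k - 1) * T.card := by exact_mod_cast hHolder
  calc n ^ k ≤ P.card ^ (k - 1) * T.card := hNat1
    _ ≤ P.card ^ (k - 1) * (2 ^ k * r * Sq.card ^ k
        + k ^ 2 * (2 * ((2 * Sq.card) ^ (k - 2) * n))) :=
      Nat.mul_le_mul_left _ (by rw [hsplit]; exact Nat.add_le_add hgood hbad)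

set_option maxHeartbeats 1000000 in
/-- For every `k ≥ 2` there is `c > 0` such that for all `n, t, r ≥ 1`:
if every set of `k` distinct integers inside `{-4t²,…,4t²}` has at most `r` translates
`x ∈ {-4t²,…,4t²}` into the perfect squares, then every `n` pairs of integers bounded by
`t` in absolute value, with pairwise distinct entries, have at least
`c·n^(k/(2k-1))·r^(-1/(2k-1))` distinct sums or that many distinct products. -/
theorem bounded_translates_implies_matching_lower_bound (k : ℕ) (hk : 2 ≤ k) :
    ∃ c : ℝ, 0 < c ∧ ∀ n t r : ℕ, 1 ≤ n → 1 ≤ t → 1 ≤ r →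
      (∀ A : Finset ℤ, A.card = k →
        (∀ a ∈ A, a ∈ Set.Icc (-(4 * (t : ℤ) ^ 2)) (4 * (t : ℤ) ^ 2)) →
        ({x ∈ Set.Icc (-(4 * (t : ℤ) ^ 2)) (4 * (t : ℤ) ^ 2) |
          ∀ a ∈ A, a + x ∈ Squares}).ncard ≤ r) →
      ∀ a b : Fin n → ℤ,
        Function.Injective a → Function.Injective b → (∀ i j, a i ≠ b j) →
        (∀ i, |a i| ≤ (t : ℤ)) → (∀ i, |b i| ≤ (t : ℤ)) →
        c * (n : ℝ) ^ ((k : ℝ) / (2 * k - 1)) * (r : ℝ) ^ (-(1 : ℝ) / (2 * k - 1)) ≤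
          max ((Finset.image (fun i => a i + b i) Finset.univ).card : ℝ)
            ((Finset.image (fun i => a i * b i) Finset.univ).card : ℝ) := by
  classical
  refine ⟨((2 : ℝ) ^ (k + 2) * (k : ℝ) ^ 2)⁻¹, by positivity, ?_⟩
  intro n t r hn ht hr H a b ha hb hab hat hbt
  -- derive the abstract counting hypothesis
  have HR : ∀ v : Fin k → ℤ, Function.Injective v →
      ((Finset.image (fun i => a i * b i) Finset.univ).filter
        (fun p => ∀ j, ∃ i, (a i + b i) ^ 2 = v j ∧ a i * b i = p)).card ≤ r := by
    intro v hvinj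
    set Φ := (Finset.image (fun i => a i * b i) Finset.univ).filter
        (fun p => ∀ j, ∃ i, (a i + b i) ^ 2 = v j ∧ a i * b i = p) with hΦ
    rcases Φ.eq_empty_or_nonempty with he | ⟨p₀, hp₀⟩
    · rw [he]; simp
    · have hp₀' := Finset.mem_filter.1 hp₀
      have hattain : ∀ j, ∃ i, (a i + b i) ^ 2 = v j := fun j =>
        (hp₀'.2 j).imp (fun i hi => hi.1)
      set A : Finset ℤ := Finset.image v Finset.univ with hA
      have hAcard : A.card = k := by
        rw [hA, Finset.card_image_of_injective _ hvinj, Finset.card_univ, Fintype.card_fin]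
      have hAIcc : ∀ α ∈ A, α ∈ Set.Icc (-(4 * (t : ℤ) ^ 2)) (4 * (t : ℤ) ^ 2) := by
        intro α hα
        obtain ⟨j, _, rfl⟩ := Finset.mem_image.1 hα
        obtain ⟨i, hi⟩ := hattain j
        rw [← hi]
        have ha1 := abs_le.1 (hat i)
        have hb1 := abs_le.1 (hbt i)
        constructor
        · nlinarith [sq_nonneg (a i + b i), sq_nonneg (t : ℤ)]
        · nlinarith [sq_nonneg (a i + b i - 2 * t), sq_nonneg (a i + b i + 2 * t)]
      have hneg4 : Function.Injective (fun p : ℤ => -4 * p) := by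
        intro x y h; dsimp at h; linarith
      have hXfin : ({x ∈ Set.Icc (-(4 * (t : ℤ) ^ 2)) (4 * (t : ℤ) ^ 2) |
          ∀ α ∈ A, α + x ∈ Squares}).Finite :=
        Set.Finite.subset (Set.finite_Icc _ _) (fun x hx => hx.1)
      have hsubX : ↑(Φ.image (fun p => -4 * p)) ⊆
          {x ∈ Set.Icc (-(4 * (t : ℤ) ^ 2)) (4 * (t : ℤ) ^ 2) | ∀ α ∈ A, α + x ∈ Squares} := by
        intro x hx
        rw [Finset.mem_coe, Finset.mem_image] at hx
        obtain ⟨p, hp, rfl⟩ := hx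
        have hp' := Finset.mem_filter.1 hp
        obtain ⟨i₀, _, hi₀⟩ := Finset.mem_image.1 hp'.1
        constructor
        · have ha1 := abs_le.1 (hat i₀)
          have hb1 := abs_le.1 (hbt i₀)
          have habs : |a i₀ * b i₀| ≤ t * t := by
            rw [abs_mul]
            exact mul_le_mul (hat i₀) (hbt i₀) (abs_nonneg _)
              (le_trans (abs_nonneg _) (hat i₀))
          have := abs_le.1 habs
          constructor <;> nlinarith
        · intro α hα
          obtain ⟨j, _, rfl⟩ := Finset.mem_image.1 hα
          obtain ⟨i, hσ, hpi⟩ := hp'.2 j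
          exact ⟨a i - b i, by rw [← hσ, ← hpi]; ring⟩
      calc Φ.card = (Φ.image (fun p => -4 * p)).card :=
            (Finset.card_image_of_injective _ hneg4).symm
        _ = (↑(Φ.image (fun p => -4 * p)) : Set ℤ).ncard := (Set.ncard_coe_finset _).symm
        _ ≤ _ := Set.ncard_le_ncard hsubX hXfin
        _ ≤ r := H A hAcard hAIcc
  have hkey := key_count hk hn a b ha hab HR
  -- abbreviations
  rw [← Nat.cast_max]
  set c : ℝ := ((2 : ℝ) ^ (k + 2) * (k : ℝ) ^ 2)⁻¹ with hc
  set M : ℕ := max (Finset.image (fun i => a i + b i) Finset.univ).card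
      (Finset.image (fun i => a i * b i) Finset.univ).card with hM
  set x : ℝ := (M : ℝ) with hxdef
  have hkR : (2 : ℝ) ≤ (k : ℝ) := by exact_mod_cast hk
  have hDpos : (0 : ℝ) < 2 * (k : ℝ) - 1 := by linarith
  have hD3pos : (0 : ℝ) < 2 * (k : ℝ) - 3 := by linarith
  have hnR : (1 : ℝ) ≤ (n : ℝ) := by exact_mod_cast hn
  have hrR : (1 : ℝ) ≤ (r : ℝ) := by exact_mod_cast hr
  have hx0 : (0 : ℝ) ≤ x := Nat.cast_nonneg _
  have hc0 : (0 : ℝ) < c := by rw [hc]; positivity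
  have hc1 : c ≤ 1 := by
    rw [hc]
    have h2 : (1 : ℝ) ≤ (2 : ℝ) ^ (k + 2) := by
      calc (1:ℝ) = 1 ^ (k+2) := (one_pow _).symm
        _ ≤ 2 ^ (k+2) := pow_le_pow_left₀ (by norm_num) (by norm_num) _
    have h1 : (1 : ℝ) ≤ (2 : ℝ) ^ (k + 2) * (k : ℝ) ^ 2 := by nlinarith
    exact inv_le_one_of_one_le₀ h1
  have hSqM : (Finset.image (fun i => (a i + b i) ^ 2) Finset.univ).card ≤ M := by
    refine le_trans ?_ (le_max_left _ _)
    have himg : (Finset.image (fun i => (a i + b i) ^ 2) Finset.univ)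
        = (Finset.image (fun i => a i + b i) Finset.univ).image (fun y => y ^ 2) := by
      rw [Finset.image_image]
      rfl
    rw [himg]
    exact Finset.card_image_le
  have hPM : (Finset.image (fun i => a i * b i) Finset.univ).card ≤ M := le_max_right _ _
  -- the main real inequality
  have hstep : (n : ℝ) ^ k ≤ 2 ^ (k + 1) * r * x ^ (2 * k - 1)
      + 2 ^ (k + 1) * (k : ℝ) ^ 2 * (x ^ (2 * k - 3) * n) := by
    have hkeyR : (n : ℝ) ^ k ≤
        ((Finset.image (fun i => a i * b i) Finset.univ).card : ℝ) ^ (k - 1) *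
        (2 ^ k * r * ((Finset.image (fun i => (a i + b i) ^ 2) Finset.univ).card : ℝ) ^ k
          + (k : ℝ) ^ 2 * (2 * ((2 * ((Finset.image (fun i => (a i + b i) ^ 2) Finset.univ).card : ℝ)) ^ (k - 2) * n))) := by
      exact_mod_cast hkey
    have hPR : ((Finset.image (fun i => a i * b i) Finset.univ).card : ℝ) ≤ x := by
      rw [hxdef]; exact_mod_cast hPM
    have hSqR : ((Finset.image (fun i => (a i + b i) ^ 2) Finset.univ).card : ℝ) ≤ x := by
      rw [hxdef]; exact_mod_cast hSqM
    have hmid : (n : ℝ) ^ k ≤ x ^ (k - 1) *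
        (2 ^ k * r * x ^ k + (k : ℝ) ^ 2 * (2 * ((2 * x) ^ (k - 2) * n))) := by
      refine hkeyR.trans ?_
      have t1 : ((Finset.image (fun i => (a i + b i) ^ 2) Finset.univ).card : ℝ) ^ k ≤ x ^ k :=
        pow_le_pow_left₀ (Nat.cast_nonneg _) hSqR _
      have t2 : (2 * ((Finset.image (fun i => (a i + b i) ^ 2) Finset.univ).card : ℝ)) ^ (k - 2)
          ≤ (2 * x) ^ (k - 2) :=
        pow_le_pow_left₀ (by positivity) (by linarith) _
      have t3 : ((Finset.image (fun i => a i * b i) Finset.univ).card : ℝ) ^ (k - 1)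
          ≤ x ^ (k - 1) := pow_le_pow_left₀ (Nat.cast_nonneg _) hPR _
      refine mul_le_mul t3 ?_ (by positivity) (by positivity)
      refine add_le_add (mul_le_mul_of_nonneg_left t1 (by positivity)) ?_
      refine mul_le_mul_of_nonneg_left ?_ (by positivity)
      refine mul_le_mul_of_nonneg_left ?_ (by norm_num)
      exact mul_le_mul_of_nonneg_right t2 (Nat.cast_nonneg _)
    have e1 : x ^ (k - 1) * x ^ k = x ^ (2 * k - 1) := by
      rw [← pow_add]; congr 1; omega
    have e2 : x ^ (k - 1) * x ^ (k - 2) = x ^ (2 * k - 3) := by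
      rw [← pow_add]; congr 1; omega
    have e3 : (2 : ℝ) * (2 : ℝ) ^ (k - 2) = 2 ^ (k - 1) := by
      rw [← pow_succ']; congr 1; omega
    have hexp : x ^ (k - 1) *
        (2 ^ k * r * x ^ k + (k : ℝ) ^ 2 * (2 * ((2 * x) ^ (k - 2) * n)))
        = 2 ^ k * r * x ^ (2 * k - 1) + (k : ℝ) ^ 2 * 2 ^ (k - 1) * (x ^ (2 * k - 3) * n) := by
      rw [mul_pow]
      linear_combination ((2 : ℝ) ^ k * r) * e1
        + ((k : ℝ) ^ 2 * 2 * (2 : ℝ) ^ (k - 2) * (n : ℝ)) * e2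
        + ((k : ℝ) ^ 2 * x ^ (2 * k - 3) * (n : ℝ)) * e3
    rw [hexp] at hmid
    refine hmid.trans (add_le_add ?_ ?_)
    · have h2k : (2 : ℝ) ^ k ≤ 2 ^ (k + 1) := pow_le_pow_right₀ (by norm_num) (by omega)
      have := mul_le_mul_of_nonneg_right h2k (by positivity : (0:ℝ) ≤ (r : ℝ) * x ^ (2 * k - 1))
      calc (2:ℝ) ^ k * r * x ^ (2*k-1) = 2 ^ k * ((r:ℝ) * x ^ (2*k-1)) := by ring
        _ ≤ 2 ^ (k+1) * ((r:ℝ) * x ^ (2*k-1)) := this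
        _ = 2 ^ (k+1) * r * x ^ (2*k-1) := by ring
    · have h2k : (k : ℝ) ^ 2 * 2 ^ (k - 1) ≤ 2 ^ (k + 1) * (k : ℝ) ^ 2 := by
        have : (2 : ℝ) ^ (k - 1) ≤ 2 ^ (k + 1) := pow_le_pow_right₀ (by norm_num) (by omega)
        nlinarith [sq_nonneg (k : ℝ)]
      exact mul_le_mul_of_nonneg_right h2k (by positivity)
  have hcast1 : ((2 * k - 1 : ℕ) : ℝ) = 2 * (k : ℝ) - 1 := by
    rw [Nat.cast_sub (by omega)]; push_cast; ring
  have hcast3 : ((2 * k - 3 : ℕ) : ℝ) = 2 * (k : ℝ) - 3 := by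
    rw [Nat.cast_sub (by omega)]; push_cast; ring
  rcases le_total (2 ^ (k + 1) * (k : ℝ) ^ 2 * (x ^ (2 * k - 3) * n))
      (2 ^ (k + 1) * (r : ℝ) * x ^ (2 * k - 1)) with hcase | hcase
  · -- dominant sumset/productset term
    have h2t : 2 * ((2:ℝ) ^ (k+1) * r * x ^ (2*k-1)) = 2 ^ (k+2) * r * x ^ (2*k-1) := by
      rw [show (2:ℝ) ^ (k+2) = 2 * 2 ^ (k+1) from by rw [pow_succ']]; ring
    have h1 : (n : ℝ) ^ k ≤ 2 ^ (k + 2) * r * x ^ (2 * k - 1) := by linarith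
    refine le_of_pow_le_pow_left₀ (by omega : 2 * k - 1 ≠ 0) hx0 ?_
    have hnκ : (((n:ℝ)) ^ ((k : ℝ) / (2 * (k:ℝ) - 1))) ^ (2 * k - 1) = (n : ℝ) ^ k := by
      rw [← Real.rpow_natCast ((n:ℝ) ^ ((k : ℝ) / (2 * (k:ℝ) - 1))) (2 * k - 1),
        ← Real.rpow_mul (by positivity), hcast1, div_mul_cancel₀ _ (ne_of_gt hDpos),
        Real.rpow_natCast]
    have hre : (((r:ℝ)) ^ (-(1 : ℝ) / (2 * (k:ℝ) - 1))) ^ (2 * k - 1) = (r : ℝ)⁻¹ := by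
      rw [← Real.rpow_natCast ((r:ℝ) ^ (-(1 : ℝ) / (2 * (k:ℝ) - 1))) (2 * k - 1),
        ← Real.rpow_mul (by positivity), hcast1, div_mul_cancel₀ _ (ne_of_gt hDpos)]
      rw [show (-(1:ℝ)) = ((-1 : ℤ) : ℝ) by norm_num, Real.rpow_intCast, zpow_neg_one]
    rw [mul_pow, mul_pow, hnκ, hre]
    have hrpos : (0:ℝ) < r := by linarith
    have hnk_r : (n:ℝ) ^ k * (r:ℝ)⁻¹ ≤ 2 ^ (k+2) * x ^ (2*k-1) := by
      have hh := mul_le_mul_of_nonneg_right h1 (inv_nonneg.2 hrpos.le)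
      calc (n:ℝ) ^ k * (r:ℝ)⁻¹ ≤ (2 ^ (k+2) * r * x ^ (2*k-1)) * (r:ℝ)⁻¹ := hh
        _ = 2 ^ (k+2) * x ^ (2*k-1) * ((r:ℝ) * (r:ℝ)⁻¹) := by ring
        _ = 2 ^ (k+2) * x ^ (2*k-1) := by rw [mul_inv_cancel₀ (ne_of_gt hrpos), mul_one]
    have hck : c ^ (2*k-1) ≤ c := pow_le_of_le_one hc0.le hc1 (by omega)
    have hc2 : c * 2 ^ (k+2) ≤ 1 := by
      rw [hc]
      rw [inv_mul_le_iff₀ (by positivity)]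
      have hk2 : (1:ℝ) ≤ (k:ℝ)^2 := by nlinarith
      have hp : (0:ℝ) < (2:ℝ)^(k+2) := by positivity
      have hmm := mul_le_mul_of_nonneg_left hk2 hp.le
      linarith [hmm]
    calc c ^ (2*k-1) * (n:ℝ) ^ k * (r:ℝ)⁻¹ = c ^ (2*k-1) * ((n:ℝ) ^ k * (r:ℝ)⁻¹) := by ring
      _ ≤ c * ((n:ℝ) ^ k * (r:ℝ)⁻¹) := mul_le_mul_of_nonneg_right hck (by positivity)
      _ ≤ c * (2 ^ (k+2) * x ^ (2*k-1)) := mul_le_mul_of_nonneg_left hnk_r hc0.le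
      _ = (c * 2 ^ (k+2)) * x ^ (2*k-1) := by ring
      _ ≤ 1 * x ^ (2*k-1) := mul_le_mul_of_nonneg_right hc2 (by positivity)
      _ = x ^ (2*k-1) := one_mul _
  · -- dominant diagonal term
    have h2t : 2 * ((2:ℝ) ^ (k+1) * (k:ℝ)^2 * (x ^ (2*k-3) * n))
        = (2 ^ (k+2) * (k:ℝ)^2 * x ^ (2*k-3)) * n := by
      rw [show (2:ℝ) ^ (k+2) = 2 * 2 ^ (k+1) from by rw [pow_succ']]; ring
    have hnpos : (0:ℝ) < n := by linarith
    have h2 : (n:ℝ) ^ (k-1) ≤ 2 ^ (k+2) * (k:ℝ)^2 * x ^ (2*k-3) := by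
      have hpow : (n:ℝ) ^ k = (n:ℝ) ^ (k-1) * n := by rw [← pow_succ]; congr 1; omega
      have hfull : (n:ℝ) ^ (k-1) * n ≤ (2 ^ (k+2) * (k:ℝ)^2 * x ^ (2*k-3)) * n := by
        rw [← hpow]; linarith
      exact le_of_mul_le_mul_right hfull hnpos
    have hre1 : (r:ℝ) ^ (-(1 : ℝ) / (2 * (k:ℝ) - 1)) ≤ 1 :=
      Real.rpow_le_one_of_one_le_of_nonpos hrR
        (div_nonpos_of_nonpos_of_nonneg (by norm_num) hDpos.le)
    have hκκ' : (n:ℝ) ^ ((k : ℝ) / (2 * (k:ℝ) - 1)) ≤ (n:ℝ) ^ (((k:ℝ) - 1) / (2 * (k:ℝ) - 3)) :=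
      Real.rpow_le_rpow_of_exponent_le hnR
        (by rw [div_le_div_iff₀ hDpos hD3pos]; nlinarith)
    have hfin : c * (n:ℝ) ^ (((k:ℝ) - 1) / (2 * (k:ℝ) - 3)) ≤ x := by
      refine le_of_pow_le_pow_left₀ (by omega : 2 * k - 3 ≠ 0) hx0 ?_
      rw [mul_pow]
      have hnκ' : ((n:ℝ) ^ (((k:ℝ) - 1) / (2 * (k:ℝ) - 3))) ^ (2*k-3) = (n:ℝ) ^ (k-1) := by
        rw [← Real.rpow_natCast ((n:ℝ) ^ (((k:ℝ) - 1) / (2 * (k:ℝ) - 3))) (2 * k - 3),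
          ← Real.rpow_mul (by positivity), hcast3, div_mul_cancel₀ _ (ne_of_gt hD3pos),
          show (k:ℝ) - 1 = ((k - 1 : ℕ) : ℝ) from by rw [Nat.cast_sub (by omega)]; push_cast; ring,
          Real.rpow_natCast]
      rw [hnκ']
      have hck : c ^ (2*k-3) ≤ c := pow_le_of_le_one hc0.le hc1 (by omega)
      have hcinv : c * (2 ^ (k+2) * (k:ℝ)^2) = 1 := by
        rw [hc]; exact inv_mul_cancel₀ (by positivity)
      calc c ^ (2*k-3) * (n:ℝ) ^ (k-1) ≤ c * (n:ℝ) ^ (k-1) :=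
            mul_le_mul_of_nonneg_right hck (by positivity)
        _ ≤ c * (2 ^ (k+2) * (k:ℝ)^2 * x ^ (2*k-3)) := mul_le_mul_of_nonneg_left h2 hc0.le
        _ = (c * (2 ^ (k+2) * (k:ℝ)^2)) * x ^ (2*k-3) := by ring
        _ = x ^ (2*k-3) := by rw [hcinv, one_mul]
    calc c * (n:ℝ) ^ ((k : ℝ) / (2 * (k:ℝ) - 1)) * (r:ℝ) ^ (-(1 : ℝ) / (2 * (k:ℝ) - 1))
        ≤ c * (n:ℝ) ^ ((k : ℝ) / (2 * (k:ℝ) - 1)) * 1 :=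
          mul_le_mul_of_nonneg_left hre1 (by positivity)
      _ = c * (n:ℝ) ^ ((k : ℝ) / (2 * (k:ℝ) - 1)) := mul_one _
      _ ≤ c * (n:ℝ) ^ (((k:ℝ) - 1) / (2 * (k:ℝ) - 3)) :=
          mul_le_mul_of_nonneg_left hκκ' hc0.le
      _ ≤ x := hfin
end

section
/- For every C > 0 and every ε > 0 there exists n₀ such that for all n ≥ n₀ the following holds: for every n pairs of integers (a_i, b_i), i = 1,…,n, whose 2n entries are pairwise distinct and satisfy |a_i| ≤ n^C and |b_i| ≤ n^C for all i, one has max{|{a_i + b_i : i ≤ n}|, |{a_i·b_i : i ≤ n}|} ≥ n^{2/3 - ε}. -/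
open Finset

/-- For every `ε > 0` there is `K ≥ 1` with `d(m) ≤ K * m ^ ε`. -/
lemma divisor_bound (ε : ℝ) (hε : 0 < ε) :
    ∃ K : ℝ, 1 ≤ K ∧ ∀ m : ℕ, m ≠ 0 → ((m.divisors.card : ℝ)) ≤ K * (m : ℝ) ^ ε := by
  classical
  have hlog2 : 0 < Real.log 2 := Real.log_pos (by norm_num)
  set B : ℝ := max 1 (1 / (ε * Real.log 2)) with hB
  have hB1 : 1 ≤ B := le_max_left _ _
  have hBe : 1 ≤ B * (ε * Real.log 2) := by
    have h2 : 1 / (ε * Real.log 2) ≤ B := le_max_right _ _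
    have hpos : 0 < ε * Real.log 2 := mul_pos hε hlog2
    calc (1:ℝ) = (1 / (ε * Real.log 2)) * (ε * Real.log 2) := by field_simp
    _ ≤ B * (ε * Real.log 2) := by gcongr
  set N : ℕ := ⌈(2:ℝ) ^ (1/ε)⌉₊ with hN
  refine ⟨B ^ N, one_le_pow₀ hB1, ?_⟩
  intro m hm
  -- key per-prime bounds
  have key : ∀ p ∈ m.primeFactors,
      ((m.factorization p + 1 : ℕ) : ℝ) ≤
        (if p < N then B else 1) * ((p:ℝ) ^ (m.factorization p)) ^ ε := by
    intro p hp
    have hpp : p.Prime := Nat.prime_of_mem_primeFactors hp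
    have hp2 : (2:ℝ) ≤ (p:ℝ) := by exact_mod_cast hpp.two_le
    have hppos : (0:ℝ) < (p:ℝ) := by linarith
    set α : ℕ := m.factorization p
    have hre : ((p:ℝ) ^ α) ^ ε = ((p:ℝ) ^ ε) ^ α := by
      rw [← Real.rpow_natCast (p:ℝ) α, ← Real.rpow_mul hppos.le, mul_comm,
        Real.rpow_mul hppos.le, Real.rpow_natCast]
    rw [hre]
    by_cases hsmall : p < N
    · simp only [hsmall, if_true]
      -- α+1 ≤ B * (p^ε)^α, via p^ε ≥ 2^ε = exp(ε log 2) ≥ ... use exp bound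
      have h2e : Real.exp (ε * Real.log 2) ≤ (p:ℝ) ^ ε := by
        rw [mul_comm, ← Real.rpow_def_of_pos (by norm_num : (0:ℝ) < 2)]
        exact Real.rpow_le_rpow (by norm_num) hp2 hε.le
      have hexp : ((α : ℝ) * (ε * Real.log 2)).exp ≤ ((p:ℝ) ^ ε) ^ α := by
        rw [Real.exp_nat_mul]
        exact pow_le_pow_left₀ (Real.exp_pos _).le h2e α
      have hlin : (1:ℝ) + (α:ℝ) * (ε * Real.log 2) ≤ Real.exp ((α:ℝ) * (ε * Real.log 2)) := by
        have := Real.add_one_le_exp ((α:ℝ) * (ε * Real.log 2))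
        linarith
      have : ((α + 1 : ℕ) : ℝ) ≤ B * (1 + (α:ℝ) * (ε * Real.log 2)) := by
        push_cast
        have h1 : B * (1 + (α:ℝ) * (ε * Real.log 2)) = B + (α:ℝ) * (B * (ε * Real.log 2)) := by ring
        rw [h1]
        nlinarith [(Nat.cast_nonneg α : (0:ℝ) ≤ (α:ℝ))]
      calc ((α + 1 : ℕ) : ℝ) ≤ B * (1 + (α:ℝ) * (ε * Real.log 2)) := this
      _ ≤ B * Real.exp ((α:ℝ) * (ε * Real.log 2)) := by
            have hB0 : (0:ℝ) ≤ B := by linarith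
            exact mul_le_mul_of_nonneg_left hlin hB0
      _ ≤ B * ((p:ℝ)^ε) ^ α := by
            have hB0 : (0:ℝ) ≤ B := by linarith
            exact mul_le_mul_of_nonneg_left hexp hB0
    · simp only [hsmall, if_false, one_mul]
      -- p ≥ N ≥ 2^(1/ε), so p^ε ≥ 2, and α+1 ≤ 2^α ≤ (p^ε)^α
      have hpN : (N:ℝ) ≤ (p:ℝ) := by exact_mod_cast Nat.not_lt.1 hsmall
      have h2N : (2:ℝ) ^ (1/ε) ≤ (N:ℝ) := Nat.le_ceil _
      have hpe2 : (2:ℝ) ≤ (p:ℝ) ^ ε := by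
        have h1 : ((2:ℝ) ^ (1/ε)) ^ ε ≤ (p:ℝ) ^ ε :=
          Real.rpow_le_rpow (Real.rpow_nonneg (by norm_num) _) (le_trans h2N hpN) hε.le
        rwa [← Real.rpow_mul (by norm_num : (0:ℝ) ≤ 2), one_div_mul_cancel hε.ne',
          Real.rpow_one] at h1
      calc ((α + 1 : ℕ) : ℝ) ≤ ((2:ℕ) ^ α : ℕ) := by
            exact_mod_cast Nat.succ_le_of_lt (Nat.lt_two_pow_self (n := α))
      _ = (2:ℝ) ^ α := by push_cast; ring
      _ ≤ ((p:ℝ) ^ ε) ^ α := by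
            exact pow_le_pow_left₀ (by norm_num) hpe2 α
  -- now assemble
  have hcard : ((m.divisors.card : ℕ) : ℝ) =
      ∏ p ∈ m.primeFactors, ((m.factorization p + 1 : ℕ) : ℝ) := by
    rw [Nat.card_divisors hm]; push_cast; ring
  have hmε : (m:ℝ) ^ ε = ∏ p ∈ m.primeFactors, ((p:ℝ) ^ (m.factorization p)) ^ ε := by
    have hfac : (m:ℝ) = ∏ p ∈ m.primeFactors, (p:ℝ) ^ (m.factorization p) := by
      conv_lhs => rw [← Nat.factorization_prod_pow_eq_self hm]
      rw [Nat.prod_factorization_eq_prod_primeFactors]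
      push_cast; ring
    rw [hfac, ← Real.finset_prod_rpow _ _ (fun p _ => pow_nonneg (Nat.cast_nonneg p) _)]
  calc ((m.divisors.card : ℕ) : ℝ)
      = ∏ p ∈ m.primeFactors, ((m.factorization p + 1 : ℕ) : ℝ) := hcard
    _ ≤ ∏ p ∈ m.primeFactors, (if p < N then B else 1) * ((p:ℝ) ^ (m.factorization p)) ^ ε := by
        apply Finset.prod_le_prod (fun p _ => by positivity) key
    _ = (∏ p ∈ m.primeFactors, (if p < N then B else 1)) *
        ∏ p ∈ m.primeFactors, ((p:ℝ) ^ (m.factorization p)) ^ ε := by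
        rw [Finset.prod_mul_distrib]
    _ ≤ B ^ N * (m:ℝ) ^ ε := by
        rw [← hmε]
        apply mul_le_mul_of_nonneg_right _ (Real.rpow_nonneg (Nat.cast_nonneg m) ε)
        rw [← Finset.prod_filter]
        rw [Finset.prod_const]
        apply pow_le_pow_right₀ hB1
        calc (m.primeFactors.filter (· < N)).card ≤ (Finset.range N).card := by
              apply Finset.card_le_card
              intro p hp
              simp only [Finset.mem_filter] at hp
              exact Finset.mem_range.2 hp.2
        _ = N := Finset.card_range N

open Filter

/-- For every `C > 0` and `ε > 0`, for all large `n`: every `n` pairs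
of integers, with pairwise distinct entries all bounded by `n^C` in absolute value, have
at least `n^(2/3-ε)` distinct sums or that many distinct products. -/
theorem poly_bounded_matching_lower_bound (C ε : ℝ) (hC : 0 < C) (hε : 0 < ε) :
    ∃ n₀ : ℕ, ∀ n : ℕ, n₀ ≤ n → ∀ a b : Fin n → ℤ,
      Function.Injective a → Function.Injective b → (∀ i j, a i ≠ b j) →
      (∀ i, ((|a i| : ℤ) : ℝ) ≤ (n : ℝ) ^ C) →
      (∀ i, ((|b i| : ℤ) : ℝ) ≤ (n : ℝ) ^ C) →
      (n : ℝ) ^ ((2 : ℝ) / 3 - ε) ≤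
        max ((Finset.image (fun i => a i + b i) Finset.univ).card : ℝ)
          ((Finset.image (fun i => a i * b i) Finset.univ).card : ℝ) := by
  classical
  obtain ⟨K, hK1, hKd⟩ := divisor_bound (ε / (6 * C)) (by positivity)
  have hev : ∀ᶠ n : ℕ in atTop,
      (2 * K ≤ (n:ℝ) ^ ((1:ℝ)/3 + 2*ε/3)) ∧ 1 ≤ n := by
    refine Eventually.and ?_ (eventually_ge_atTop 1)
    have h := (tendsto_rpow_atTop (by linarith : (0:ℝ) < (1:ℝ)/3 + 2*ε/3)).comp
      tendsto_natCast_atTop_atTop (α := ℕ)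
    exact h.eventually_ge_atTop (2 * K)
  obtain ⟨n₀, hn₀⟩ := eventually_atTop.1 hev
  refine ⟨n₀, fun n hn a b ha hb _ haB hbB => ?_⟩
  obtain ⟨hKn, hn1⟩ := hn₀ n hn
  have hnR : (1:ℝ) ≤ (n:ℝ) := by exact_mod_cast hn1
  have hnpos : (0:ℝ) < (n:ℝ) := by linarith
  set P : Finset ℤ := Finset.image (fun i => a i * b i) Finset.univ with hP
  set T : ℝ := 2 * (K * (n:ℝ) ^ (ε/3)) with hT
  have hrp1 : (1:ℝ) ≤ (n:ℝ) ^ (ε/3) := Real.one_le_rpow hnR (by positivity)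
  have hTpos : 0 < T := by nlinarith
  -- fiber bound
  have fib : ∀ p ∈ P, ((Finset.univ.filter (fun i => a i * b i = p)).card : ℝ) ≤ T := by
    intro p hp
    by_cases hp0 : p = 0
    · subst hp0
      have hsub : (Finset.univ.filter (fun i => a i * b i = 0)) ⊆
          (Finset.univ.filter (fun i => a i = 0)) ∪ (Finset.univ.filter (fun i => b i = 0)) := by
        intro i hi
        simp only [Finset.mem_filter, Finset.mem_union, Finset.mem_univ, true_and] at *
        exact mul_eq_zero.1 hi
      have h1 : (Finset.univ.filter (fun i => a i = 0)).card ≤ 1 := by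
        apply Finset.card_le_one.2
        intro i hi j hj
        simp only [Finset.mem_filter] at hi hj
        exact ha (hi.2.trans hj.2.symm)
      have h2 : (Finset.univ.filter (fun i => b i = 0)).card ≤ 1 := by
        apply Finset.card_le_one.2
        intro i hi j hj
        simp only [Finset.mem_filter] at hi hj
        exact hb (hi.2.trans hj.2.symm)
      have : (Finset.univ.filter (fun i => a i * b i = 0)).card ≤ 2 := by
        calc _ ≤ _ := Finset.card_le_card hsub
        _ ≤ _ := Finset.card_union_le _ _
        _ ≤ 2 := by omega
      calc ((Finset.univ.filter (fun i => a i * b i = 0)).card : ℝ) ≤ 2 := by exact_mod_cast this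
      _ ≤ T := by nlinarith
    · -- inject into signed divisors of p
      set D : Finset ℤ := (p.natAbs.divisors.image (fun d : ℕ => (d:ℤ))) ∪
        (p.natAbs.divisors.image (fun d : ℕ => -(d:ℤ))) with hD
      have hmaps : ∀ i ∈ Finset.univ.filter (fun i => a i * b i = p), a i ∈ D := by
        intro i hi
        simp only [Finset.mem_filter, Finset.mem_univ, true_and] at hi
        have hdvd : a i ∣ p := ⟨b i, hi.symm⟩
        have hmem : (a i).natAbs ∈ p.natAbs.divisors :=
          Nat.mem_divisors.2 ⟨Int.natAbs_dvd_natAbs.2 hdvd, Int.natAbs_ne_zero.2 hp0⟩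
        rcases Int.natAbs_eq (a i) with h | h
        · exact Finset.mem_union_left _ (Finset.mem_image.2 ⟨(a i).natAbs, hmem, h.symm⟩)
        · exact Finset.mem_union_right _ (Finset.mem_image.2 ⟨(a i).natAbs, hmem, h.symm⟩)
      have hcard1 : (Finset.univ.filter (fun i => a i * b i = p)).card ≤ D.card :=
        Finset.card_le_card_of_injOn (fun i => a i) hmaps (fun i _ j _ h => ha h)
      have hcard2 : D.card ≤ 2 * p.natAbs.divisors.card := by
        calc D.card ≤ _ + _ := Finset.card_union_le _ _
        _ ≤ p.natAbs.divisors.card + p.natAbs.divisors.card :=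
            Nat.add_le_add (Finset.card_image_le) (Finset.card_image_le)
        _ = 2 * p.natAbs.divisors.card := by ring
      -- bound on |p|
      obtain ⟨i, _, hi⟩ := Finset.mem_image.1 hp
      have hpabs : ((p.natAbs : ℕ) : ℝ) ≤ (n:ℝ) ^ (2 * C) := by
        have : ((p.natAbs : ℕ) : ℝ) = ((|a i| : ℤ) : ℝ) * ((|b i| : ℤ) : ℝ) := by
          rw [← hi, Int.natAbs_mul]
          push_cast [Nat.cast_natAbs]
          ring
        rw [this]
        have h1 := haB i; have h2 := hbB i
        have ha0 : (0:ℝ) ≤ ((|a i| : ℤ) : ℝ) := by positivity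
        have hb0 : (0:ℝ) ≤ ((|b i| : ℤ) : ℝ) := by positivity
        calc ((|a i| : ℤ) : ℝ) * ((|b i| : ℤ) : ℝ) ≤ (n:ℝ)^C * (n:ℝ)^C := by
              apply mul_le_mul h1 h2 hb0 (by positivity)
        _ = (n:ℝ) ^ (2*C) := by rw [← Real.rpow_add hnpos]; ring_nf
      have hdiv : ((p.natAbs.divisors.card : ℕ) : ℝ) ≤ K * (n:ℝ) ^ (ε/3) := by
        have hpa0 : p.natAbs ≠ 0 := Int.natAbs_ne_zero.2 hp0
        calc ((p.natAbs.divisors.card : ℕ) : ℝ) ≤ K * (p.natAbs : ℝ) ^ (ε / (6*C)) :=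
              hKd p.natAbs hpa0
        _ ≤ K * ((n:ℝ) ^ (2*C)) ^ (ε / (6*C)) := by
              have := Real.rpow_le_rpow (by positivity : (0:ℝ) ≤ ((p.natAbs:ℕ):ℝ)) hpabs
                (by positivity : (0:ℝ) ≤ ε / (6*C))
              nlinarith [this]
        _ = K * (n:ℝ) ^ (ε/3) := by
              have hexp : (2*C)*(ε/(6*C)) = ε/3 := by field_simp; ring
              rw [← Real.rpow_mul hnpos.le, hexp]
      calc ((Finset.univ.filter (fun i => a i * b i = p)).card : ℝ)
          ≤ ((2 * p.natAbs.divisors.card : ℕ) : ℝ) := by exact_mod_cast hcard1.trans hcard2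
        _ = 2 * ((p.natAbs.divisors.card : ℕ) : ℝ) := by push_cast; ring
        _ ≤ T := by rw [hT]; nlinarith
  -- counting
  have hsum : (n:ℝ) ≤ (P.card : ℝ) * T := by
    have hcount : (Finset.univ : Finset (Fin n)).card =
        ∑ p ∈ P, (Finset.univ.filter (fun i => a i * b i = p)).card :=
      Finset.card_eq_sum_card_fiberwise (fun i _ => Finset.mem_image_of_mem _ (Finset.mem_univ i))
    have : (n:ℝ) = ∑ p ∈ P, ((Finset.univ.filter (fun i => a i * b i = p)).card : ℝ) := by
      rw [← Nat.cast_sum, ← hcount]; simp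
    rw [this]
    calc ∑ p ∈ P, ((Finset.univ.filter (fun i => a i * b i = p)).card : ℝ)
        ≤ ∑ _p ∈ P, T := Finset.sum_le_sum fib
      _ = (P.card : ℝ) * T := by rw [Finset.sum_const, nsmul_eq_mul]
  -- conclude
  have hfinal : (n:ℝ) ^ ((2:ℝ)/3 - ε) ≤ (P.card : ℝ) := by
    have hmul : (n:ℝ) ^ ((2:ℝ)/3 - ε) * T ≤ (P.card : ℝ) * T := by
      calc (n:ℝ) ^ ((2:ℝ)/3 - ε) * T = 2 * K * ((n:ℝ) ^ ((2:ℝ)/3 - ε) * (n:ℝ) ^ (ε/3)) := by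
            rw [hT]; ring
        _ = 2 * K * (n:ℝ) ^ ((2:ℝ)/3 - 2*ε/3) := by
            rw [← Real.rpow_add hnpos]; ring_nf
        _ ≤ (n:ℝ) ^ ((1:ℝ)/3 + 2*ε/3) * (n:ℝ) ^ ((2:ℝ)/3 - 2*ε/3) := by
            have h0 : (0:ℝ) ≤ (n:ℝ) ^ ((2:ℝ)/3 - 2*ε/3) := by positivity
            exact mul_le_mul_of_nonneg_right hKn h0
        _ = (n:ℝ) := by
            rw [← Real.rpow_add hnpos]
            norm_num
        _ ≤ (P.card : ℝ) * T := hsum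
    exact le_of_mul_le_mul_right hmul hTpos
  exact hfinal.trans (le_max_right _ _)
end

section
/- There exist three distinct integers a₁, a₂, a₃ such that the set {x ∈ ℚ : a₁ + x, a₂ + x and a₃ + x are each the square of a rational number} is infinite. In particular, for every K ≥ 1 there exist three distinct integers a₁, a₂, a₃ and K distinct integers x₁,…,x_K such that a_i + x_j ∈ Squares for all i ∈ {1,2,3} and all j ≤ K. -/
/- Doubling step on the elliptic curve `y² = x³ - 36x`. -/
private noncomputable def ecStep : ℚ × ℚ → ℚ × ℚ := fun p =>
  ((((3*p.1^2 - 36)/(2*p.2)))^2 - 2*p.1,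
   ((3*p.1^2 - 36)/(2*p.2)) * (p.1 - ((((3*p.1^2 - 36)/(2*p.2)))^2 - 2*p.1)) - p.2)

private noncomputable def ecP : ℕ → ℚ × ℚ := fun k => ecStep^[k] (25/4, 35/8)

private def ecInv (k : ℕ) (p : ℚ × ℚ) : Prop :=
  p.2^2 = p.1^3 - 36*p.1 ∧ p.2 ≠ 0 ∧ padicValRat 2 p.1 = -(2*(k+1) : ℤ) ∧
  (∃ q : ℚ, p.1 - 6 = q^2) ∧ (∃ q : ℚ, p.1 = q^2) ∧ (∃ q : ℚ, p.1 + 6 = q^2)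

private lemma v2_two : padicValRat 2 (2:ℚ) = 1 := by
  have := padicValRat.self (p := 2) (by norm_num)
  simpa using this

private lemma v2_four : padicValRat 2 (4:ℚ) = 2 := by
  rw [show (4:ℚ) = 2^2 by norm_num, padicValRat.pow (2:ℚ), v2_two]; ring

private lemma v2_nine : padicValRat 2 (9:ℚ) = 0 := by
  rw [show (9:ℚ) = ((9:ℤ):ℚ) by norm_num, padicValRat.of_int,
    padicValInt.eq_zero_of_not_dvd (by decide)]
  norm_num

private lemma v2_three : padicValRat 2 (3:ℚ) = 0 := by
  rw [show (3:ℚ) = ((3:ℤ):ℚ) by norm_num, padicValRat.of_int,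
    padicValInt.eq_zero_of_not_dvd (by decide)]
  norm_num

private lemma v2_thirtysix : padicValRat 2 (36:ℚ) = 2 := by
  rw [show (36:ℚ) = 4*9 by norm_num, padicValRat.mul (by norm_num) (by norm_num),
    v2_four, v2_nine]
  norm_num

private lemma v2_six : padicValRat 2 (6:ℚ) = 1 := by
  rw [show (6:ℚ) = 2*3 by norm_num, padicValRat.mul (by norm_num) (by norm_num),
    v2_two, v2_three]
  norm_num

private lemma ecInv_base : ecInv 0 (25/4, 35/8) := by
  refine ⟨by norm_num, by norm_num, ?_, ⟨1/2, by norm_num⟩, ⟨5/2, by norm_num⟩,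
    ⟨7/2, by norm_num⟩⟩
  show padicValRat 2 ((25:ℚ)/4) = _
  rw [padicValRat.div (by norm_num) (by norm_num), v2_four,
    show (25:ℚ) = ((25:ℤ):ℚ) by norm_num, padicValRat.of_int,
    padicValInt.eq_zero_of_not_dvd (by decide)]
  norm_num

private lemma ecInv_step (k : ℕ) (p : ℚ × ℚ) (h : ecInv k p) : ecInv (k+1) (ecStep p) := by
  obtain ⟨h2, hy, hv, -, -, -⟩ := h
  set x := p.1 with hxdef
  set y := p.2 with hydef
  -- basic nonvanishing facts
  have hx0 : x ≠ 0 := by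
    intro h0
    rw [h0, padicValRat.zero] at hv
    omega
  have hx36 : x^3 - 36*x ≠ 0 := by
    intro h0
    exact hy (by rwa [h0, pow_eq_zero_iff (by norm_num)] at h2)
  have hxsq36 : x^2 - 36 ≠ 0 := by
    intro h0
    apply hx36
    have : x * (x^2 - 36) = x^3 - 36*x := by ring
    rw [← this, h0, mul_zero]
  have hxsqp36 : x^2 + 36 ≠ 0 := by positivity
  have h2y : (2*y : ℚ) ≠ 0 := by simpa using hy
  -- the new coordinates
  set l : ℚ := (3*x^2 - 36)/(2*y) with hldef
  set x' : ℚ := l^2 - 2*x with hx'def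
  set y' : ℚ := l * (x - x') - y with hy'def
  have hstep : ecStep p = (x', y') := rfl
  -- algebraic identities
  have id1 : x' = ((x^2+36)/(2*y))^2 := by
    rw [hx'def, hldef]; field_simp; linear_combination (-(8*x)) * h2
  have id2 : x' - 6 = ((x^2-12*x-36)/(2*y))^2 := by
    rw [hx'def, hldef]; field_simp; linear_combination (-(8*(x+3))) * h2
  have id3 : x' + 6 = ((x^2+12*x-36)/(2*y))^2 := by
    rw [hx'def, hldef]; field_simp; linear_combination (-(8*(x-3))) * h2
  have id4 : y'^2 = x'^3 - 36*x' := by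
    rw [hy'def, hx'def, hldef]; field_simp; ring_nf
    linear_combination (64*y^6) * h2
  -- valuation bookkeeping
  have hvx : padicValRat 2 x = -(2*(k+1) : ℤ) := hv
  have hvx2 : padicValRat 2 (x^2) = -(2*(2*(k+1)) : ℤ) := by
    rw [padicValRat.pow x, hvx]; push_cast; ring
  have hvnum : padicValRat 2 (x^2 + 36) = -(2*(2*(k+1)) : ℤ) := by
    rw [padicValRat.add_eq_of_lt (p := 2) hxsqp36 (pow_ne_zero 2 hx0) (by norm_num)
      (by rw [hvx2, v2_thirtysix]; omega), hvx2]
  have hvden : padicValRat 2 (x^2 - 36) = -(2*(2*(k+1)) : ℤ) := by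
    have hneg : padicValRat 2 (-36 : ℚ) = 2 := by
      rw [show (-36:ℚ) = -(36:ℚ) by norm_num, padicValRat.neg, v2_thirtysix]
    have heq : x^2 - 36 = x^2 + (-36) := by ring
    rw [heq, padicValRat.add_eq_of_lt (p := 2) (by rw [← heq]; exact hxsq36)
      (pow_ne_zero 2 hx0) (by norm_num) (by rw [hvx2, hneg]; omega), hvx2]
  have hvy : 2 * padicValRat 2 y = 3 * (-(2*(k+1) : ℤ)) := by
    have e1 : padicValRat 2 (y^2) = 2 * padicValRat 2 y := by
      rw [padicValRat.pow y]; push_cast; ring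
    have e2 : padicValRat 2 (x * (x^2-36)) = 3 * (-(2*(k+1) : ℤ)) := by
      rw [padicValRat.mul hx0 hxsq36, hvx, hvden]; ring
    have e3 : y^2 = x * (x^2 - 36) := by rw [h2]; ring
    rw [← e1, e3, e2]
  have hvx' : padicValRat 2 x' = -(2*((k+1:ℕ)+1) : ℤ) := by
    rw [id1, padicValRat.pow ((x^2+36)/(2*y)),
      padicValRat.div hxsqp36 h2y, padicValRat.mul (by norm_num) hy, v2_two, hvnum]
    push_cast
    omega
  -- x' avoids 0, 6, -6
  have hx'0 : x' ≠ 0 := by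
    intro h0; rw [h0, padicValRat.zero] at hvx'; omega
  have hx'6 : x' - 6 ≠ 0 := by
    intro h0
    have : x' = 6 := by linarith
    rw [this, v2_six] at hvx'; omega
  have hx'm6 : x' + 6 ≠ 0 := by
    intro h0
    have : x' = -6 := by linarith
    rw [this, show (-6:ℚ) = -(6:ℚ) by norm_num, padicValRat.neg, v2_six] at hvx'; omega
  have hy' : y' ≠ 0 := by
    intro h0
    have h00 : x' * (x' - 6) * (x' + 6) = 0 := by
      have : (0:ℚ)^2 = x'^3 - 36*x' := by rw [← h0]; exact id4
      nlinarith [this]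
    rcases mul_eq_zero.mp h00 with h | h
    · rcases mul_eq_zero.mp h with h | h
      exacts [hx'0 h, hx'6 h]
    · exact hx'm6 h
  rw [hstep]
  exact ⟨id4, hy', hvx', ⟨_, id2⟩, ⟨_, id1⟩, ⟨_, id3⟩⟩

private lemma ecInv_all (k : ℕ) : ecInv k (ecP k) := by
  induction k with
  | zero => exact ecInv_base
  | succ n ih =>
      have : ecP (n+1) = ecStep (ecP n) := Function.iterate_succ_apply' ecStep n _
      rw [this]
      exact ecInv_step n _ ih

/-- The key sequence: injective `X : ℕ → ℚ` with `X k`, `X k + 24`, `X k + 48` all squares. -/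
private lemma key : ∃ X : ℕ → ℚ, Function.Injective X ∧ ∀ k,
    (∃ q : ℚ, X k = q^2) ∧ (∃ q : ℚ, X k + 24 = q^2) ∧ (∃ q : ℚ, X k + 48 = q^2) := by
  refine ⟨fun k => 4*((ecP k).1 - 6), ?_, ?_⟩
  · intro j k hjk
    have hj := (ecInv_all j).2.2.1
    have hk := (ecInv_all k).2.2.1
    have hx : (ecP j).1 = (ecP k).1 := by
      have : (4:ℚ) * ((ecP j).1 - 6) = 4*((ecP k).1 - 6) := hjk
      linarith
    rw [hx, hk] at hj
    omega
  · intro k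
    obtain ⟨-, -, -, ⟨r, hr⟩, ⟨q, hq⟩, ⟨s, hs⟩⟩ := ecInv_all k
    exact ⟨⟨2*r, by rw [mul_pow, ← hr]; ring⟩,
           ⟨2*q, by rw [mul_pow, ← hq]; ring⟩,
           ⟨2*s, by rw [mul_pow, ← hs]; ring⟩⟩

private lemma int_of_den_dvd (r : ℚ) (n : ℕ) (h : r.den ∣ n) : ∃ m : ℤ, ((n:ℚ)) * r = m := by
  obtain ⟨c, hc⟩ := h
  refine ⟨(c : ℤ) * r.num, ?_⟩
  have hden : ((r.den : ℚ)) * r = r.num := by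
    rw [mul_comm, Rat.mul_den_eq_num]
  push_cast [hc]
  rw [mul_comm (r.den : ℚ) (c:ℚ), mul_assoc, hden]

/-- There exist three distinct integers `a₁, a₂, a₃` such that the set
of rationals `x` for which `a₁ + x`, `a₂ + x`, `a₃ + x` are all squares of rationals is
infinite.  In particular, for every `K ≥ 1` there exist three distinct integers and `K`
distinct integers `x₁,…,x_K` all of whose translates land in the perfect squares. -/
theorem three_integers_with_infinitely_many_square_translates :
    (∃ a₁ a₂ a₃ : ℤ, a₁ ≠ a₂ ∧ a₁ ≠ a₃ ∧ a₂ ≠ a₃ ∧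
      {x : ℚ | (∃ q : ℚ, (a₁ : ℚ) + x = q ^ 2) ∧ (∃ q : ℚ, (a₂ : ℚ) + x = q ^ 2) ∧
        (∃ q : ℚ, (a₃ : ℚ) + x = q ^ 2)}.Infinite) ∧
    (∀ K : ℕ, 1 ≤ K → ∃ (a₁ a₂ a₃ : ℤ) (x : Fin K → ℤ),
      a₁ ≠ a₂ ∧ a₁ ≠ a₃ ∧ a₂ ≠ a₃ ∧ Function.Injective x ∧
      ∀ j, a₁ + x j ∈ Squares ∧ a₂ + x j ∈ Squares ∧ a₃ + x j ∈ Squares) := by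
  obtain ⟨X, hXinj, hX⟩ := key
  constructor
  · refine ⟨0, 24, 48, by norm_num, by norm_num, by norm_num, ?_⟩
    apply Set.infinite_of_injective_forall_mem (f := X) hXinj
    intro k
    obtain ⟨⟨q, hq⟩, ⟨r, hr⟩, ⟨s, hs⟩⟩ := hX k
    refine ⟨⟨q, by push_cast; linarith⟩, ⟨r, by push_cast; linarith⟩,
      ⟨s, by push_cast; linarith⟩⟩
  · intro K _
    choose Q hQ using fun k => (hX k).1
    choose R hR using fun k => (hX k).2.1
    choose S hS using fun k => (hX k).2.2
    set N : ℕ := ∏ j ∈ Finset.range K, ((Q j).den * (R j).den * (S j).den) with hNdef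
    have hNpos : 0 < N := by
      apply Finset.prod_pos
      intro i _
      positivity
    have hdvd : ∀ j : Fin K, (Q j.val).den ∣ N ∧ (R j.val).den ∣ N ∧ (S j.val).den ∣ N := by
      intro j
      have hmem : j.val ∈ Finset.range K := Finset.mem_range.mpr j.isLt
      exact ⟨dvd_trans ⟨(R j.val).den * (S j.val).den, by ring⟩
              (Finset.dvd_prod_of_mem _ hmem),
             dvd_trans ⟨(Q j.val).den * (S j.val).den, by ring⟩
              (Finset.dvd_prod_of_mem _ hmem),
             dvd_trans ⟨(Q j.val).den * (R j.val).den, by ring⟩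
              (Finset.dvd_prod_of_mem _ hmem)⟩
    choose mQ hmQ using fun j : Fin K => int_of_den_dvd (Q j.val) N (hdvd j).1
    choose mR hmR using fun j : Fin K => int_of_den_dvd (R j.val) N (hdvd j).2.1
    choose mS hmS using fun j : Fin K => int_of_den_dvd (S j.val) N (hdvd j).2.2
    have castQ : ∀ i : Fin K, ((mQ i)^2 : ℚ) = (N:ℚ)^2 * X i.val := by
      intro i
      rw [← hmQ i, hQ i.val]
      ring
    refine ⟨0, 24*(N:ℤ)^2, 48*(N:ℤ)^2, fun j : Fin K => (mQ j)^2, ?_, ?_, ?_, ?_, ?_⟩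
    · have : (0:ℤ) < 24*(N:ℤ)^2 := by positivity
      omega
    · have : (0:ℤ) < 48*(N:ℤ)^2 := by positivity
      omega
    · have : (0:ℤ) < 24*(N:ℤ)^2 := by positivity
      omega
    · -- injectivity
      intro j j' hjj'
      have hjj2 : (mQ j)^2 = (mQ j')^2 := hjj'
      have h1 : ((mQ j)^2 : ℚ) = ((mQ j')^2 : ℚ) := by exact_mod_cast hjj2
      rw [castQ j, castQ j'] at h1
      have hN0 : ((N:ℚ))^2 ≠ 0 := by positivity
      have hXX : X j.val = X j'.val := mul_left_cancel₀ hN0 h1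
      exact Fin.ext (hXinj hXX)
    · intro j
      refine ⟨⟨mQ j, by ring⟩, ⟨mR j, ?_⟩, ⟨mS j, ?_⟩⟩
      · show (24*(N:ℤ)^2 + (mQ j)^2 : ℤ) = _
        have : ((24*(N:ℤ)^2 + (mQ j)^2 : ℤ) : ℚ) = ((mR j : ℚ))^2 := by
          push_cast
          rw [← hmR j, ← hmQ j]
          linear_combination (N:ℚ)^2 * hR j.val - (N:ℚ)^2 * hQ j.val
        exact_mod_cast this
      · show (48*(N:ℤ)^2 + (mQ j)^2 : ℤ) = _
        have : ((48*(N:ℤ)^2 + (mQ j)^2 : ℤ) : ℚ) = ((mS j : ℚ))^2 := by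
          push_cast
          rw [← hmS j, ← hmQ j]
          linear_combination (N:ℚ)^2 * hS j.val - (N:ℚ)^2 * hQ j.val
        exact_mod_cast this
end
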